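/- arXiv:1307.0204 — 4 statements merged into one kernel-verified Lean document; each statement's English description precedes it below -/
import Mathlib

section
/- Both strong bisimilarity ∼ and weak bisimilarity ≈ of P/T calculus terms are congruences with respect to ';' and '⊗': for ⋈ ∈ {∼, ≈}, if P ⋈ Q then for any term R of appropriate sort, P;R ⋈ Q;R, R;P ⋈ R;Q, P⊗R ⋈ Q⊗R and R⊗P ⋈ R⊗Q. -/
/-- Syntax of the P/T calculus. -/
inductive TTerm : Type
  | place (n : ℕ)       -- ⟨n⟩ (buffer with n tokens)
  | iden                -- I
  | tw                  -- X
  | diag                -- Δ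
  | codiag              -- ∇
  | bot                 -- ⊥
  | top                 -- ⊤
  | lam                 -- Λ
  | vee                 -- V
  | down                -- ↓
  | up                  -- ↑
  | tens (P Q : TTerm)  -- ⊗
  | seq (P Q : TTerm)   -- ;
  deriving DecidableEq

namespace TTerm

/-- Sorting discipline of the P/T calculus. -/
inductive HasSort : TTerm → ℕ → ℕ → Prop
  | place (n : ℕ) : HasSort (.place n) 1 1
  | iden : HasSort .iden 1 1
  | tw : HasSort .tw 2 2
  | diag : HasSort .diag 1 2
  | codiag : HasSort .codiag 2 1
  | bot : HasSort .bot 1 0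
  | top : HasSort .top 0 1
  | lam : HasSort .lam 1 2
  | vee : HasSort .vee 2 1
  | down : HasSort .down 1 0
  | up : HasSort .up 0 1
  | tens {P Q : TTerm} {k l m n : ℕ} :
      HasSort P k l → HasSort Q m n → HasSort (.tens P Q) (k + m) (l + n)
  | seq {P Q : TTerm} {k n l : ℕ} :
      HasSort P k n → HasSort Q n l → HasSort (.seq P Q) k l

/-- Basic connectors are the constants of the calculus. -/
def IsBasic : TTerm → Prop
  | .tens _ _ => False
  | .seq _ _ => False
  | _ => True

/-- Strong operational semantics of the P/T calculus. -/
inductive Step : TTerm → List ℕ → List ℕ → TTerm → Prop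
  | place {n h k : ℕ} : k ≤ n → Step (.place n) [h] [k] (.place (n + h - k))
  | iden (k : ℕ) : Step .iden [k] [k] .iden
  | tw (h k : ℕ) : Step .tw [h, k] [k, h] .tw
  | bot (k : ℕ) : Step .bot [k] [] .bot
  | top (k : ℕ) : Step .top [] [k] .top
  | diag (k : ℕ) : Step .diag [k] [k, k] .diag
  | codiag (k : ℕ) : Step .codiag [k, k] [k] .codiag
  | lam (h k : ℕ) : Step .lam [h + k] [h, k] .lam
  | vee (h k : ℕ) : Step .vee [h, k] [h + k] .vee
  | refl {C : TTerm} {k l : ℕ} : IsBasic C → HasSort C k l →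
      Step C (List.replicate k 0) (List.replicate l 0) C
  | cut {P Q R S : TTerm} {α β γ : List ℕ} :
      Step P α γ Q → Step R γ β S → Step (.seq P R) α β (.seq Q S)
  | ten {P Q R S : TTerm} {α₁ α₂ β₁ β₂ : List ℕ} :
      Step P α₁ β₁ Q → Step R α₂ β₂ S →
      Step (.tens P R) (α₁ ++ α₂) (β₁ ++ β₂) (.tens Q S)

/-- Weak operational semantics of the P/T calculus: same rules plus (Weak). -/
inductive Weak : TTerm → List ℕ → List ℕ → TTerm → Prop
  | place {n h k : ℕ} : k ≤ n → Weak (.place n) [h] [k] (.place (n + h - k))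
  | iden (k : ℕ) : Weak .iden [k] [k] .iden
  | tw (h k : ℕ) : Weak .tw [h, k] [k, h] .tw
  | bot (k : ℕ) : Weak .bot [k] [] .bot
  | top (k : ℕ) : Weak .top [] [k] .top
  | diag (k : ℕ) : Weak .diag [k] [k, k] .diag
  | codiag (k : ℕ) : Weak .codiag [k, k] [k] .codiag
  | lam (h k : ℕ) : Weak .lam [h + k] [h, k] .lam
  | vee (h k : ℕ) : Weak .vee [h, k] [h + k] .vee
  | refl {C : TTerm} {k l : ℕ} : IsBasic C → HasSort C k l →
      Weak C (List.replicate k 0) (List.replicate l 0) C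
  | cut {P Q R S : TTerm} {α β γ : List ℕ} :
      Weak P α γ Q → Weak R γ β S → Weak (.seq P R) α β (.seq Q S)
  | ten {P Q R S : TTerm} {α₁ α₂ β₁ β₂ : List ℕ} :
      Weak P α₁ β₁ Q → Weak R α₂ β₂ S →
      Weak (.tens P R) (α₁ ++ α₂) (β₁ ++ β₂) (.tens Q S)
  | weak {P R Q : TTerm} {α₁ α₂ β₁ β₂ : List ℕ} :
      Weak P α₁ β₁ R → Weak R α₂ β₂ Q →
      Weak P (List.zipWith (· + ·) α₁ α₂) (List.zipWith (· + ·) β₁ β₂) Q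

end TTerm
/-- A bisimulation for a two-labelled transition system. -/
def IsBisimulation {S : Type*} {L : Type*} (tr : S → L → S → Prop)
    (R : S → S → Prop) : Prop :=
  ∀ p q, R p q →
    (∀ a p', tr p a p' → ∃ q', tr q a q' ∧ R p' q') ∧
    (∀ a q', tr q a q' → ∃ p', tr p a p' ∧ R p' q')

/-- Bisimilarity: two states are bisimilar when some bisimulation relates them. -/
def Bisimilar {S : Type*} {L : Type*} (tr : S → L → S → Prop) (p q : S) : Prop :=
  ∃ R, IsBisimulation tr R ∧ R p q
/-- Strong transition relation of the P/T calculus, packaged with paired labels. -/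
def ptcStrongTr : TTerm → List ℕ × List ℕ → TTerm → Prop :=
  fun P a Q => TTerm.Step P a.1 a.2 Q

/-- Weak transition relation of the P/T calculus, packaged with paired labels. -/
def ptcWeakTr : TTerm → List ℕ × List ℕ → TTerm → Prop :=
  fun P a Q => TTerm.Weak P a.1 a.2 Q

/-- Strong bisimilarity `∼` of P/T calculus terms. -/
def TSBisim (P Q : TTerm) : Prop := Bisimilar ptcStrongTr P Q

/-- Weak bisimilarity `≈` of P/T calculus terms. -/
def TWBisim (P Q : TTerm) : Prop := Bisimilar ptcWeakTr P Q

namespace TTerm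

lemma sort_unique : ∀ {P : TTerm} {k l k' l' : ℕ}, HasSort P k l → HasSort P k' l' →
    k = k' ∧ l = l' := by
  intro P k l k' l' h
  induction h generalizing k' l' with
  | tens h1 h2 ih1 ih2 =>
    intro h'
    cases h' with
    | tens g1 g2 =>
      obtain ⟨a, b⟩ := ih1 g1
      obtain ⟨c, d⟩ := ih2 g2
      omega
  | seq h1 h2 ih1 ih2 =>
    intro h'
    cases h' with
    | seq g1 g2 =>
      obtain ⟨a, b⟩ := ih1 g1
      subst a; subst b
      obtain ⟨c, d⟩ := ih2 g2
      exact ⟨rfl, d⟩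
  | _ => intro h'; cases h'; exact ⟨rfl, rfl⟩

lemma weak_sort : ∀ {P : TTerm} {α β : List ℕ} {Q : TTerm}, Weak P α β Q →
    ∀ {k l : ℕ}, HasSort P k l → HasSort Q k l ∧ α.length = k ∧ β.length = l := by
  intro P α β Q h
  induction h with
  | place _ => intro k l hs; cases hs; exact ⟨HasSort.place _, rfl, rfl⟩
  | iden _ => intro k l hs; cases hs; exact ⟨HasSort.iden, rfl, rfl⟩
  | tw _ _ => intro k l hs; cases hs; exact ⟨HasSort.tw, rfl, rfl⟩
  | bot _ => intro k l hs; cases hs; exact ⟨HasSort.bot, rfl, rfl⟩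
  | top _ => intro k l hs; cases hs; exact ⟨HasSort.top, rfl, rfl⟩
  | diag _ => intro k l hs; cases hs; exact ⟨HasSort.diag, rfl, rfl⟩
  | codiag _ => intro k l hs; cases hs; exact ⟨HasSort.codiag, rfl, rfl⟩
  | lam _ _ => intro k l hs; cases hs; exact ⟨HasSort.lam, rfl, rfl⟩
  | vee _ _ => intro k l hs; cases hs; exact ⟨HasSort.vee, rfl, rfl⟩
  | refl hb hs => intro k l hs'
                  obtain ⟨hk, hl⟩ := sort_unique hs hs'
                  subst hk; subst hl
                  exact ⟨hs', List.length_replicate, List.length_replicate⟩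
  | cut h1 h2 ih1 ih2 =>
    intro k l hs
    cases hs with
    | seq g1 g2 =>
      obtain ⟨q1, e1, e2⟩ := ih1 g1
      obtain ⟨q2, e3, e4⟩ := ih2 g2
      exact ⟨HasSort.seq q1 q2, e1, e4⟩
  | ten h1 h2 ih1 ih2 =>
    intro k l hs
    cases hs with
    | tens g1 g2 =>
      obtain ⟨q1, e1, e2⟩ := ih1 g1
      obtain ⟨q2, e3, e4⟩ := ih2 g2
      exact ⟨HasSort.tens q1 q2, by simp [e1, e3], by simp [e2, e4]⟩
  | weak h1 h2 ih1 ih2 =>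
    intro k l hs
    obtain ⟨q1, e1, e2⟩ := ih1 hs
    obtain ⟨q2, e3, e4⟩ := ih2 q1
    refine ⟨q2, ?_, ?_⟩ <;> simp [List.length_zipWith] <;> omega

lemma step_seq_inv {A B : TTerm} {α β : List ℕ} {U : TTerm}
    (h : Step (.seq A B) α β U) :
    ∃ A' B' γ, U = .seq A' B' ∧ Step A α γ A' ∧ Step B γ β B' := by
  cases h with
  | refl hb _ => exact hb.elim
  | cut h1 h2 => exact ⟨_, _, _, rfl, h1, h2⟩

lemma step_tens_inv {A B : TTerm} {α β : List ℕ} {U : TTerm}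
    (h : Step (.tens A B) α β U) :
    ∃ A' B' α₁ α₂ β₁ β₂, U = .tens A' B' ∧ α = α₁ ++ α₂ ∧ β = β₁ ++ β₂ ∧
      Step A α₁ β₁ A' ∧ Step B α₂ β₂ B' := by
  cases h with
  | refl hb _ => exact hb.elim
  | ten h1 h2 => exact ⟨_, _, _, _, _, _, rfl, rfl, rfl, h1, h2⟩

lemma weak_seq_inv : ∀ {T : TTerm} {α β : List ℕ} {U : TTerm}, Weak T α β U →
    ∀ {A B : TTerm}, T = .seq A B →
    ∃ A' B' γ, U = .seq A' B' ∧ Weak A α γ A' ∧ Weak B γ β B' := by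
  intro T α β U h
  induction h with
  | cut h1 h2 _ _ => intro A B e; cases e; exact ⟨_, _, _, rfl, h1, h2⟩
  | refl hb _ => intro A B e; subst e; exact hb.elim
  | weak h1 h2 ih1 ih2 =>
    intro A B e; subst e
    obtain ⟨A1, B1, γ1, rfl, w1, w2⟩ := ih1 rfl
    obtain ⟨A2, B2, γ2, rfl, w3, w4⟩ := ih2 rfl
    exact ⟨A2, B2, _, rfl, Weak.weak w1 w3, Weak.weak w2 w4⟩
  | _ => intro A B e; cases e

lemma weak_tens_inv : ∀ {T : TTerm} {α β : List ℕ} {U : TTerm}, Weak T α β U →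
    ∀ {A B : TTerm} {k l m n : ℕ}, T = .tens A B →
    HasSort A k l → HasSort B m n →
    ∃ A' B' α₁ α₂ β₁ β₂, U = .tens A' B' ∧ α = α₁ ++ α₂ ∧ β = β₁ ++ β₂ ∧
      Weak A α₁ β₁ A' ∧ Weak B α₂ β₂ B' := by
  intro T α β U h
  induction h with
  | ten h1 h2 _ _ =>
    intro A B k l m n e _ _; cases e
    exact ⟨_, _, _, _, _, _, rfl, rfl, rfl, h1, h2⟩
  | refl hb _ => intro A B k l m n e _ _; subst e; exact hb.elim
  | weak h1 h2 ih1 ih2 =>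
    intro A B k l m n e hA hB; subst e
    obtain ⟨A1, B1, a1, a2, b1, b2, rfl, rfl, rfl, w1, w2⟩ := ih1 rfl hA hB
    obtain ⟨hA1, ha1, hb1⟩ := weak_sort w1 hA
    obtain ⟨hB1, ha2, hb2⟩ := weak_sort w2 hB
    obtain ⟨A2, B2, c1, c2, d1, d2, rfl, rfl, rfl, w3, w4⟩ := ih2 rfl hA1 hB1
    obtain ⟨_, hc1, hd1⟩ := weak_sort w3 hA1
    obtain ⟨_, hc2, hd2⟩ := weak_sort w4 hB1
    refine ⟨A2, B2, _, _, _, _, rfl, ?_, ?_, Weak.weak w1 w3, Weak.weak w2 w4⟩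
    · exact List.zipWith_append (by omega)
    · exact List.zipWith_append (by omega)
  | _ => intro A B k l m n e _ _; cases e

end TTerm

section Congr

open TTerm

lemma sbisim_seq_left {P Q : TTerm} (h : TSBisim P Q) (R : TTerm) :
    TSBisim (.seq P R) (.seq Q R) := by
  obtain ⟨R₀, hbis, hpq⟩ := h
  refine ⟨fun u v => ∃ A C B, R₀ A C ∧ u = .seq A B ∧ v = .seq C B, ?_, P, Q, R, hpq, rfl, rfl⟩
  rintro u v ⟨A, C, B, hAC, rfl, rfl⟩
  constructor
  · rintro a p' hstep
    obtain ⟨A', B', γ, rfl, s1, s2⟩ := step_seq_inv hstep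
    obtain ⟨C', sc, hr⟩ := (hbis A C hAC).1 (a.1, γ) A' s1
    exact ⟨.seq C' B', Step.cut sc s2, A', C', B', hr, rfl, rfl⟩
  · rintro a q' hstep
    obtain ⟨C', B', γ, rfl, s1, s2⟩ := step_seq_inv hstep
    obtain ⟨A', sa, hr⟩ := (hbis A C hAC).2 (a.1, γ) C' s1
    exact ⟨.seq A' B', Step.cut sa s2, A', C', B', hr, rfl, rfl⟩

lemma sbisim_seq_right {P Q : TTerm} (h : TSBisim P Q) (R : TTerm) :
    TSBisim (.seq R P) (.seq R Q) := by
  obtain ⟨R₀, hbis, hpq⟩ := h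
  refine ⟨fun u v => ∃ A C B, R₀ A C ∧ u = .seq B A ∧ v = .seq B C, ?_, P, Q, R, hpq, rfl, rfl⟩
  rintro u v ⟨A, C, B, hAC, rfl, rfl⟩
  constructor
  · rintro a p' hstep
    obtain ⟨B', A', γ, rfl, s1, s2⟩ := step_seq_inv hstep
    obtain ⟨C', sc, hr⟩ := (hbis A C hAC).1 (γ, a.2) A' s2
    exact ⟨.seq B' C', Step.cut s1 sc, A', C', B', hr, rfl, rfl⟩
  · rintro a q' hstep
    obtain ⟨B', C', γ, rfl, s1, s2⟩ := step_seq_inv hstep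
    obtain ⟨A', sa, hr⟩ := (hbis A C hAC).2 (γ, a.2) C' s2
    exact ⟨.seq B' A', Step.cut s1 sa, A', C', B', hr, rfl, rfl⟩

lemma sbisim_tens_left {P Q : TTerm} (h : TSBisim P Q) (R : TTerm) :
    TSBisim (.tens P R) (.tens Q R) := by
  obtain ⟨R₀, hbis, hpq⟩ := h
  refine ⟨fun u v => ∃ A C B, R₀ A C ∧ u = .tens A B ∧ v = .tens C B, ?_, P, Q, R, hpq, rfl, rfl⟩
  rintro u v ⟨A, C, B, hAC, rfl, rfl⟩
  constructor
  · rintro a p' hstep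
    obtain ⟨A', B', α₁, α₂, β₁, β₂, rfl, e1, e2, s1, s2⟩ := step_tens_inv hstep
    obtain ⟨C', sc, hr⟩ := (hbis A C hAC).1 (α₁, β₁) A' s1
    refine ⟨.tens C' B', ?_, A', C', B', hr, rfl, rfl⟩
    show Step _ a.1 a.2 _
    rw [e1, e2]; exact Step.ten sc s2
  · rintro a q' hstep
    obtain ⟨C', B', α₁, α₂, β₁, β₂, rfl, e1, e2, s1, s2⟩ := step_tens_inv hstep
    obtain ⟨A', sa, hr⟩ := (hbis A C hAC).2 (α₁, β₁) C' s1
    refine ⟨.tens A' B', ?_, A', C', B', hr, rfl, rfl⟩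
    show Step _ a.1 a.2 _
    rw [e1, e2]; exact Step.ten sa s2

lemma sbisim_tens_right {P Q : TTerm} (h : TSBisim P Q) (R : TTerm) :
    TSBisim (.tens R P) (.tens R Q) := by
  obtain ⟨R₀, hbis, hpq⟩ := h
  refine ⟨fun u v => ∃ A C B, R₀ A C ∧ u = .tens B A ∧ v = .tens B C, ?_, P, Q, R, hpq, rfl, rfl⟩
  rintro u v ⟨A, C, B, hAC, rfl, rfl⟩
  constructor
  · rintro a p' hstep
    obtain ⟨B', A', α₁, α₂, β₁, β₂, rfl, e1, e2, s1, s2⟩ := step_tens_inv hstep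
    obtain ⟨C', sc, hr⟩ := (hbis A C hAC).1 (α₂, β₂) A' s2
    refine ⟨.tens B' C', ?_, A', C', B', hr, rfl, rfl⟩
    show Step _ a.1 a.2 _
    rw [e1, e2]; exact Step.ten s1 sc
  · rintro a q' hstep
    obtain ⟨B', C', α₁, α₂, β₁, β₂, rfl, e1, e2, s1, s2⟩ := step_tens_inv hstep
    obtain ⟨A', sa, hr⟩ := (hbis A C hAC).2 (α₂, β₂) C' s2
    refine ⟨.tens B' A', ?_, A', C', B', hr, rfl, rfl⟩
    show Step _ a.1 a.2 _
    rw [e1, e2]; exact Step.ten s1 sa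

lemma wbisim_seq_left {P Q : TTerm} (h : TWBisim P Q) (R : TTerm) :
    TWBisim (.seq P R) (.seq Q R) := by
  obtain ⟨R₀, hbis, hpq⟩ := h
  refine ⟨fun u v => ∃ A C B, R₀ A C ∧ u = .seq A B ∧ v = .seq C B, ?_, P, Q, R, hpq, rfl, rfl⟩
  rintro u v ⟨A, C, B, hAC, rfl, rfl⟩
  constructor
  · rintro a p' hstep
    obtain ⟨A', B', γ, rfl, s1, s2⟩ := weak_seq_inv hstep rfl
    obtain ⟨C', sc, hr⟩ := (hbis A C hAC).1 (a.1, γ) A' s1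
    exact ⟨.seq C' B', Weak.cut sc s2, A', C', B', hr, rfl, rfl⟩
  · rintro a q' hstep
    obtain ⟨C', B', γ, rfl, s1, s2⟩ := weak_seq_inv hstep rfl
    obtain ⟨A', sa, hr⟩ := (hbis A C hAC).2 (a.1, γ) C' s1
    exact ⟨.seq A' B', Weak.cut sa s2, A', C', B', hr, rfl, rfl⟩

lemma wbisim_seq_right {P Q : TTerm} (h : TWBisim P Q) (R : TTerm) :
    TWBisim (.seq R P) (.seq R Q) := by
  obtain ⟨R₀, hbis, hpq⟩ := h
  refine ⟨fun u v => ∃ A C B, R₀ A C ∧ u = .seq B A ∧ v = .seq B C, ?_, P, Q, R, hpq, rfl, rfl⟩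
  rintro u v ⟨A, C, B, hAC, rfl, rfl⟩
  constructor
  · rintro a p' hstep
    obtain ⟨B', A', γ, rfl, s1, s2⟩ := weak_seq_inv hstep rfl
    obtain ⟨C', sc, hr⟩ := (hbis A C hAC).1 (γ, a.2) A' s2
    exact ⟨.seq B' C', Weak.cut s1 sc, A', C', B', hr, rfl, rfl⟩
  · rintro a q' hstep
    obtain ⟨B', C', γ, rfl, s1, s2⟩ := weak_seq_inv hstep rfl
    obtain ⟨A', sa, hr⟩ := (hbis A C hAC).2 (γ, a.2) C' s2
    exact ⟨.seq B' A', Weak.cut s1 sa, A', C', B', hr, rfl, rfl⟩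

lemma wbisim_tens_left {P Q : TTerm} {k l : ℕ}
    (hP : HasSort P k l) (hQ : HasSort Q k l) {R : TTerm} {m n : ℕ}
    (hR : HasSort R m n) (h : TWBisim P Q) :
    TWBisim (.tens P R) (.tens Q R) := by
  obtain ⟨R₀, hbis, hpq⟩ := h
  refine ⟨fun u v => ∃ A C B, R₀ A C ∧ HasSort A k l ∧ HasSort C k l ∧ HasSort B m n ∧
      u = .tens A B ∧ v = .tens C B, ?_, P, Q, R, hpq, hP, hQ, hR, rfl, rfl⟩
  rintro u v ⟨A, C, B, hAC, hA, hC, hB, rfl, rfl⟩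
  constructor
  · rintro a p' hstep
    obtain ⟨A', B', α₁, α₂, β₁, β₂, rfl, e1, e2, s1, s2⟩ := weak_tens_inv hstep rfl hA hB
    obtain ⟨C', sc, hr⟩ := (hbis A C hAC).1 (α₁, β₁) A' s1
    refine ⟨.tens C' B', ?_, A', C', B', hr, (weak_sort s1 hA).1, (weak_sort sc hC).1,
      (weak_sort s2 hB).1, rfl, rfl⟩
    show Weak _ a.1 a.2 _
    rw [e1, e2]; exact Weak.ten sc s2
  · rintro a q' hstep
    obtain ⟨C', B', α₁, α₂, β₁, β₂, rfl, e1, e2, s1, s2⟩ := weak_tens_inv hstep rfl hC hB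
    obtain ⟨A', sa, hr⟩ := (hbis A C hAC).2 (α₁, β₁) C' s1
    refine ⟨.tens A' B', ?_, A', C', B', hr, (weak_sort sa hA).1, (weak_sort s1 hC).1,
      (weak_sort s2 hB).1, rfl, rfl⟩
    show Weak _ a.1 a.2 _
    rw [e1, e2]; exact Weak.ten sa s2

lemma wbisim_tens_right {P Q : TTerm} {k l : ℕ}
    (hP : HasSort P k l) (hQ : HasSort Q k l) {R : TTerm} {m n : ℕ}
    (hR : HasSort R m n) (h : TWBisim P Q) :
    TWBisim (.tens R P) (.tens R Q) := by
  obtain ⟨R₀, hbis, hpq⟩ := h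
  refine ⟨fun u v => ∃ A C B, R₀ A C ∧ HasSort A k l ∧ HasSort C k l ∧ HasSort B m n ∧
      u = .tens B A ∧ v = .tens B C, ?_, P, Q, R, hpq, hP, hQ, hR, rfl, rfl⟩
  rintro u v ⟨A, C, B, hAC, hA, hC, hB, rfl, rfl⟩
  constructor
  · rintro a p' hstep
    obtain ⟨B', A', α₁, α₂, β₁, β₂, rfl, e1, e2, s1, s2⟩ := weak_tens_inv hstep rfl hB hA
    obtain ⟨C', sc, hr⟩ := (hbis A C hAC).1 (α₂, β₂) A' s2
    refine ⟨.tens B' C', ?_, A', C', B', hr, (weak_sort s2 hA).1, (weak_sort sc hC).1,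
      (weak_sort s1 hB).1, rfl, rfl⟩
    show Weak _ a.1 a.2 _
    rw [e1, e2]; exact Weak.ten s1 sc
  · rintro a q' hstep
    obtain ⟨B', C', α₁, α₂, β₁, β₂, rfl, e1, e2, s1, s2⟩ := weak_tens_inv hstep rfl hB hC
    obtain ⟨A', sa, hr⟩ := (hbis A C hAC).2 (α₂, β₂) C' s2
    refine ⟨.tens B' A', ?_, A', C', B', hr, (weak_sort sa hA).1, (weak_sort s2 hC).1,
      (weak_sort s1 hB).1, rfl, rfl⟩
    show Weak _ a.1 a.2 _
    rw [e1, e2]; exact Weak.ten s1 sa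

end Congr

/-- Proposition `petricongruence-pt`: both strong and weak
bisimilarity of P/T calculus terms are congruences w.r.t. `;` and `⊗`. -/
theorem stmt14 (P Q : TTerm) (k l : ℕ)
    (hP : TTerm.HasSort P k l) (hQ : TTerm.HasSort Q k l) :
    (TSBisim P Q →
       (∀ (R : TTerm) (m : ℕ), TTerm.HasSort R l m →
          TSBisim (.seq P R) (.seq Q R)) ∧
       (∀ (R : TTerm) (m : ℕ), TTerm.HasSort R m k →
          TSBisim (.seq R P) (.seq R Q)) ∧
       (∀ (R : TTerm) (m n : ℕ), TTerm.HasSort R m n →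
          TSBisim (.tens P R) (.tens Q R) ∧ TSBisim (.tens R P) (.tens R Q))) ∧
    (TWBisim P Q →
       (∀ (R : TTerm) (m : ℕ), TTerm.HasSort R l m →
          TWBisim (.seq P R) (.seq Q R)) ∧
       (∀ (R : TTerm) (m : ℕ), TTerm.HasSort R m k →
          TWBisim (.seq R P) (.seq R Q)) ∧
       (∀ (R : TTerm) (m n : ℕ), TTerm.HasSort R m n →
          TWBisim (.tens P R) (.tens Q R) ∧ TWBisim (.tens R P) (.tens R Q))) := by
  constructor
  · intro h
    refine ⟨fun R m _ => sbisim_seq_left h R, fun R m _ => sbisim_seq_right h R,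
      fun R m n _ => ⟨sbisim_tens_left h R, sbisim_tens_right h R⟩⟩
  · intro h
    refine ⟨fun R m _ => wbisim_seq_left h R, fun R m _ => wbisim_seq_right h R,
      fun R m n hR => ⟨wbisim_tens_left hP hQ hR h, wbisim_tens_right hP hQ hR h⟩⟩
end

section
/- Let T be a P/T calculus term and ⟦−⟧ the compositional translation into P/T nets with boundaries. Then: (i) if T −α/β→ T' in the strong semantics of the P/T calculus, then ⟦T⟧ −α/β→ ⟦T'⟧ under the strong labelled semantics of P/T nets with boundaries; (ii) if ⟦T⟧ −α/β→ N_X for some marked P/T net N_X, then there exists a P/T calculus term T' such that T −α/β→ T' and ⟦T'⟧ = N_X. -/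
/-- A P/T net with boundaries `m → n` (well-formedness in `PTNet.Valid`). -/
structure PTNet (m n : ℕ) : Type 1 where
  P : Type
  T : Type
  pre : T → Multiset P
  post : T → Multiset P
  src : T → Multiset (Fin m)
  tgt : T → Multiset (Fin n)

namespace PTNet

variable {k l m n : ℕ}

/-- Linear extension of `pre` to multisets of transitions. -/
def preM (N : PTNet m n) (U : Multiset N.T) : Multiset N.P := (U.map N.pre).sum
def postM (N : PTNet m n) (U : Multiset N.T) : Multiset N.P := (U.map N.post).sum
def srcM (N : PTNet m n) (U : Multiset N.T) : Multiset (Fin m) := (U.map N.src).sum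
def tgtM (N : PTNet m n) (U : Multiset N.T) : Multiset (Fin n) := (U.map N.tgt).sum

/-- Well-formedness: finiteness and distinct footprints. -/
def Valid (N : PTNet m n) : Prop :=
  Finite N.P ∧ Finite N.T ∧
  ∀ t u : N.T, N.pre t = N.pre u → N.post t = N.post u →
    N.src t = N.src u → N.tgt t = N.tgt u → t = u

/-- Strong firing of P/T nets: `N_X →_U N_Y`. -/
def SFire (N : PTNet m n) (X : Multiset N.P) (U : Multiset N.T)
    (Y : Multiset N.P) : Prop :=
  letI := Classical.decEq N.P
  N.preM U ≤ X ∧ N.postM U ≤ Y ∧ X - N.preM U = Y - N.postM U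

/-- Weak (banking) firing of P/T nets: `N_X ⇒_U N_Y`. -/
def WFire (N : PTNet m n) (X : Multiset N.P) (U : Multiset N.T)
    (Y : Multiset N.P) : Prop :=
  Y + N.preM U = X + N.postM U

/-- Characteristic function `χ : Multiset (Fin k) → ℕ^k`. -/
def chiM {k : ℕ} (M : Multiset (Fin k)) : Fin k → ℕ := fun i => M.count i

/-- Strong labelled semantics of P/T nets with boundaries. -/
def SLts (N : PTNet m n) (X : Multiset N.P) (α : Fin m → ℕ) (β : Fin n → ℕ)
    (Y : Multiset N.P) : Prop :=
  ∃ U : Multiset N.T, N.SFire X U Y ∧ α = chiM (N.srcM U) ∧ β = chiM (N.tgtM U)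

/-- Weak labelled semantics of P/T nets with boundaries. -/
def WLts (N : PTNet m n) (X : Multiset N.P) (α : Fin m → ℕ) (β : Fin n → ℕ)
    (Y : Multiset N.P) : Prop :=
  ∃ U : Multiset N.T, N.WFire X U Y ∧ α = chiM (N.srcM U) ∧ β = chiM (N.tgtM U)

/-- Synchronisation between P/T nets with a common boundary. -/
def Synch (M : PTNet l m) (N : PTNet m n) (U : Multiset M.T)
    (V : Multiset N.T) : Prop :=
  ¬(U = 0 ∧ V = 0) ∧ M.tgtM U = N.srcM V

/-- Minimal synchronisation. -/
def MinSynch (M : PTNet l m) (N : PTNet m n) (U : Multiset M.T)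
    (V : Multiset N.T) : Prop :=
  Synch M N U V ∧
    ∀ U' V', Synch M N U' V' → U' ≤ U → V' ≤ V → U' = U ∧ V' = V

end PTNet
namespace PTNet

variable {k l m n : ℕ}

/-- Footprints of transitions of the composite P/T net. -/
def FootprintPT (M : PTNet l m) (N : PTNet m n) : Type :=
  Multiset (M.P ⊕ N.P) × Multiset (M.P ⊕ N.P) × Multiset (Fin l) × Multiset (Fin n)

def footOf (M : PTNet l m) (N : PTNet m n) (U : Multiset M.T) (V : Multiset N.T) :
    FootprintPT M N :=
  ((M.preM U).map Sum.inl + (N.preM V).map Sum.inr,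
   (M.postM U).map Sum.inl + (N.postM V).map Sum.inr,
   M.srcM U, N.tgtM V)

/-- Combined marking on a disjoint union of places. -/
def mmk {A B : Type} (X : Multiset A) (Y : Multiset B) : Multiset (A ⊕ B) :=
  X.map Sum.inl + Y.map Sum.inr

/-- Composition of P/T nets with boundaries along a common boundary. -/
def comp (M : PTNet l m) (N : PTNet m n) : PTNet l n where
  P := M.P ⊕ N.P
  T := {fp : FootprintPT M N // ∃ U V, MinSynch M N U V ∧ footOf M N U V = fp}
  pre t := t.1.1
  post t := t.1.2.1
  src t := t.1.2.2.1
  tgt t := t.1.2.2.2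

end PTNet
namespace PTNet

variable {k l m n : ℕ}

/-- Tensor product of P/T nets with boundaries. -/
def tensor (M : PTNet k l) (N : PTNet m n) : PTNet (k + m) (l + n) where
  P := M.P ⊕ N.P
  T := M.T ⊕ N.T
  pre := Sum.elim (fun t => (M.pre t).map Sum.inl) (fun t => (N.pre t).map Sum.inr)
  post := Sum.elim (fun t => (M.post t).map Sum.inl) (fun t => (N.post t).map Sum.inr)
  src := Sum.elim (fun t => (M.src t).map (Fin.castAdd m))
    (fun t => (N.src t).map (Fin.natAdd k))
  tgt := Sum.elim (fun t => (M.tgt t).map (Fin.castAdd n))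
    (fun t => (N.tgt t).map (Fin.natAdd l))

end PTNet
/-- Characteristic word `χ(M) ∈ ℕ^k` of a multiset over `Fin k`. -/
def chiMul {k : ℕ} (M : Multiset (Fin k)) : List ℕ :=
  (List.finRange k).map fun i => M.count i

namespace PTNet

/-- Strong labelled semantics of P/T nets with boundaries, with labels
presented as words over ℕ (via `chiMul`). -/
def SLtsL {m n : ℕ} (N : PTNet m n) (X : Multiset N.P) (a b : List ℕ)
    (Y : Multiset N.P) : Prop :=
  ∃ U : Multiset N.T, N.SFire X U Y ∧ a = chiMul (N.srcM U) ∧ b = chiMul (N.tgtM U)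

end PTNet
namespace PTTrans

/-- The net of a buffer `⟨n⟩` (the marking varies with `n`): one place, a
producing transition `t_in = true` and a consuming transition `t_out = false`. -/
def bufNet : PTNet 1 1 where
  P := Unit
  T := Bool
  pre t := match t with | true => 0 | false => {()}
  post t := match t with | true => {()} | false => 0
  src t := match t with | true => {0} | false => 0
  tgt t := match t with | true => 0 | false => {0}

/-- The net of `I`. -/
def idNet : PTNet 1 1 where
  P := Empty
  T := Unit
  pre _ := 0
  post _ := 0
  src _ := {0}
  tgt _ := {0}

/-- The net of `X`. -/
def twNet : PTNet 2 2 where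
  P := Empty
  T := Bool
  pre _ := 0
  post _ := 0
  src t := match t with | true => {0} | false => {1}
  tgt t := match t with | true => {1} | false => {0}

/-- The net of `Δ`. -/
def diagNet : PTNet 1 2 where
  P := Empty
  T := Unit
  pre _ := 0
  post _ := 0
  src _ := {0}
  tgt _ := {0, 1}

/-- The net of `∇`. -/
def codiagNet : PTNet 2 1 where
  P := Empty
  T := Unit
  pre _ := 0
  post _ := 0
  src _ := {0, 1}
  tgt _ := {0}

/-- The net of `⊥`. -/
def botNet : PTNet 1 0 where
  P := Empty
  T := Unit
  pre _ := 0
  post _ := 0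
  src _ := {0}
  tgt _ := 0

/-- The net of `⊤`. -/
def topNet : PTNet 0 1 where
  P := Empty
  T := Unit
  pre _ := 0
  post _ := 0
  src _ := 0
  tgt _ := {0}

/-- The net of `Λ`. -/
def lamNet : PTNet 1 2 where
  P := Empty
  T := Bool
  pre _ := 0
  post _ := 0
  src _ := {0}
  tgt t := match t with | true => {0} | false => {1}

/-- The net of `V`. -/
def veeNet : PTNet 2 1 where
  P := Empty
  T := Bool
  pre _ := 0
  post _ := 0
  src t := match t with | true => {0} | false => {1}
  tgt _ := {0}

/-- The net of `↓`. -/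
def downNet : PTNet 1 0 where
  P := Empty
  T := Empty
  pre _ := 0
  post _ := 0
  src _ := 0
  tgt _ := 0

/-- The net of `↑`. -/
def upNet : PTNet 0 1 where
  P := Empty
  T := Empty
  pre _ := 0
  post _ := 0
  src _ := 0
  tgt _ := 0

/-- The compositional translation `⟦−⟧` from P/T calculus terms to marked
P/T nets with boundaries: `Sem T k l N X` means `⟦T⟧ = N_X : k → l`. -/
inductive Sem : ∀ (T : TTerm) (k l : ℕ) (N : PTNet k l), Multiset N.P → Prop
  | place (n : ℕ) : Sem (.place n) 1 1 bufNet (Multiset.replicate n ())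
  | iden : Sem .iden 1 1 idNet 0
  | tw : Sem .tw 2 2 twNet 0
  | diag : Sem .diag 1 2 diagNet 0
  | codiag : Sem .codiag 2 1 codiagNet 0
  | bot : Sem .bot 1 0 botNet 0
  | top : Sem .top 0 1 topNet 0
  | lam : Sem .lam 1 2 lamNet 0
  | vee : Sem .vee 2 1 veeNet 0
  | down : Sem .down 1 0 downNet 0
  | up : Sem .up 0 1 upNet 0
  | seq {P R : TTerm} {k n l : ℕ} {M : PTNet k n} {N : PTNet n l}
      {X : Multiset M.P} {Y : Multiset N.P} :
      Sem P k n M X → Sem R n l N Y →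
      Sem (.seq P R) k l (M.comp N) (PTNet.mmk X Y)
  | tens {P R : TTerm} {k l m n : ℕ} {M : PTNet k l} {N : PTNet m n}
      {X : Multiset M.P} {Y : Multiset N.P} :
      Sem P k l M X → Sem R m n N Y →
      Sem (.tens P R) (k + m) (l + n) (M.tensor N) (PTNet.mmk X Y)

end PTTrans


open Multiset

section MultisetAux

variable {A B : Type}

lemma multiset_empty_eq (X : Multiset Empty) : X = 0 := by
  rcases X.empty_or_exists_mem with h | ⟨a, _⟩
  · exact h
  · exact a.elim

lemma multiset_unit_eq (X : Multiset Unit) : X = Multiset.replicate X.card () := by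
  refine (Multiset.eq_replicate_card).mpr fun x _ => rfl

lemma multiset_unit_eq_iff {X Y : Multiset Unit} : X = Y ↔ X.card = Y.card := by
  constructor
  · rintro rfl; rfl
  · intro h; rw [multiset_unit_eq X, multiset_unit_eq Y, h]

lemma multiset_bool_eq (U : Multiset Bool) :
    U = Multiset.replicate (U.count true) true + Multiset.replicate (U.count false) false := by
  classical
  ext b
  cases b <;> simp [Multiset.count_replicate]

end MultisetAux

section ChiAux

lemma finRange_one : List.finRange 1 = [0] := rfl

lemma finRange_two : List.finRange 2 = [0, 1] := rfl

lemma chiMul_length {k : ℕ} (M : Multiset (Fin k)) : (chiMul M).length = k := by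
  simp [chiMul]

lemma chiMul_inj {k : ℕ} {A B : Multiset (Fin k)} (h : chiMul A = chiMul B) : A = B := by
  classical
  ext i
  have := (List.map_eq_map_iff).mp h i (List.mem_finRange i)
  simpa using this

lemma chiMul_zero (k : ℕ) : chiMul (0 : Multiset (Fin k)) = List.replicate k 0 := by
  classical
  simp [chiMul, List.eq_replicate_iff]

lemma chiMul_fin1 (A : Multiset (Fin 1)) : chiMul A = [A.count 0] := by
  classical
  simp [chiMul, finRange_one]

lemma chiMul_fin2 (A : Multiset (Fin 2)) : chiMul A = [A.count 0, A.count 1] := by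
  classical
  simp [chiMul, finRange_two]

end ChiAux

open Multiset PTNet

namespace PTNet
variable {k l m n : ℕ}

@[simp] lemma preM_zero (N : PTNet m n) : N.preM 0 = 0 := rfl
@[simp] lemma postM_zero (N : PTNet m n) : N.postM 0 = 0 := rfl
@[simp] lemma srcM_zero (N : PTNet m n) : N.srcM 0 = 0 := rfl
@[simp] lemma tgtM_zero (N : PTNet m n) : N.tgtM 0 = 0 := rfl

@[simp] lemma preM_cons (N : PTNet m n) (t : N.T) (U : Multiset N.T) :
    N.preM (t ::ₘ U) = N.pre t + N.preM U := by simp [preM]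
@[simp] lemma postM_cons (N : PTNet m n) (t : N.T) (U : Multiset N.T) :
    N.postM (t ::ₘ U) = N.post t + N.postM U := by simp [postM]
@[simp] lemma srcM_cons (N : PTNet m n) (t : N.T) (U : Multiset N.T) :
    N.srcM (t ::ₘ U) = N.src t + N.srcM U := by simp [srcM]
@[simp] lemma tgtM_cons (N : PTNet m n) (t : N.T) (U : Multiset N.T) :
    N.tgtM (t ::ₘ U) = N.tgt t + N.tgtM U := by simp [tgtM]

@[simp] lemma preM_add (N : PTNet m n) (U V : Multiset N.T) :
    N.preM (U + V) = N.preM U + N.preM V := by simp [preM]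
@[simp] lemma postM_add (N : PTNet m n) (U V : Multiset N.T) :
    N.postM (U + V) = N.postM U + N.postM V := by simp [postM]
@[simp] lemma srcM_add (N : PTNet m n) (U V : Multiset N.T) :
    N.srcM (U + V) = N.srcM U + N.srcM V := by simp [srcM]
@[simp] lemma tgtM_add (N : PTNet m n) (U V : Multiset N.T) :
    N.tgtM (U + V) = N.tgtM U + N.tgtM V := by simp [tgtM]

@[simp] lemma preM_replicate (N : PTNet m n) (c : ℕ) (t : N.T) :
    N.preM (Multiset.replicate c t) = c • N.pre t := by
  induction c with
  | zero => simp
  | succ c ih => simp [Multiset.replicate_succ, ih, succ_nsmul, add_comm]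
@[simp] lemma postM_replicate (N : PTNet m n) (c : ℕ) (t : N.T) :
    N.postM (Multiset.replicate c t) = c • N.post t := by
  induction c with
  | zero => simp
  | succ c ih => simp [Multiset.replicate_succ, ih, succ_nsmul, add_comm]
@[simp] lemma srcM_replicate (N : PTNet m n) (c : ℕ) (t : N.T) :
    N.srcM (Multiset.replicate c t) = c • N.src t := by
  induction c with
  | zero => simp
  | succ c ih => simp [Multiset.replicate_succ, ih, succ_nsmul, add_comm]
@[simp] lemma tgtM_replicate (N : PTNet m n) (c : ℕ) (t : N.T) :
    N.tgtM (Multiset.replicate c t) = c • N.tgt t := by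
  induction c with
  | zero => simp
  | succ c ih => simp [Multiset.replicate_succ, ih, succ_nsmul, add_comm]

lemma preM_sub (N : PTNet m n) {U V : Multiset N.T} (h : V ≤ U) :
    letI := Classical.decEq N.T
    letI := Classical.decEq N.P
    N.preM (U - V) = N.preM U - N.preM V := by
  letI := Classical.decEq N.T
  letI := Classical.decEq N.P
  have h1 : N.preM (U - V) + N.preM V = N.preM U := by
    rw [← preM_add, tsub_add_cancel_of_le h]
  exact eq_tsub_of_add_eq h1

lemma tgtM_sub (N : PTNet m n) {U V : Multiset N.T} (h : V ≤ U) :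
    letI := Classical.decEq N.T
    N.tgtM (U - V) = N.tgtM U - N.tgtM V := by
  letI := Classical.decEq N.T
  have h1 : N.tgtM (U - V) + N.tgtM V = N.tgtM U := by
    rw [← tgtM_add, tsub_add_cancel_of_le h]
  exact eq_tsub_of_add_eq h1

lemma srcM_sub (N : PTNet m n) {U V : Multiset N.T} (h : V ≤ U) :
    letI := Classical.decEq N.T
    N.srcM (U - V) = N.srcM U - N.srcM V := by
  letI := Classical.decEq N.T
  have h1 : N.srcM (U - V) + N.srcM V = N.srcM U := by
    rw [← srcM_add, tsub_add_cancel_of_le h]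
  exact eq_tsub_of_add_eq h1

@[simp] lemma SFire_zero (N : PTNet m n) (X : Multiset N.P) : N.SFire X 0 X := by
  refine ⟨by simp, by simp, rfl⟩

end PTNet

open Multiset PTNet

section MmkAux
variable {A B : Type}

@[simp] lemma mmk_zero : PTNet.mmk (0 : Multiset A) (0 : Multiset B) = 0 := rfl

lemma mmk_add (X X' : Multiset A) (Y Y' : Multiset B) :
    PTNet.mmk (X + X') (Y + Y') = PTNet.mmk X Y + PTNet.mmk X' Y' := by
  simp [PTNet.mmk]; abel

lemma count_inl_mmk (X : Multiset A) (Y : Multiset B) (a : A) :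
    letI := Classical.decEq A
    letI := Classical.decEq (A ⊕ B)
    (PTNet.mmk X Y).count (Sum.inl a) = X.count a := by
  letI := Classical.decEq A
  letI := Classical.decEq (A ⊕ B)
  have h1 : (Y.map Sum.inr).count (Sum.inl a : A ⊕ B) = 0 := by
    rw [Multiset.count_eq_zero]
    simp
  rw [PTNet.mmk, Multiset.count_add, h1,
    Multiset.count_map_eq_count' _ _ (fun x y hxy => by simpa using hxy)]
  simp

lemma count_inr_mmk (X : Multiset A) (Y : Multiset B) (b : B) :
    letI := Classical.decEq B
    letI := Classical.decEq (A ⊕ B)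
    (PTNet.mmk X Y).count (Sum.inr b) = Y.count b := by
  letI := Classical.decEq B
  letI := Classical.decEq (A ⊕ B)
  have h1 : (X.map Sum.inl).count (Sum.inr b : A ⊕ B) = 0 := by
    rw [Multiset.count_eq_zero]
    simp
  rw [PTNet.mmk, Multiset.count_add, h1,
    Multiset.count_map_eq_count' _ _ (fun x y hxy => by simpa using hxy)]
  simp

lemma mmk_inj {X X' : Multiset A} {Y Y' : Multiset B}
    (h : PTNet.mmk X Y = PTNet.mmk X' Y') : X = X' ∧ Y = Y' := by
  letI := Classical.decEq A
  letI := Classical.decEq B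
  letI := Classical.decEq (A ⊕ B)
  constructor
  · ext a
    have := congrArg (fun Z => Multiset.count (Sum.inl a : A ⊕ B) Z) h
    simpa [count_inl_mmk] using this
  · ext b
    have := congrArg (fun Z => Multiset.count (Sum.inr b : A ⊕ B) Z) h
    simpa [count_inr_mmk] using this

lemma mmk_le_mmk_iff {X X' : Multiset A} {Y Y' : Multiset B} :
    PTNet.mmk X Y ≤ PTNet.mmk X' Y' ↔ X ≤ X' ∧ Y ≤ Y' := by
  letI := Classical.decEq A
  letI := Classical.decEq B
  letI := Classical.decEq (A ⊕ B)
  constructor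
  · intro h
    rw [Multiset.le_iff_count] at h
    constructor
    · rw [Multiset.le_iff_count]
      intro a
      have := h (Sum.inl a)
      simpa [count_inl_mmk] using this
    · rw [Multiset.le_iff_count]
      intro b
      have := h (Sum.inr b)
      simpa [count_inr_mmk] using this
  · rintro ⟨h1, h2⟩
    exact add_le_add (Multiset.map_le_map h1) (Multiset.map_le_map h2)

lemma mmk_sub (X X' : Multiset A) (Y Y' : Multiset B) :
    letI := Classical.decEq A
    letI := Classical.decEq B
    letI := Classical.decEq (A ⊕ B)
    PTNet.mmk X Y - PTNet.mmk X' Y' = PTNet.mmk (X - X') (Y - Y') := by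
  letI := Classical.decEq A
  letI := Classical.decEq B
  letI := Classical.decEq (A ⊕ B)
  ext z
  cases z with
  | inl a => simp [Multiset.count_sub, count_inl_mmk]
  | inr b => simp [Multiset.count_sub, count_inr_mmk]

lemma exists_mmk (Z : Multiset (A ⊕ B)) :
    ∃ (Z₁ : Multiset A) (Z₂ : Multiset B), Z = PTNet.mmk Z₁ Z₂ := by
  induction Z using Multiset.induction_on with
  | empty => exact ⟨0, 0, rfl⟩
  | cons z Z ih =>
    obtain ⟨Z₁, Z₂, rfl⟩ := ih
    cases z with
    | inl a =>
      refine ⟨a ::ₘ Z₁, Z₂, ?_⟩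
      simp [PTNet.mmk]
    | inr b =>
      refine ⟨Z₁, b ::ₘ Z₂, ?_⟩
      simp [PTNet.mmk]

end MmkAux

open Multiset PTNet

lemma castAdd_inj {k m : ℕ} : Function.Injective (Fin.castAdd m : Fin k → Fin (k+m)) := by
  intro x y h
  apply Fin.ext
  simpa using congrArg Fin.val h

lemma natAdd_inj {k m : ℕ} : Function.Injective (Fin.natAdd k : Fin m → Fin (k+m)) := by
  intro x y h
  apply Fin.ext
  have := congrArg Fin.val h
  simp [Fin.natAdd] at this
  exact this

lemma count_sum_fin {k m : ℕ} (A : Multiset (Fin k)) (B : Multiset (Fin m))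
    (j : Fin (k + m)) :
    (A.map (Fin.castAdd m) + B.map (Fin.natAdd k)).count j =
      if h : (j : ℕ) < k then A.count ⟨j, h⟩
      else B.count ⟨(j : ℕ) - k, by omega⟩ := by
  classical
  by_cases h : (j : ℕ) < k
  · have hj : j = Fin.castAdd m ⟨j, h⟩ := by apply Fin.ext; rfl
    rw [hj]
    rw [Multiset.count_add, Multiset.count_map_eq_count' _ _ castAdd_inj]
    have h0 : (B.map (Fin.natAdd k)).count (Fin.castAdd m ⟨j, h⟩) = 0 := by
      rw [Multiset.count_eq_zero]
      intro hm
      obtain ⟨x, _, hx⟩ := Multiset.mem_map.mp hm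
      have := congrArg Fin.val hx
      simp [Fin.natAdd, Fin.castAdd] at this
      omega
    rw [h0]
    simp [h]
  · have hj : j = Fin.natAdd k ⟨(j : ℕ) - k, by omega⟩ := by
      apply Fin.ext; simp [Fin.natAdd]; omega
    rw [hj]
    rw [Multiset.count_add, Multiset.count_map_eq_count' _ _ natAdd_inj]
    have h0 : (A.map (Fin.castAdd m)).count (Fin.natAdd k ⟨(j : ℕ) - k, by omega⟩) = 0 := by
      rw [Multiset.count_eq_zero]
      intro hm
      obtain ⟨x, _, hx⟩ := Multiset.mem_map.mp hm
      have := congrArg Fin.val hx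
      simp [Fin.natAdd, Fin.castAdd] at this
      omega
    rw [h0]
    simp [h]

lemma chiMul_eq_ofFn {k : ℕ} (M : Multiset (Fin k)) :
    chiMul M = List.ofFn (fun i => M.count i) := (List.ofFn_eq_map).symm

lemma chiMul_append {k m : ℕ} (A : Multiset (Fin k)) (B : Multiset (Fin m)) :
    chiMul (A.map (Fin.castAdd m) + B.map (Fin.natAdd k)) = chiMul A ++ chiMul B := by
  classical
  apply List.ext_getElem
  · simp [chiMul]
  intro i hi hi2
  have hikm : i < k + m := by simpa [chiMul] using hi
  simp only [chiMul_eq_ofFn, List.getElem_ofFn, List.getElem_append, List.length_ofFn]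
  rw [count_sum_fin]

open Multiset PTNet

namespace PTNet
variable {k l m n : ℕ}

lemma tensor_preM (M : PTNet k l) (N : PTNet m n) (U : Multiset M.T) (V : Multiset N.T) :
    (M.tensor N).preM (mmk U V) = mmk (M.preM U) (N.preM V) := by
  have hU : ∀ U : Multiset M.T, (M.tensor N).preM (U.map Sum.inl) = (M.preM U).map Sum.inl := by
    intro U
    induction U using Multiset.induction_on with
    | empty => rfl
    | cons t U ih => erw [Multiset.map_cons, preM_cons, preM_cons, ih, Multiset.map_add]; rfl
  have hV : ∀ V : Multiset N.T, (M.tensor N).preM (V.map Sum.inr) = (N.preM V).map Sum.inr := by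
    intro V
    induction V using Multiset.induction_on with
    | empty => rfl
    | cons t V ih => erw [Multiset.map_cons, preM_cons, preM_cons, ih, Multiset.map_add]; rfl
  erw [mmk, preM_add, hU, hV]; rfl

lemma tensor_postM (M : PTNet k l) (N : PTNet m n) (U : Multiset M.T) (V : Multiset N.T) :
    (M.tensor N).postM (mmk U V) = mmk (M.postM U) (N.postM V) := by
  have hU : ∀ U : Multiset M.T, (M.tensor N).postM (U.map Sum.inl) = (M.postM U).map Sum.inl := by
    intro U
    induction U using Multiset.induction_on with
    | empty => rfl
    | cons t U ih => erw [Multiset.map_cons, postM_cons, postM_cons, ih, Multiset.map_add]; rfl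
  have hV : ∀ V : Multiset N.T, (M.tensor N).postM (V.map Sum.inr) = (N.postM V).map Sum.inr := by
    intro V
    induction V using Multiset.induction_on with
    | empty => rfl
    | cons t V ih => erw [Multiset.map_cons, postM_cons, postM_cons, ih, Multiset.map_add]; rfl
  erw [mmk, postM_add, hU, hV]; rfl

lemma tensor_srcM (M : PTNet k l) (N : PTNet m n) (U : Multiset M.T) (V : Multiset N.T) :
    (M.tensor N).srcM (mmk U V) =
      (M.srcM U).map (Fin.castAdd m) + (N.srcM V).map (Fin.natAdd k) := by
  have hU : ∀ U : Multiset M.T,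
      (M.tensor N).srcM (U.map Sum.inl) = (M.srcM U).map (Fin.castAdd m) := by
    intro U
    induction U using Multiset.induction_on with
    | empty => rfl
    | cons t U ih => erw [Multiset.map_cons, srcM_cons, srcM_cons, ih, Multiset.map_add]; rfl
  have hV : ∀ V : Multiset N.T,
      (M.tensor N).srcM (V.map Sum.inr) = (N.srcM V).map (Fin.natAdd k) := by
    intro V
    induction V using Multiset.induction_on with
    | empty => rfl
    | cons t V ih => erw [Multiset.map_cons, srcM_cons, srcM_cons, ih, Multiset.map_add]; rfl
  erw [mmk, srcM_add, hU, hV]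

lemma tensor_tgtM (M : PTNet k l) (N : PTNet m n) (U : Multiset M.T) (V : Multiset N.T) :
    (M.tensor N).tgtM (mmk U V) =
      (M.tgtM U).map (Fin.castAdd n) + (N.tgtM V).map (Fin.natAdd l) := by
  have hU : ∀ U : Multiset M.T,
      (M.tensor N).tgtM (U.map Sum.inl) = (M.tgtM U).map (Fin.castAdd n) := by
    intro U
    induction U using Multiset.induction_on with
    | empty => rfl
    | cons t U ih => erw [Multiset.map_cons, tgtM_cons, tgtM_cons, ih, Multiset.map_add]; rfl
  have hV : ∀ V : Multiset N.T,
      (M.tensor N).tgtM (V.map Sum.inr) = (N.tgtM V).map (Fin.natAdd l) := by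
    intro V
    induction V using Multiset.induction_on with
    | empty => rfl
    | cons t V ih => erw [Multiset.map_cons, tgtM_cons, tgtM_cons, ih, Multiset.map_add]; rfl
  erw [mmk, tgtM_add, hU, hV]

lemma tensor_slts (M : PTNet k l) (N : PTNet m n) {X X' : Multiset M.P}
    {Y Y' : Multiset N.P} {U : Multiset M.T} {V : Multiset N.T}
    (hM : M.SFire X U X') (hN : N.SFire Y V Y') :
    (M.tensor N).SLtsL (mmk X Y) (chiMul (M.srcM U) ++ chiMul (N.srcM V))
      (chiMul (M.tgtM U) ++ chiMul (N.tgtM V)) (mmk X' Y') := by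
  obtain ⟨h1, h2, h3⟩ := hM
  obtain ⟨h1', h2', h3'⟩ := hN
  refine ⟨mmk U V, ⟨?_, ?_, ?_⟩, ?_, ?_⟩
  · rw [tensor_preM]; exact mmk_le_mmk_iff.mpr ⟨h1, h1'⟩
  · rw [tensor_postM]; exact mmk_le_mmk_iff.mpr ⟨h2, h2'⟩
  · erw [tensor_preM, tensor_postM, mmk_sub, mmk_sub, h3, h3']
  · rw [tensor_srcM, chiMul_append]
  · rw [tensor_tgtM, chiMul_append]

lemma tensor_slts_inv (M : PTNet k l) (N : PTNet m n) {X : Multiset M.P}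
    {Y : Multiset N.P} {Z : Multiset (M.tensor N).P} {a b : List ℕ}
    (h : (M.tensor N).SLtsL (mmk X Y) a b Z) :
    ∃ (Z₁ : Multiset M.P) (Z₂ : Multiset N.P) (U : Multiset M.T) (V : Multiset N.T),
      Z = mmk Z₁ Z₂ ∧ M.SFire X U Z₁ ∧ N.SFire Y V Z₂ ∧
      a = chiMul (M.srcM U) ++ chiMul (N.srcM V) ∧
      b = chiMul (M.tgtM U) ++ chiMul (N.tgtM V) := by
  obtain ⟨W, ⟨h1, h2, h3⟩, ha, hb⟩ := h
  obtain ⟨U, V, rfl⟩ := exists_mmk (W : Multiset (M.T ⊕ N.T))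
  obtain ⟨Z₁, Z₂, rfl⟩ := exists_mmk (Z : Multiset (M.P ⊕ N.P))
  rw [tensor_preM] at h1 h3
  rw [tensor_postM] at h2 h3
  erw [mmk_sub, mmk_sub] at h3
  obtain ⟨h31, h32⟩ := mmk_inj h3
  refine ⟨Z₁, Z₂, U, V, rfl, ⟨(mmk_le_mmk_iff.mp h1).1, (mmk_le_mmk_iff.mp h2).1, h31⟩,
    ⟨(mmk_le_mmk_iff.mp h1).2, (mmk_le_mmk_iff.mp h2).2, h32⟩, ?_, ?_⟩
  · rw [ha, tensor_srcM, chiMul_append]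
  · rw [hb, tensor_tgtM, chiMul_append]

end PTNet

open Multiset PTNet

namespace PTNet
variable {k l m n : ℕ}

lemma synch_decomp (M : PTNet l m) (N : PTNet m n) :
    ∀ (c : ℕ) (U : Multiset M.T) (V : Multiset N.T),
      Multiset.card U + Multiset.card V = c → Synch M N U V →
      ∃ W : Multiset (Multiset M.T × Multiset N.T),
        (∀ p ∈ W, MinSynch M N p.1 p.2) ∧
        (W.map Prod.fst).sum = U ∧ (W.map Prod.snd).sum = V := by
  intro c
  induction c using Nat.strong_induction_on with
  | _ c ih =>
    intro U V hc hs
    by_cases hmin : MinSynch M N U V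
    · refine ⟨{(U, V)}, ?_, by simp, by simp⟩
      intro p hp
      rw [Multiset.mem_singleton] at hp
      subst hp
      exact hmin
    · letI := Classical.decEq M.T
      letI := Classical.decEq N.T
      rw [MinSynch] at hmin
      push_neg at hmin
      obtain ⟨U', V', hs', hU, hV, hne⟩ := hmin hs
      have hne' : ¬(U - U' = 0 ∧ V - V' = 0) := by
        rintro ⟨h1, h2⟩
        exact hne (le_antisymm hU (tsub_eq_zero_iff_le.mp h1))
          (le_antisymm hV (tsub_eq_zero_iff_le.mp h2))
      have hs1 : Synch M N (U - U') (V - V') := by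
        refine ⟨hne', ?_⟩
        rw [tgtM_sub M hU, srcM_sub N hV, hs.2, hs'.2]
      have hpos : 0 < Multiset.card U' + Multiset.card V' := by
        rcases Nat.eq_zero_or_pos (Multiset.card U' + Multiset.card V') with h | h
        · exact absurd ⟨Multiset.card_eq_zero.mp (by omega),
            Multiset.card_eq_zero.mp (by omega)⟩ hs'.1
        · exact h
      have hpos1 : 0 < Multiset.card (U - U') + Multiset.card (V - V') := by
        rcases Nat.eq_zero_or_pos
            (Multiset.card (U - U') + Multiset.card (V - V')) with h | h
        · exact absurd ⟨Multiset.card_eq_zero.mp (by omega),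
            Multiset.card_eq_zero.mp (by omega)⟩ hne'
        · exact h
      have hcard1 : Multiset.card (U - U') + Multiset.card (V - V') < c := by
        rw [Multiset.card_sub hU, Multiset.card_sub hV]
        have := Multiset.card_le_card hU
        have := Multiset.card_le_card hV
        omega
      have hcard2 : Multiset.card U' + Multiset.card V' < c := by
        rw [Multiset.card_sub hU, Multiset.card_sub hV] at hpos1
        have := Multiset.card_le_card hU
        have := Multiset.card_le_card hV
        omega
      obtain ⟨W1, hW1, hW1U, hW1V⟩ := ih _ hcard2 U' V' rfl hs'
      obtain ⟨W2, hW2, hW2U, hW2V⟩ := ih _ hcard1 (U - U') (V - V') rfl hs1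
      refine ⟨W1 + W2, ?_, ?_, ?_⟩
      · intro p hp
        rcases Multiset.mem_add.mp hp with h | h
        · exact hW1 p h
        · exact hW2 p h
      · rw [Multiset.map_add, Multiset.sum_add, hW1U, hW2U, add_tsub_cancel_of_le hU]
      · rw [Multiset.map_add, Multiset.sum_add, hW1V, hW2V, add_tsub_cancel_of_le hV]

lemma comp_fire_of_parts (M : PTNet l m) (N : PTNet m n)
    (W : Multiset (Multiset M.T × Multiset N.T))
    (hW : ∀ p ∈ W, MinSynch M N p.1 p.2) :
    ∃ Wc : Multiset (M.comp N).T,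
      (M.comp N).preM Wc =
        mmk (M.preM (W.map Prod.fst).sum) (N.preM (W.map Prod.snd).sum) ∧
      (M.comp N).postM Wc =
        mmk (M.postM (W.map Prod.fst).sum) (N.postM (W.map Prod.snd).sum) ∧
      (M.comp N).srcM Wc = M.srcM (W.map Prod.fst).sum ∧
      (M.comp N).tgtM Wc = N.tgtM (W.map Prod.snd).sum := by
  induction W using Multiset.induction_on with
  | empty => exact ⟨0, by simp; rfl, by simp; rfl, by simp, by simp⟩
  | cons p W ih =>
    obtain ⟨Wc, h1, h2, h3, h4⟩ := ih (fun q hq => hW q (Multiset.mem_cons_of_mem hq))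
    have hp := hW p (Multiset.mem_cons_self _ _)
    refine ⟨(⟨footOf M N p.1 p.2, p.1, p.2, hp, rfl⟩ : (M.comp N).T) ::ₘ Wc, ?_, ?_, ?_, ?_⟩
    · erw [preM_cons, h1, Multiset.map_cons, Multiset.map_cons, Multiset.sum_cons,
        Multiset.sum_cons, preM_add, preM_add, mmk_add]
      rfl
    · erw [postM_cons, h2, Multiset.map_cons, Multiset.map_cons, Multiset.sum_cons,
        Multiset.sum_cons, postM_add, postM_add, mmk_add]
      rfl
    · erw [srcM_cons, h3, Multiset.map_cons, Multiset.sum_cons, srcM_add]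
      rfl
    · erw [tgtM_cons, h4, Multiset.map_cons, Multiset.sum_cons, tgtM_add]
      rfl

lemma comp_fire_parts (M : PTNet l m) (N : PTNet m n) (Wc : Multiset (M.comp N).T) :
    ∃ (U : Multiset M.T) (V : Multiset N.T),
      M.tgtM U = N.srcM V ∧
      (M.comp N).preM Wc = mmk (M.preM U) (N.preM V) ∧
      (M.comp N).postM Wc = mmk (M.postM U) (N.postM V) ∧
      (M.comp N).srcM Wc = M.srcM U ∧
      (M.comp N).tgtM Wc = N.tgtM V := by
  induction Wc using Multiset.induction_on with
  | empty => exact ⟨0, 0, by simp, by simp; rfl, by simp; rfl, by simp, by simp⟩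
  | cons t Wc ih =>
    obtain ⟨U, V, h0, h1, h2, h3, h4⟩ := ih
    obtain ⟨U₀, V₀, hmin, hfoot⟩ := t.2
    have hpre : (M.comp N).pre t = mmk (M.preM U₀) (N.preM V₀) :=
      (congrArg (fun fp => fp.1) hfoot).symm
    have hpost : (M.comp N).post t = mmk (M.postM U₀) (N.postM V₀) :=
      (congrArg (fun fp => fp.2.1) hfoot).symm
    have hsrc : (M.comp N).src t = M.srcM U₀ :=
      (congrArg (fun fp => fp.2.2.1) hfoot).symm
    have htgt : (M.comp N).tgt t = N.tgtM V₀ :=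
      (congrArg (fun fp => fp.2.2.2) hfoot).symm
    refine ⟨U₀ + U, V₀ + V, ?_, ?_, ?_, ?_, ?_⟩
    · rw [tgtM_add, srcM_add, h0, hmin.1.2]
    · rw [preM_cons, h1, hpre, preM_add, preM_add, mmk_add]; rfl
    · rw [postM_cons, h2, hpost, postM_add, postM_add, mmk_add]; rfl
    · rw [srcM_cons, h3, hsrc, srcM_add]
    · rw [tgtM_cons, h4, htgt, tgtM_add]

lemma comp_slts (M : PTNet l m) (N : PTNet m n) {X X' : Multiset M.P}
    {Y Y' : Multiset N.P} {U : Multiset M.T} {V : Multiset N.T}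
    (hM : M.SFire X U X') (hN : N.SFire Y V Y') (hγ : M.tgtM U = N.srcM V) :
    (M.comp N).SLtsL (mmk X Y) (chiMul (M.srcM U)) (chiMul (N.tgtM V)) (mmk X' Y') := by
  by_cases h0 : U = 0 ∧ V = 0
  · obtain ⟨rfl, rfl⟩ := h0
    letI := Classical.decEq M.P
    letI := Classical.decEq N.P
    have hx : X = X' := by
      have := hM.2.2
      simpa using this
    have hy : Y = Y' := by
      have := hN.2.2
      simpa using this
    subst hx; subst hy
    exact ⟨0, SFire_zero _ _, by simp, by simp⟩
  · have hs : Synch M N U V := ⟨h0, hγ⟩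
    obtain ⟨W, hmin, hU, hV⟩ := synch_decomp M N _ U V rfl hs
    obtain ⟨Wc, h1, h2, h3, h4⟩ := comp_fire_of_parts M N W hmin
    rw [hU] at h1 h2 h3
    rw [hV] at h1 h2 h4
    refine ⟨Wc, ⟨?_, ?_, ?_⟩, by rw [h3], by rw [h4]⟩
    · rw [h1]; exact mmk_le_mmk_iff.mpr ⟨hM.1, hN.1⟩
    · rw [h2]; exact mmk_le_mmk_iff.mpr ⟨hM.2.1, hN.2.1⟩
    · erw [h1, h2, mmk_sub, mmk_sub, hM.2.2, hN.2.2]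

lemma comp_slts_inv (M : PTNet l m) (N : PTNet m n) {X : Multiset M.P}
    {Y : Multiset N.P} {Z : Multiset (M.comp N).P} {a b : List ℕ}
    (h : (M.comp N).SLtsL (mmk X Y) a b Z) :
    ∃ (Z₁ : Multiset M.P) (Z₂ : Multiset N.P) (U : Multiset M.T) (V : Multiset N.T),
      Z = mmk Z₁ Z₂ ∧ M.SFire X U Z₁ ∧ N.SFire Y V Z₂ ∧
      M.tgtM U = N.srcM V ∧ a = chiMul (M.srcM U) ∧ b = chiMul (N.tgtM V) := by
  obtain ⟨Wc, ⟨h1, h2, h3⟩, ha, hb⟩ := h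
  obtain ⟨U, V, h0, hp1, hp2, hp3, hp4⟩ := comp_fire_parts M N Wc
  obtain ⟨Z₁, Z₂, rfl⟩ := exists_mmk (Z : Multiset (M.P ⊕ N.P))
  rw [hp1] at h1 h3
  rw [hp2] at h2 h3
  erw [mmk_sub, mmk_sub] at h3
  obtain ⟨h31, h32⟩ := mmk_inj h3
  exact ⟨Z₁, Z₂, U, V, rfl,
    ⟨(mmk_le_mmk_iff.mp h1).1, (mmk_le_mmk_iff.mp h2).1, h31⟩,
    ⟨(mmk_le_mmk_iff.mp h1).2, (mmk_le_mmk_iff.mp h2).2, h32⟩,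
    h0, by rw [ha, hp3], by rw [hb, hp4]⟩

end PTNet

open Multiset PTNet PTTrans

lemma sem_hasSort {T : TTerm} {k l : ℕ} {N : PTNet k l} {X : Multiset N.P}
    (h : Sem T k l N X) : TTerm.HasSort T k l := by
  induction h with
  | place n => exact .place n
  | iden => exact .iden
  | tw => exact .tw
  | diag => exact .diag
  | codiag => exact .codiag
  | bot => exact .bot
  | top => exact .top
  | lam => exact .lam
  | vee => exact .vee
  | down => exact .down
  | up => exact .up
  | seq _ _ ih1 ih2 => exact .seq ih1 ih2
  | tens _ _ ih1 ih2 => exact .tens ih1 ih2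

lemma hasSort_unique {T : TTerm} {k l k' l' : ℕ}
    (h : TTerm.HasSort T k l) (h' : TTerm.HasSort T k' l') : k = k' ∧ l = l' := by
  induction h generalizing k' l' with
  | place n => cases h'; exact ⟨rfl, rfl⟩
  | iden => cases h'; exact ⟨rfl, rfl⟩
  | tw => cases h'; exact ⟨rfl, rfl⟩
  | diag => cases h'; exact ⟨rfl, rfl⟩
  | codiag => cases h'; exact ⟨rfl, rfl⟩
  | bot => cases h'; exact ⟨rfl, rfl⟩
  | top => cases h'; exact ⟨rfl, rfl⟩
  | lam => cases h'; exact ⟨rfl, rfl⟩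
  | vee => cases h'; exact ⟨rfl, rfl⟩
  | down => cases h'; exact ⟨rfl, rfl⟩
  | up => cases h'; exact ⟨rfl, rfl⟩
  | tens h1 h2 ih1 ih2 =>
    cases h' with
    | tens h1' h2' =>
      obtain ⟨e1, e2⟩ := ih1 h1'
      obtain ⟨e3, e4⟩ := ih2 h2'
      subst e1; subst e2; subst e3; subst e4
      exact ⟨rfl, rfl⟩
  | seq h1 h2 ih1 ih2 =>
    cases h' with
    | seq h1' h2' =>
      obtain ⟨e1, e2⟩ := ih1 h1'
      subst e1; subst e2
      obtain ⟨e3, e4⟩ := ih2 h2'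
      subst e4
      exact ⟨rfl, rfl⟩

lemma SFire_of_empty {m n : ℕ} (N : PTNet m n) (e : N.P → Empty)
    (X : Multiset N.P) (U : Multiset N.T) (Y : Multiset N.P) : N.SFire X U Y := by
  have hz : ∀ Z : Multiset N.P, Z = 0 := fun Z => by
    rcases Z.empty_or_exists_mem with h | ⟨a, _⟩
    · exact h
    · exact (e a).elim
  refine ⟨?_, ?_, ?_⟩
  · rw [hz (N.preM U), hz X]
  · rw [hz (N.postM U), hz Y]
  · rw [hz X, hz Y, hz (N.preM U), hz (N.postM U)]

lemma chiMul_fin0 (A : Multiset (Fin 0)) : chiMul A = [] := rfl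

/-- Theorem `correspondence-ptfortiles`: the compositional
translation `⟦−⟧` from P/T calculus terms to P/T nets with boundaries
preserves and reflects the strong semantics. -/
theorem stmt16 :
    -- (i) term transitions are preserved
    (∀ (T T' : TTerm) (α β : List ℕ), TTerm.Step T α β T' →
       ∀ (k l : ℕ) (N : PTNet k l) (X : Multiset N.P), PTTrans.Sem T k l N X →
         ∃ X' : Multiset N.P, PTTrans.Sem T' k l N X' ∧ PTNet.SLtsL N X α β X') ∧
    -- (ii) net transitions are reflected
    (∀ (T : TTerm) (k l : ℕ) (N : PTNet k l) (X : Multiset N.P),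
       PTTrans.Sem T k l N X →
       ∀ (α β : List ℕ) (Y : Multiset N.P), PTNet.SLtsL N X α β Y →
         ∃ T' : TTerm, TTerm.Step T α β T' ∧ PTTrans.Sem T' k l N Y) := by
  constructor
  · intro T T' α β hstep
    induction hstep with
    | @place n h k hk =>
      intro k' l' N X hsem
      cases hsem
      refine ⟨Multiset.replicate (n + h - k) (), Sem.place _,
        Multiset.replicate h true + Multiset.replicate k false, ⟨?_, ?_, ?_⟩, ?_, ?_⟩
      · erw [preM_add, preM_replicate, preM_replicate,
          show bufNet.pre true = 0 from rfl, show bufNet.pre false = {()} from rfl,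
          smul_zero, zero_add, Multiset.nsmul_singleton]
        show (Multiset.replicate k () : Multiset Unit) ≤ Multiset.replicate n ()
        exact (Multiset.replicate_le_replicate ()).mpr hk
      · erw [postM_add, postM_replicate, postM_replicate,
          show bufNet.post true = {()} from rfl, show bufNet.post false = 0 from rfl,
          smul_zero, add_zero, Multiset.nsmul_singleton]
        show (Multiset.replicate h () : Multiset Unit) ≤ Multiset.replicate (n + h - k) ()
        exact (Multiset.replicate_le_replicate ()).mpr (by omega)
      · erw [preM_add, preM_replicate, preM_replicate, postM_add, postM_replicate,
          postM_replicate,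
          show bufNet.pre true = 0 from rfl, show bufNet.pre false = {()} from rfl,
          show bufNet.post true = {()} from rfl, show bufNet.post false = 0 from rfl,
          smul_zero, smul_zero, zero_add, add_zero, Multiset.nsmul_singleton,
          Multiset.nsmul_singleton]
        letI : DecidableEq Unit := Classical.decEq Unit
        show (Multiset.replicate n () : Multiset Unit) - Multiset.replicate k () =
          Multiset.replicate (n + h - k) () - Multiset.replicate h ()
        rw [multiset_unit_eq_iff,
          Multiset.card_sub ((Multiset.replicate_le_replicate ()).mpr hk),
          Multiset.card_sub ((Multiset.replicate_le_replicate ()).mpr (by omega))]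
        simp
        omega
      · erw [srcM_add, srcM_replicate, srcM_replicate]
        simp [chiMul_fin1, bufNet, Multiset.count_nsmul, Multiset.count_replicate]
      · erw [tgtM_add, tgtM_replicate, tgtM_replicate]
        simp [chiMul_fin1, bufNet, Multiset.count_nsmul, Multiset.count_replicate]
    | iden k =>
      intro k' l' N X hsem
      cases hsem
      refine ⟨0, Sem.iden, Multiset.replicate k (), SFire_of_empty _ (fun x => x) _ _ _, ?_, ?_⟩
      · erw [srcM_replicate]
        simp [chiMul_fin1, idNet, Multiset.count_nsmul, Multiset.count_replicate]
      · erw [tgtM_replicate]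
        simp [chiMul_fin1, idNet, Multiset.count_nsmul, Multiset.count_replicate]
    | tw h k =>
      intro k' l' N X hsem
      cases hsem
      refine ⟨0, Sem.tw, Multiset.replicate h true + Multiset.replicate k false, SFire_of_empty _ (fun x => x) _ _ _, ?_, ?_⟩
      · erw [srcM_add, srcM_replicate, srcM_replicate]
        simp [chiMul_fin2, twNet, Multiset.count_nsmul, Multiset.count_replicate]
      · erw [tgtM_add, tgtM_replicate, tgtM_replicate]
        simp [chiMul_fin2, twNet, Multiset.count_nsmul, Multiset.count_replicate]
    | bot k =>
      intro k' l' N X hsem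
      cases hsem
      refine ⟨0, Sem.bot, Multiset.replicate k (), SFire_of_empty _ (fun x => x) _ _ _, ?_, ?_⟩
      · erw [srcM_replicate]
        simp [chiMul_fin1, botNet, Multiset.count_nsmul, Multiset.count_replicate]
      · exact (chiMul_fin0 _).symm
    | top k =>
      intro k' l' N X hsem
      cases hsem
      refine ⟨0, Sem.top, Multiset.replicate k (), SFire_of_empty _ (fun x => x) _ _ _, ?_, ?_⟩
      · exact (chiMul_fin0 _).symm
      · erw [tgtM_replicate]
        simp [chiMul_fin1, topNet, Multiset.count_nsmul, Multiset.count_replicate]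
    | diag k =>
      intro k' l' N X hsem
      cases hsem
      refine ⟨0, Sem.diag, Multiset.replicate k (), SFire_of_empty _ (fun x => x) _ _ _, ?_, ?_⟩
      · erw [srcM_replicate]
        simp [chiMul_fin1, diagNet, Multiset.count_nsmul, Multiset.count_replicate]
      · erw [tgtM_replicate]
        simp [chiMul_fin2, diagNet, Multiset.count_nsmul, Multiset.count_replicate]
    | codiag k =>
      intro k' l' N X hsem
      cases hsem
      refine ⟨0, Sem.codiag, Multiset.replicate k (), SFire_of_empty _ (fun x => x) _ _ _, ?_, ?_⟩
      · erw [srcM_replicate]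
        simp [chiMul_fin2, codiagNet, Multiset.count_nsmul, Multiset.count_replicate]
      · erw [tgtM_replicate]
        simp [chiMul_fin1, codiagNet, Multiset.count_nsmul, Multiset.count_replicate]
    | lam h k =>
      intro k' l' N X hsem
      cases hsem
      refine ⟨0, Sem.lam, Multiset.replicate h true + Multiset.replicate k false, SFire_of_empty _ (fun x => x) _ _ _, ?_, ?_⟩
      · erw [srcM_add, srcM_replicate, srcM_replicate]
        simp [chiMul_fin1, lamNet, Multiset.count_nsmul, Multiset.count_replicate]
      · erw [tgtM_add, tgtM_replicate, tgtM_replicate]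
        simp [chiMul_fin2, lamNet, Multiset.count_nsmul, Multiset.count_replicate]
    | vee h k =>
      intro k' l' N X hsem
      cases hsem
      refine ⟨0, Sem.vee, Multiset.replicate h true + Multiset.replicate k false, SFire_of_empty _ (fun x => x) _ _ _, ?_, ?_⟩
      · erw [srcM_add, srcM_replicate, srcM_replicate]
        simp [chiMul_fin2, veeNet, Multiset.count_nsmul, Multiset.count_replicate]
      · erw [tgtM_add, tgtM_replicate, tgtM_replicate]
        simp [chiMul_fin1, veeNet, Multiset.count_nsmul, Multiset.count_replicate]
    | @refl C k l hbasic hsort =>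
      intro k' l' N X hsem
      obtain ⟨rfl, rfl⟩ := hasSort_unique hsort (sem_hasSort hsem)
      refine ⟨X, hsem, 0, SFire_zero _ _, ?_, ?_⟩
      · rw [srcM_zero, chiMul_zero]
      · rw [tgtM_zero, chiMul_zero]
    | @cut P Q R S α' β' γ hP hR ihP ihR =>
      intro k' l' N X hsem
      cases hsem with
      | seq hsemP hsemR =>
        rename_i n M X₁ N₂ Y₁
        obtain ⟨X', hsemQ, U, hfU, haU, hgU⟩ := ihP _ _ _ _ hsemP
        obtain ⟨Y', hsemS, V, hfV, hgV, hbV⟩ := ihR _ _ _ _ hsemR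
        have hγ : M.tgtM U = N₂.srcM V := chiMul_inj (by rw [← hgU, ← hgV])
        refine ⟨mmk X' Y', Sem.seq hsemQ hsemS, ?_⟩
        have := comp_slts M N₂ hfU hfV hγ
        rwa [← haU, ← hbV] at this
    | @ten P Q R S α₁ α₂ β₁ β₂ hP hR ihP ihR =>
      intro k' l' N X hsem
      cases hsem with
      | tens hsemP hsemR =>
        rename_i k₁ l₁ m₁ n₁ M N₂ X₁ Y₁
        obtain ⟨X', hsemQ, U, hfU, haU, hbU⟩ := ihP _ _ _ _ hsemP
        obtain ⟨Y', hsemS, V, hfV, haV, hbV⟩ := ihR _ _ _ _ hsemR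
        refine ⟨mmk X' Y', Sem.tens hsemQ hsemS, ?_⟩
        have := tensor_slts M N₂ hfU hfV
        rwa [← haU, ← haV, ← hbU, ← hbV] at this
  · intro T k l N X hsem
    induction hsem with
    | place n =>
      intro α β Y hlts
      obtain ⟨U, ⟨hf1, hf2, hf3⟩, ha, hb⟩ := hlts
      obtain ⟨a, b, hU⟩ : ∃ a b, U = Multiset.replicate a true + Multiset.replicate b false :=
        ⟨_, _, multiset_bool_eq U⟩
      subst hU
      obtain ⟨y, hY⟩ : ∃ y, Y = Multiset.replicate y () := ⟨_, multiset_unit_eq Y⟩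
      subst hY
      have hpre : bufNet.preM (Multiset.replicate a true + Multiset.replicate b false) =
          Multiset.replicate b () := by
        erw [preM_add, preM_replicate, preM_replicate,
          show bufNet.pre true = 0 from rfl, show bufNet.pre false = {()} from rfl,
          smul_zero, zero_add, Multiset.nsmul_singleton]
      have hpost : bufNet.postM (Multiset.replicate a true + Multiset.replicate b false) =
          Multiset.replicate a () := by
        erw [postM_add, postM_replicate, postM_replicate,
          show bufNet.post true = {()} from rfl, show bufNet.post false = 0 from rfl,
          smul_zero, add_zero, Multiset.nsmul_singleton]
      rw [hpre] at hf1 hf3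
      rw [hpost] at hf2 hf3
      have hf1' : (Multiset.replicate b () : Multiset Unit) ≤ Multiset.replicate n () := hf1
      have hf2' : (Multiset.replicate a () : Multiset Unit) ≤ Multiset.replicate y () := hf2
      have hbn : b ≤ n := (Multiset.replicate_le_replicate ()).mp hf1'
      have hay : a ≤ y := (Multiset.replicate_le_replicate ()).mp hf2'
      letI : DecidableEq Unit := Classical.decEq Unit
      have hf3' : (Multiset.replicate n () : Multiset Unit) - Multiset.replicate b () =
          Multiset.replicate y () - Multiset.replicate a () := hf3
      have hcard := congrArg Multiset.card hf3'
      rw [Multiset.card_sub ((Multiset.replicate_le_replicate ()).mpr hbn),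
        Multiset.card_sub ((Multiset.replicate_le_replicate ()).mpr hay)] at hcard
      simp only [Multiset.card_replicate] at hcard
      have ha' : α = [a] := by
        erw [ha, srcM_add, srcM_replicate, srcM_replicate]
        simp [chiMul_fin1, bufNet, Multiset.count_nsmul, Multiset.count_replicate]
      have hb' : β = [b] := by
        erw [hb, tgtM_add, tgtM_replicate, tgtM_replicate]
        simp [chiMul_fin1, bufNet, Multiset.count_nsmul, Multiset.count_replicate]
      refine ⟨.place (n + a - b), ?_, ?_⟩
      · rw [ha', hb']
        exact TTerm.Step.place hbn
      · have hy : y = n + a - b := by omega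
        rw [hy]
        exact Sem.place _
    | iden =>
      intro α β Y hlts
      obtain ⟨U, _, ha, hb⟩ := hlts
      have hY : Y = 0 := multiset_empty_eq Y
      subst hY
      obtain ⟨c, hU⟩ : ∃ c, U = Multiset.replicate c () := ⟨_, multiset_unit_eq U⟩
      subst hU
      have ha' : α = [c] := by
        erw [ha, srcM_replicate]
        simp [chiMul_fin0, chiMul_fin1, chiMul_fin2, idNet, Multiset.count_nsmul,
          Multiset.count_replicate]
      have hb' : β = [c] := by
        erw [hb, tgtM_replicate]
        simp [chiMul_fin0, chiMul_fin1, chiMul_fin2, idNet, Multiset.count_nsmul,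
          Multiset.count_replicate]
      rw [ha', hb']
      exact ⟨.iden, TTerm.Step.iden c, Sem.iden⟩
    | tw =>
      intro α β Y hlts
      obtain ⟨U, _, ha, hb⟩ := hlts
      have hY : Y = 0 := multiset_empty_eq Y
      subst hY
      obtain ⟨a, b, hU⟩ : ∃ a b, U = Multiset.replicate a true + Multiset.replicate b false :=
        ⟨_, _, multiset_bool_eq U⟩
      subst hU
      have ha' : α = [a, b] := by
        erw [ha, srcM_add, srcM_replicate, srcM_replicate]
        simp [chiMul_fin0, chiMul_fin1, chiMul_fin2, twNet, Multiset.count_nsmul,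
          Multiset.count_replicate]
      have hb' : β = [b, a] := by
        erw [hb, tgtM_add, tgtM_replicate, tgtM_replicate]
        simp [chiMul_fin0, chiMul_fin1, chiMul_fin2, twNet, Multiset.count_nsmul,
          Multiset.count_replicate]
      rw [ha', hb']
      exact ⟨.tw, TTerm.Step.tw a b, Sem.tw⟩
    | diag =>
      intro α β Y hlts
      obtain ⟨U, _, ha, hb⟩ := hlts
      have hY : Y = 0 := multiset_empty_eq Y
      subst hY
      obtain ⟨c, hU⟩ : ∃ c, U = Multiset.replicate c () := ⟨_, multiset_unit_eq U⟩
      subst hU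
      have ha' : α = [c] := by
        erw [ha, srcM_replicate]
        simp [chiMul_fin0, chiMul_fin1, chiMul_fin2, diagNet, Multiset.count_nsmul,
          Multiset.count_replicate]
      have hb' : β = [c, c] := by
        erw [hb, tgtM_replicate]
        simp [chiMul_fin0, chiMul_fin1, chiMul_fin2, diagNet, Multiset.count_nsmul,
          Multiset.count_replicate]
      rw [ha', hb']
      exact ⟨.diag, TTerm.Step.diag c, Sem.diag⟩
    | codiag =>
      intro α β Y hlts
      obtain ⟨U, _, ha, hb⟩ := hlts
      have hY : Y = 0 := multiset_empty_eq Y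
      subst hY
      obtain ⟨c, hU⟩ : ∃ c, U = Multiset.replicate c () := ⟨_, multiset_unit_eq U⟩
      subst hU
      have ha' : α = [c, c] := by
        erw [ha, srcM_replicate]
        simp [chiMul_fin0, chiMul_fin1, chiMul_fin2, codiagNet, Multiset.count_nsmul,
          Multiset.count_replicate]
      have hb' : β = [c] := by
        erw [hb, tgtM_replicate]
        simp [chiMul_fin0, chiMul_fin1, chiMul_fin2, codiagNet, Multiset.count_nsmul,
          Multiset.count_replicate]
      rw [ha', hb']
      exact ⟨.codiag, TTerm.Step.codiag c, Sem.codiag⟩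
    | bot =>
      intro α β Y hlts
      obtain ⟨U, _, ha, hb⟩ := hlts
      have hY : Y = 0 := multiset_empty_eq Y
      subst hY
      obtain ⟨c, hU⟩ : ∃ c, U = Multiset.replicate c () := ⟨_, multiset_unit_eq U⟩
      subst hU
      have ha' : α = [c] := by
        erw [ha, srcM_replicate]
        simp [chiMul_fin0, chiMul_fin1, chiMul_fin2, botNet, Multiset.count_nsmul,
          Multiset.count_replicate]
      have hb' : β = ([] : List ℕ) := by
        erw [hb, tgtM_replicate]
        simp [chiMul_fin0, chiMul_fin1, chiMul_fin2, botNet, Multiset.count_nsmul,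
          Multiset.count_replicate]
      rw [ha', hb']
      exact ⟨.bot, TTerm.Step.bot c, Sem.bot⟩
    | top =>
      intro α β Y hlts
      obtain ⟨U, _, ha, hb⟩ := hlts
      have hY : Y = 0 := multiset_empty_eq Y
      subst hY
      obtain ⟨c, hU⟩ : ∃ c, U = Multiset.replicate c () := ⟨_, multiset_unit_eq U⟩
      subst hU
      have ha' : α = ([] : List ℕ) := by
        erw [ha, srcM_replicate]
        simp [chiMul_fin0, chiMul_fin1, chiMul_fin2, topNet, Multiset.count_nsmul,
          Multiset.count_replicate]
      have hb' : β = [c] := by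
        erw [hb, tgtM_replicate]
        simp [chiMul_fin0, chiMul_fin1, chiMul_fin2, topNet, Multiset.count_nsmul,
          Multiset.count_replicate]
      rw [ha', hb']
      exact ⟨.top, TTerm.Step.top c, Sem.top⟩
    | lam =>
      intro α β Y hlts
      obtain ⟨U, _, ha, hb⟩ := hlts
      have hY : Y = 0 := multiset_empty_eq Y
      subst hY
      obtain ⟨a, b, hU⟩ : ∃ a b, U = Multiset.replicate a true + Multiset.replicate b false :=
        ⟨_, _, multiset_bool_eq U⟩
      subst hU
      have ha' : α = [a + b] := by
        erw [ha, srcM_add, srcM_replicate, srcM_replicate]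
        simp [chiMul_fin0, chiMul_fin1, chiMul_fin2, lamNet, Multiset.count_nsmul,
          Multiset.count_replicate]
      have hb' : β = [a, b] := by
        erw [hb, tgtM_add, tgtM_replicate, tgtM_replicate]
        simp [chiMul_fin0, chiMul_fin1, chiMul_fin2, lamNet, Multiset.count_nsmul,
          Multiset.count_replicate]
      rw [ha', hb']
      exact ⟨.lam, TTerm.Step.lam a b, Sem.lam⟩
    | vee =>
      intro α β Y hlts
      obtain ⟨U, _, ha, hb⟩ := hlts
      have hY : Y = 0 := multiset_empty_eq Y
      subst hY
      obtain ⟨a, b, hU⟩ : ∃ a b, U = Multiset.replicate a true + Multiset.replicate b false :=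
        ⟨_, _, multiset_bool_eq U⟩
      subst hU
      have ha' : α = [a, b] := by
        erw [ha, srcM_add, srcM_replicate, srcM_replicate]
        simp [chiMul_fin0, chiMul_fin1, chiMul_fin2, veeNet, Multiset.count_nsmul,
          Multiset.count_replicate]
      have hb' : β = [a + b] := by
        erw [hb, tgtM_add, tgtM_replicate, tgtM_replicate]
        simp [chiMul_fin0, chiMul_fin1, chiMul_fin2, veeNet, Multiset.count_nsmul,
          Multiset.count_replicate]
      rw [ha', hb']
      exact ⟨.vee, TTerm.Step.vee a b, Sem.vee⟩
    | down =>
      intro α β Y hlts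
      obtain ⟨U, _, ha, hb⟩ := hlts
      have hY : Y = 0 := multiset_empty_eq Y
      subst hY
      have hU : U = 0 := multiset_empty_eq U
      subst hU
      rw [srcM_zero, chiMul_zero] at ha
      rw [tgtM_zero, chiMul_zero] at hb
      rw [ha, hb]
      exact ⟨.down, TTerm.Step.refl trivial TTerm.HasSort.down, Sem.down⟩
    | up =>
      intro α β Y hlts
      obtain ⟨U, _, ha, hb⟩ := hlts
      have hY : Y = 0 := multiset_empty_eq Y
      subst hY
      have hU : U = 0 := multiset_empty_eq U
      subst hU
      rw [srcM_zero, chiMul_zero] at ha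
      rw [tgtM_zero, chiMul_zero] at hb
      rw [ha, hb]
      exact ⟨.up, TTerm.Step.refl trivial TTerm.HasSort.up, Sem.up⟩
    | @seq P R k₁ n₁ l₁ M N₂ X₁ Y₁ hsemP hsemR ihP ihR =>
      intro α β Y hlts
      obtain ⟨Z₁, Z₂, U, V, rfl, hfU, hfV, hγ, ha, hb⟩ := comp_slts_inv M N₂ hlts
      obtain ⟨Q, hstepQ, hsemQ⟩ := ihP α (chiMul (M.tgtM U)) Z₁ ⟨U, hfU, ha, rfl⟩
      obtain ⟨S, hstepS, hsemS⟩ := ihR (chiMul (M.tgtM U)) β Z₂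
        ⟨V, hfV, by rw [hγ], hb⟩
      exact ⟨.seq Q S, TTerm.Step.cut hstepQ hstepS, Sem.seq hsemQ hsemS⟩
    | @tens P R k₁ l₁ m₁ n₁ M N₂ X₁ Y₁ hsemP hsemR ihP ihR =>
      intro α β Y hlts
      obtain ⟨Z₁, Z₂, U, V, rfl, hfU, hfV, ha, hb⟩ := tensor_slts_inv M N₂ hlts
      obtain ⟨Q, hstepQ, hsemQ⟩ := ihP _ _ Z₁ ⟨U, hfU, rfl, rfl⟩
      obtain ⟨S, hstepS, hsemS⟩ := ihR _ _ Z₂ ⟨V, hfV, rfl, rfl⟩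
      rw [ha, hb]
      exact ⟨.tens Q S, TTerm.Step.ten hstepQ hstepS, Sem.tens hsemQ hsemS⟩
end

section
/- Define the right amplifier !k : (1,1) for k ∈ ℕ₊ by !1 := I and !(k+1) := Δ;(!k ⊗ I);V, and the left amplifier k! : (1,1) by 1! := I and (k+1)! := Λ;(I ⊗ k!);∇. Then for all a, b ∈ ℕ, under the weak semantics of the Petri calculus: !k ⇒a/b !k if and only if b = k·a, and k! ⇒a/b k! if and only if a = k·b. -/
/-- Syntax of the Petri calculus. -/
inductive PTerm : Type
  | empty               -- ○ (empty one-place buffer)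
  | full                -- ● (full one-place buffer)
  | iden                -- I
  | tw                  -- X
  | diag                -- Δ
  | codiag              -- ∇
  | bot                 -- ⊥
  | top                 -- ⊤
  | lam                 -- Λ
  | vee                 -- V
  | down                -- ↓
  | up                  -- ↑
  | tens (P Q : PTerm)  -- ⊗
  | seq (P Q : PTerm)   -- ;
  deriving DecidableEq

namespace PTerm

/-- Sorting discipline of the Petri calculus. -/
inductive HasSort : PTerm → ℕ → ℕ → Prop
  | empty : HasSort .empty 1 1
  | full : HasSort .full 1 1
  | iden : HasSort .iden 1 1
  | tw : HasSort .tw 2 2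
  | diag : HasSort .diag 1 2
  | codiag : HasSort .codiag 2 1
  | bot : HasSort .bot 1 0
  | top : HasSort .top 0 1
  | lam : HasSort .lam 1 2
  | vee : HasSort .vee 2 1
  | down : HasSort .down 1 0
  | up : HasSort .up 0 1
  | tens {P Q : PTerm} {k l m n : ℕ} :
      HasSort P k l → HasSort Q m n → HasSort (.tens P Q) (k + m) (l + n)
  | seq {P Q : PTerm} {k n l : ℕ} :
      HasSort P k n → HasSort Q n l → HasSort (.seq P Q) k l

/-- Basic connectors are the constants of the calculus. -/
def IsBasic : PTerm → Prop
  | .tens _ _ => False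
  | .seq _ _ => False
  | _ => True

/-- Stateless terms contain no buffers ○, ●. -/
def Stateless : PTerm → Prop
  | .empty => False
  | .full => False
  | .tens P Q => Stateless P ∧ Stateless Q
  | .seq P Q => Stateless P ∧ Stateless Q
  | _ => True

/-- Strong operational semantics of the Petri calculus.  Labels are words
over ℕ (the rules only produce entries in {0,1}). -/
inductive Step : PTerm → List ℕ → List ℕ → PTerm → Prop
  | tkI : Step .empty [1] [0] .full
  | tkO : Step .full [0] [1] .empty
  | iden : Step .iden [1] [1] .iden
  | tw {a b : ℕ} : a ≤ 1 → b ≤ 1 → Step .tw [a, b] [b, a] .tw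
  | bot : Step .bot [1] [] .bot
  | top : Step .top [] [1] .top
  | diag : Step .diag [1] [1, 1] .diag
  | codiag : Step .codiag [1, 1] [1] .codiag
  | lam {a : ℕ} : a ≤ 1 → Step .lam [1] [1 - a, a] .lam
  | vee {a : ℕ} : a ≤ 1 → Step .vee [1 - a, a] [1] .vee
  | refl {C : PTerm} {k l : ℕ} : IsBasic C → HasSort C k l →
      Step C (List.replicate k 0) (List.replicate l 0) C
  | cut {P Q R S : PTerm} {α β γ : List ℕ} :
      Step P α γ Q → Step R γ β S → Step (.seq P R) α β (.seq Q S)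
  | ten {P Q R S : PTerm} {α₁ α₂ β₁ β₂ : List ℕ} :
      Step P α₁ β₁ Q → Step R α₂ β₂ S →
      Step (.tens P R) (α₁ ++ α₂) (β₁ ++ β₂) (.tens Q S)

/-- Weak operational semantics of the Petri calculus: the same rules plus the
rule (Weak) composing consecutive steps by pointwise addition of labels. -/
inductive Weak : PTerm → List ℕ → List ℕ → PTerm → Prop
  | tkI : Weak .empty [1] [0] .full
  | tkO : Weak .full [0] [1] .empty
  | iden : Weak .iden [1] [1] .iden
  | tw {a b : ℕ} : a ≤ 1 → b ≤ 1 → Weak .tw [a, b] [b, a] .tw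
  | bot : Weak .bot [1] [] .bot
  | top : Weak .top [] [1] .top
  | diag : Weak .diag [1] [1, 1] .diag
  | codiag : Weak .codiag [1, 1] [1] .codiag
  | lam {a : ℕ} : a ≤ 1 → Weak .lam [1] [1 - a, a] .lam
  | vee {a : ℕ} : a ≤ 1 → Weak .vee [1 - a, a] [1] .vee
  | refl {C : PTerm} {k l : ℕ} : IsBasic C → HasSort C k l →
      Weak C (List.replicate k 0) (List.replicate l 0) C
  | cut {P Q R S : PTerm} {α β γ : List ℕ} :
      Weak P α γ Q → Weak R γ β S → Weak (.seq P R) α β (.seq Q S)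
  | ten {P Q R S : PTerm} {α₁ α₂ β₁ β₂ : List ℕ} :
      Weak P α₁ β₁ Q → Weak R α₂ β₂ S →
      Weak (.tens P R) (α₁ ++ α₂) (β₁ ++ β₂) (.tens Q S)
  | weak {P R Q : PTerm} {α₁ α₂ β₁ β₂ : List ℕ} :
      Weak P α₁ β₁ R → Weak R α₂ β₂ Q →
      Weak P (List.zipWith (· + ·) α₁ α₂) (List.zipWith (· + ·) β₁ β₂) Q

end PTerm

namespace PTerm

/-- Right amplifier `!k : (1,1)`: `!1 = I`, `!(k+1) = Δ;(!k ⊗ I);V`. -/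
def ramp : ℕ → PTerm
  | 0 => .iden
  | 1 => .iden
  | (k + 2) => .seq (.seq .diag (.tens (ramp (k + 1)) .iden)) .vee

/-- Left amplifier `k! : (1,1)`: `1! = I`, `(k+1)! = Λ;(I ⊗ k!);∇`. -/
def lamp : ℕ → PTerm
  | 0 => .iden
  | 1 => .iden
  | (k + 2) => .seq (.seq .lam (.tens .iden (lamp (k + 1)))) .codiag

/-- Semantic specification of weak steps for stateless terms. -/
def Spec : PTerm → List ℕ → List ℕ → Prop
  | .empty, _, _ => True
  | .full, _, _ => True
  | .iden, α, β => ∃ n, α = [n] ∧ β = [n]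
  | .tw, α, β => ∃ m n, α = [m, n] ∧ β = [n, m]
  | .diag, α, β => ∃ n, α = [n] ∧ β = [n, n]
  | .codiag, α, β => ∃ n, α = [n, n] ∧ β = [n]
  | .bot, α, β => ∃ n, α = [n] ∧ β = []
  | .top, α, β => ∃ n, α = [] ∧ β = [n]
  | .lam, α, β => ∃ m n, α = [m + n] ∧ β = [m, n]
  | .vee, α, β => ∃ m n, α = [m, n] ∧ β = [m + n]
  | .down, α, β => α = [0] ∧ β = []
  | .up, α, β => α = [] ∧ β = [0]
  | .tens P Q, α, β => ∃ α₁ α₂ β₁ β₂, α = α₁ ++ α₂ ∧ β = β₁ ++ β₂ ∧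
      Spec P α₁ β₁ ∧ Spec Q α₂ β₂
  | .seq P Q, α, β => ∃ γ, Spec P α γ ∧ Spec Q γ β

def ins : PTerm → ℕ
  | .top => 0
  | .up => 0
  | .tw => 2
  | .codiag => 2
  | .vee => 2
  | .tens P Q => ins P + ins Q
  | .seq P _ => ins P
  | _ => 1

def outs : PTerm → ℕ
  | .bot => 0
  | .down => 0
  | .tw => 2
  | .diag => 2
  | .lam => 2
  | .tens P Q => outs P + outs Q
  | .seq _ Q => outs Q
  | _ => 1

lemma spec_len : ∀ P, Stateless P → ∀ α β, Spec P α β →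
    α.length = ins P ∧ β.length = outs P := by
  intro P
  induction P with
  | empty => exact fun h => h.elim
  | full => exact fun h => h.elim
  | tens P Q ihP ihQ =>
    rintro ⟨hP, hQ⟩ α β ⟨α₁, α₂, β₁, β₂, rfl, rfl, h1, h2⟩
    obtain ⟨l1, l2⟩ := ihP hP _ _ h1
    obtain ⟨l3, l4⟩ := ihQ hQ _ _ h2
    simp [ins, outs, l1, l2, l3, l4]
  | seq P Q ihP ihQ =>
    rintro ⟨hP, hQ⟩ α β ⟨γ, h1, h2⟩
    exact ⟨(ihP hP _ _ h1).1, (ihQ hQ _ _ h2).2⟩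
  | iden => rintro _ α β ⟨n, rfl, rfl⟩; simp [ins, outs]
  | tw => rintro _ α β ⟨m, n, rfl, rfl⟩; simp [ins, outs]
  | diag => rintro _ α β ⟨n, rfl, rfl⟩; simp [ins, outs]
  | codiag => rintro _ α β ⟨n, rfl, rfl⟩; simp [ins, outs]
  | bot => rintro _ α β ⟨n, rfl, rfl⟩; simp [ins, outs]
  | top => rintro _ α β ⟨n, rfl, rfl⟩; simp [ins, outs]
  | lam => rintro _ α β ⟨m, n, rfl, rfl⟩; simp [ins, outs]
  | vee => rintro _ α β ⟨m, n, rfl, rfl⟩; simp [ins, outs]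
  | down => rintro _ α β ⟨rfl, rfl⟩; simp [ins, outs]
  | up => rintro _ α β ⟨rfl, rfl⟩; simp [ins, outs]

lemma spec_add : ∀ P, Stateless P → ∀ α β α' β', Spec P α β → Spec P α' β' →
    Spec P (List.zipWith (· + ·) α α') (List.zipWith (· + ·) β β') := by
  intro P
  induction P with
  | empty => exact fun h => h.elim
  | full => exact fun h => h.elim
  | tens P Q ihP ihQ =>
    rintro ⟨hP, hQ⟩ α β α' β' ⟨α₁, α₂, β₁, β₂, rfl, rfl, h1, h2⟩
      ⟨α₁', α₂', β₁', β₂', rfl, rfl, h1', h2'⟩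
    have la : α₁.length = α₁'.length := by
      rw [(spec_len P hP _ _ h1).1, (spec_len P hP _ _ h1').1]
    have lb : β₁.length = β₁'.length := by
      rw [(spec_len P hP _ _ h1).2, (spec_len P hP _ _ h1').2]
    rw [List.zipWith_append la, List.zipWith_append lb]
    exact ⟨_, _, _, _, rfl, rfl, ihP hP _ _ _ _ h1 h1', ihQ hQ _ _ _ _ h2 h2'⟩
  | seq P Q ihP ihQ =>
    rintro ⟨hP, hQ⟩ α β α' β' ⟨γ, h1, h2⟩ ⟨γ', h1', h2'⟩
    exact ⟨_, ihP hP _ _ _ _ h1 h1', ihQ hQ _ _ _ _ h2 h2'⟩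
  | iden =>
    rintro _ α β α' β' ⟨n, rfl, rfl⟩ ⟨n', rfl, rfl⟩
    exact ⟨n + n', rfl, rfl⟩
  | tw =>
    rintro _ α β α' β' ⟨m, n, rfl, rfl⟩ ⟨m', n', rfl, rfl⟩
    exact ⟨m + m', n + n', rfl, rfl⟩
  | diag =>
    rintro _ α β α' β' ⟨n, rfl, rfl⟩ ⟨n', rfl, rfl⟩
    exact ⟨n + n', rfl, rfl⟩
  | codiag =>
    rintro _ α β α' β' ⟨n, rfl, rfl⟩ ⟨n', rfl, rfl⟩
    exact ⟨n + n', rfl, rfl⟩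
  | bot =>
    rintro _ α β α' β' ⟨n, rfl, rfl⟩ ⟨n', rfl, rfl⟩
    exact ⟨n + n', rfl, rfl⟩
  | top =>
    rintro _ α β α' β' ⟨n, rfl, rfl⟩ ⟨n', rfl, rfl⟩
    exact ⟨n + n', rfl, rfl⟩
  | lam =>
    rintro _ α β α' β' ⟨m, n, rfl, rfl⟩ ⟨m', n', rfl, rfl⟩
    exact ⟨m + m', n + n', by simp; omega, rfl⟩
  | vee =>
    rintro _ α β α' β' ⟨m, n, rfl, rfl⟩ ⟨m', n', rfl, rfl⟩
    exact ⟨m + m', n + n', rfl, by simp; omega⟩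
  | down =>
    rintro _ α β α' β' ⟨rfl, rfl⟩ ⟨rfl, rfl⟩
    exact ⟨rfl, rfl⟩
  | up =>
    rintro _ α β α' β' ⟨rfl, rfl⟩ ⟨rfl, rfl⟩
    exact ⟨rfl, rfl⟩

lemma weak_sound {P Q : PTerm} {α β : List ℕ} (h : Weak P α β Q) :
    Stateless P → Spec P α β ∧ Q = P := by
  induction h with
  | tkI => exact fun h => h.elim
  | tkO => exact fun h => h.elim
  | iden => exact fun _ => ⟨⟨1, rfl, rfl⟩, rfl⟩
  | @tw a b ha hb => exact fun _ => ⟨⟨a, b, rfl, rfl⟩, rfl⟩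
  | bot => exact fun _ => ⟨⟨1, rfl, rfl⟩, rfl⟩
  | top => exact fun _ => ⟨⟨1, rfl, rfl⟩, rfl⟩
  | diag => exact fun _ => ⟨⟨1, rfl, rfl⟩, rfl⟩
  | codiag => exact fun _ => ⟨⟨1, rfl, rfl⟩, rfl⟩
  | @lam a ha => exact fun _ => ⟨⟨1 - a, a, by rw [Nat.sub_add_cancel ha], rfl⟩, rfl⟩
  | @vee a ha => exact fun _ => ⟨⟨1 - a, a, rfl, by rw [Nat.sub_add_cancel ha]⟩, rfl⟩
  | refl hb hs =>
    intro _
    refine ⟨?_, rfl⟩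
    cases hs <;>
      first
        | exact hb.elim
        | trivial
        | exact ⟨0, rfl, rfl⟩
        | exact ⟨0, 0, rfl, rfl⟩
  | cut h1 h2 ih1 ih2 =>
    rintro ⟨hP, hR⟩
    obtain ⟨s1, rfl⟩ := ih1 hP
    obtain ⟨s2, rfl⟩ := ih2 hR
    exact ⟨⟨_, s1, s2⟩, rfl⟩
  | ten h1 h2 ih1 ih2 =>
    rintro ⟨hP, hR⟩
    obtain ⟨s1, rfl⟩ := ih1 hP
    obtain ⟨s2, rfl⟩ := ih2 hR
    exact ⟨⟨_, _, _, _, rfl, rfl, s1, s2⟩, rfl⟩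
  | weak h1 h2 ih1 ih2 =>
    intro hP
    obtain ⟨s1, rfl⟩ := ih1 hP
    obtain ⟨s2, rfl⟩ := ih2 hP
    exact ⟨spec_add _ hP _ _ _ _ s1 s2, rfl⟩

lemma weak_iden (n : ℕ) : Weak .iden [n] [n] .iden := by
  induction n with
  | zero => simpa using Weak.refl (C := .iden) trivial HasSort.iden
  | succ n ih => simpa using Weak.weak ih Weak.iden

lemma weak_diag (n : ℕ) : Weak .diag [n] [n, n] .diag := by
  induction n with
  | zero =>
    have := Weak.refl (C := .diag) trivial HasSort.diag
    simpa [List.replicate] using this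
  | succ n ih => simpa using Weak.weak ih Weak.diag

lemma weak_codiag (n : ℕ) : Weak .codiag [n, n] [n] .codiag := by
  induction n with
  | zero =>
    have := Weak.refl (C := .codiag) trivial HasSort.codiag
    simpa [List.replicate] using this
  | succ n ih => simpa using Weak.weak ih Weak.codiag

lemma weak_bot (n : ℕ) : Weak .bot [n] [] .bot := by
  induction n with
  | zero => simpa using Weak.refl (C := .bot) trivial HasSort.bot
  | succ n ih => simpa using Weak.weak ih Weak.bot

lemma weak_top (n : ℕ) : Weak .top [] [n] .top := by
  induction n with
  | zero => simpa using Weak.refl (C := .top) trivial HasSort.top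
  | succ n ih => simpa using Weak.weak ih Weak.top

lemma weak_tw (m n : ℕ) : Weak .tw [m, n] [n, m] .tw := by
  induction m with
  | zero =>
    induction n with
    | zero =>
      have := Weak.refl (C := .tw) trivial HasSort.tw
      simpa [List.replicate] using this
    | succ n ih =>
      simpa using Weak.weak ih (Weak.tw (a := 0) (b := 1) (by omega) (by omega))
  | succ m ih =>
    simpa using Weak.weak ih (Weak.tw (a := 1) (b := 0) (by omega) (by omega))

lemma weak_lam (m n : ℕ) : Weak .lam [m + n] [m, n] .lam := by
  induction m with
  | zero =>
    induction n with
    | zero =>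
      have := Weak.refl (C := .lam) trivial HasSort.lam
      simpa [List.replicate] using this
    | succ n ih =>
      have := Weak.weak ih (Weak.lam (a := 1) (by omega))
      simpa using this
  | succ m ih =>
    have := Weak.weak ih (Weak.lam (a := 0) (by omega))
    have e : m + n + 1 = m + 1 + n := by omega
    simpa [e] using this

lemma weak_vee (m n : ℕ) : Weak .vee [m, n] [m + n] .vee := by
  induction m with
  | zero =>
    induction n with
    | zero =>
      have := Weak.refl (C := .vee) trivial HasSort.vee
      simpa [List.replicate] using this
    | succ n ih =>
      have := Weak.weak ih (Weak.vee (a := 1) (by omega))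
      simpa using this
  | succ m ih =>
    have := Weak.weak ih (Weak.vee (a := 0) (by omega))
    have e : m + n + 1 = m + 1 + n := by omega
    simpa [e] using this

lemma weak_complete : ∀ P, Stateless P → ∀ α β, Spec P α β → Weak P α β P := by
  intro P
  induction P with
  | empty => exact fun h => h.elim
  | full => exact fun h => h.elim
  | iden => rintro _ α β ⟨n, rfl, rfl⟩; exact weak_iden n
  | tw => rintro _ α β ⟨m, n, rfl, rfl⟩; exact weak_tw m n
  | diag => rintro _ α β ⟨n, rfl, rfl⟩; exact weak_diag n
  | codiag => rintro _ α β ⟨n, rfl, rfl⟩; exact weak_codiag n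
  | bot => rintro _ α β ⟨n, rfl, rfl⟩; exact weak_bot n
  | top => rintro _ α β ⟨n, rfl, rfl⟩; exact weak_top n
  | lam => rintro _ α β ⟨m, n, rfl, rfl⟩; exact weak_lam m n
  | vee => rintro _ α β ⟨m, n, rfl, rfl⟩; exact weak_vee m n
  | down =>
    rintro _ α β ⟨rfl, rfl⟩
    simpa using Weak.refl (C := .down) trivial HasSort.down
  | up =>
    rintro _ α β ⟨rfl, rfl⟩
    simpa using Weak.refl (C := .up) trivial HasSort.up
  | tens P Q ihP ihQ =>
    rintro ⟨hP, hQ⟩ α β ⟨α₁, α₂, β₁, β₂, rfl, rfl, h1, h2⟩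
    exact Weak.ten (ihP hP _ _ h1) (ihQ hQ _ _ h2)
  | seq P Q ihP ihQ =>
    rintro ⟨hP, hQ⟩ α β ⟨γ, h1, h2⟩
    exact Weak.cut (ihP hP _ _ h1) (ihQ hQ _ _ h2)

lemma stateless_ramp (k : ℕ) : Stateless (ramp k) := by
  induction k using ramp.induct with
  | case1 => trivial
  | case2 => trivial
  | case3 k ih => exact ⟨⟨trivial, ih, trivial⟩, trivial⟩

lemma stateless_lamp (k : ℕ) : Stateless (lamp k) := by
  induction k using lamp.induct with
  | case1 => trivial
  | case2 => trivial
  | case3 k ih => exact ⟨⟨trivial, trivial, ih⟩, trivial⟩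

lemma ins_ramp (k : ℕ) : ins (ramp (k + 1)) = 1 := by
  cases k <;> rfl

lemma outs_ramp (k : ℕ) : outs (ramp (k + 1)) = 1 := by
  cases k <;> rfl

lemma ins_lamp (k : ℕ) : ins (lamp (k + 1)) = 1 := by
  cases k <;> rfl

lemma outs_lamp (k : ℕ) : outs (lamp (k + 1)) = 1 := by
  cases k <;> rfl

lemma spec_ramp (k : ℕ) (a b : ℕ) :
    Spec (ramp (k + 1)) [a] [b] ↔ b = (k + 1) * a := by
  induction k generalizing a b with
  | zero =>
    constructor
    · rintro ⟨n, h1, h2⟩; simp_all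
    · rintro rfl; exact ⟨a, rfl, by simp⟩
  | succ k ih =>
    constructor
    · rintro ⟨γ, ⟨δ, ⟨n, hδ1, rfl⟩, ⟨α₁, α₂, β₁, β₂, hsplit, rfl, h1, h2⟩⟩, hv⟩
      obtain ⟨n₂, rfl, rfl⟩ := h2
      obtain ⟨x, rfl⟩ := List.length_eq_one_iff.mp (by
        rw [(spec_len _ (stateless_ramp (k + 1)) _ _ h1).1, ins_ramp])
      obtain ⟨y, rfl⟩ := List.length_eq_one_iff.mp (by
        rw [(spec_len _ (stateless_ramp (k + 1)) _ _ h1).2, outs_ramp])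
      have hy := (ih x y).mp h1
      obtain ⟨m, n', hγ2, hb⟩ := hv
      injection hδ1 with e1 _
      injection hb with e2 _
      simp only [List.cons_append, List.nil_append, List.cons.injEq] at hsplit hγ2
      obtain ⟨e3, e4, -⟩ := hsplit
      obtain ⟨e5, e6, -⟩ := hγ2
      subst_vars
      ring
    · rintro rfl
      refine ⟨[(k + 1) * a, a], ⟨[a, a], ⟨a, rfl, rfl⟩,
        ⟨[a], [a], [(k + 1) * a], [a], rfl, rfl, (ih a _).mpr rfl,
          ⟨a, rfl, rfl⟩⟩⟩, ⟨(k + 1) * a, a, rfl, by rw [List.cons.injEq]; constructor <;> ring_nf⟩⟩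

lemma spec_lamp (k : ℕ) (a b : ℕ) :
    Spec (lamp (k + 1)) [a] [b] ↔ a = (k + 1) * b := by
  induction k generalizing a b with
  | zero =>
    constructor
    · rintro ⟨n, h1, h2⟩; simp_all
    · rintro rfl; exact ⟨b, by simp, rfl⟩
  | succ k ih =>
    constructor
    · rintro ⟨γ, ⟨δ, ⟨m, n, ha, rfl⟩, ⟨α₁, α₂, β₁, β₂, hsplit, rfl, h1, h2⟩⟩, hc⟩
      obtain ⟨m', rfl, rfl⟩ := h1
      obtain ⟨x, rfl⟩ := List.length_eq_one_iff.mp (by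
        rw [(spec_len _ (stateless_lamp (k + 1)) _ _ h2).1, ins_lamp])
      obtain ⟨y, rfl⟩ := List.length_eq_one_iff.mp (by
        rw [(spec_len _ (stateless_lamp (k + 1)) _ _ h2).2, outs_lamp])
      have hy := (ih x y).mp h2
      obtain ⟨c, hγ2, hb⟩ := hc
      injection ha with e1 _
      injection hb with e2 _
      simp only [List.cons_append, List.nil_append, List.cons.injEq] at hsplit hγ2
      obtain ⟨e3, e4, -⟩ := hsplit
      obtain ⟨e5, e6, -⟩ := hγ2
      subst_vars
      ring
    · rintro rfl
      refine ⟨[b, b], ⟨[b, (k + 1) * b], ⟨b, (k + 1) * b,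
        by rw [List.cons.injEq]; constructor <;> ring_nf, rfl⟩,
        ⟨[b], [(k + 1) * b], [b], [b], rfl, rfl, ⟨b, rfl, rfl⟩,
          (ih _ b).mpr rfl⟩⟩, ⟨b, rfl, rfl⟩⟩

end PTerm

/-- Lemma `amplifiers`: under the weak semantics of the
Petri calculus, the right amplifier `!k` multiplies its trigger by `k`
(`!k ⇒a/b !k` iff `b = k·a`), and dually for the left amplifier `k!`. -/
theorem stmt18 (k : ℕ) (hk : 1 ≤ k) (a b : ℕ) :
    (PTerm.Weak (PTerm.ramp k) [a] [b] (PTerm.ramp k) ↔ b = k * a) ∧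
    (PTerm.Weak (PTerm.lamp k) [a] [b] (PTerm.lamp k) ↔ a = k * b) := by
  obtain ⟨j, rfl⟩ : ∃ j, k = j + 1 := ⟨k - 1, by omega⟩
  constructor
  · constructor
    · intro h
      exact (PTerm.spec_ramp j a b).mp
        (PTerm.weak_sound h (PTerm.stateless_ramp _)).1
    · intro h
      exact PTerm.weak_complete _ (PTerm.stateless_ramp _) _ _
        ((PTerm.spec_ramp j a b).mpr h)
  · constructor
    · intro h
      exact (PTerm.spec_lamp j a b).mp
        (PTerm.weak_sound h (PTerm.stateless_lamp _)).1
    · intro h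
      exact PTerm.weak_complete _ (PTerm.stateless_lamp _) _ _
        ((PTerm.spec_lamp j a b).mpr h)
end

section
/- For every finite C/E net with boundaries N : m → n with set of places P, there exists a family (T_X)_{X⊆P} of Petri calculus terms, each of sort (m, n), such that for all markings X, Y ⊆ P and all α ∈ {0,1}^m, β ∈ {0,1}^n: (i) if N_X −α/β→ N_Y in the labelled semantics of C/E nets, then T_X −α/β→ T_Y in the strong semantics of the Petri calculus; and (ii) if T_X −α/β→ Q for some term Q, then Q = T_Y for some Y ⊆ P with N_X −α/β→ N_Y. -/
/-- A C/E net with boundaries `m → n` (contention given as a plain relation;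
the well-formedness conditions are collected in `CENet.Valid`). -/
structure CENet (m n : ℕ) : Type 1 where
  P : Type
  T : Type
  pre : T → Set P
  post : T → Set P
  src : T → Set (Fin m)
  tgt : T → Set (Fin n)
  conten : T → T → Prop

namespace CENet

variable {k l m n : ℕ}

def preS (N : CENet m n) (U : Set N.T) : Set N.P := ⋃ t ∈ U, N.pre t
def postS (N : CENet m n) (U : Set N.T) : Set N.P := ⋃ t ∈ U, N.post t
def srcS (N : CENet m n) (U : Set N.T) : Set (Fin m) := ⋃ t ∈ U, N.src t
def tgtS (N : CENet m n) (U : Set N.T) : Set (Fin n) := ⋃ t ∈ U, N.tgt t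

/-- A set of transitions is mutually independent when no two distinct
members are in contention. -/
def MutInd (N : CENet m n) (U : Set N.T) : Prop :=
  ∀ t ∈ U, ∀ u ∈ U, t ≠ u → ¬ N.conten t u

/-- Well-formedness of a C/E net with boundaries: finiteness, the contention
relation is symmetric, irreflexive and contains all non-independent pairs and
all pairs sharing a boundary port, and transitions have distinct footprints. -/
def Valid (N : CENet m n) : Prop :=
  Finite N.P ∧ Finite N.T ∧
  (∀ t u : N.T, N.conten t u → N.conten u t) ∧
  (∀ t : N.T, ¬ N.conten t t) ∧
  (∀ t u : N.T, t ≠ u → (N.pre t ∩ N.pre u).Nonempty → N.conten t u) ∧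
  (∀ t u : N.T, t ≠ u → (N.post t ∩ N.post u).Nonempty → N.conten t u) ∧
  (∀ t u : N.T, t ≠ u → (N.src t ∩ N.src u).Nonempty → N.conten t u) ∧
  (∀ t u : N.T, t ≠ u → (N.tgt t ∩ N.tgt u).Nonempty → N.conten t u) ∧
  (∀ t u : N.T, N.pre t = N.pre u → N.post t = N.post u →
     N.src t = N.src u → N.tgt t = N.tgt u → t = u)

/-- C/E firing: `N_X →_U N_Y`. -/
def Fire (N : CENet m n) (X : Set N.P) (U : Set N.T) (Y : Set N.P) : Prop :=
  N.MutInd U ∧ N.preS U ⊆ X ∧ N.postS U ∩ X = ∅ ∧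
    Y = (X \ N.preS U) ∪ N.postS U

/-- Labelled semantics of C/E nets with boundaries (labels as subsets of
ports, i.e. elements of `{0,1}^m` via characteristic functions). -/
def Lts (N : CENet m n) (X : Set N.P) (α : Set (Fin m)) (β : Set (Fin n))
    (Y : Set N.P) : Prop :=
  ∃ U : Set N.T, N.Fire X U Y ∧ α = N.srcS U ∧ β = N.tgtS U

/-- Synchronisation between C/E nets with a common boundary. -/
def Synch (M : CENet l m) (N : CENet m n) (U : Set M.T) (V : Set N.T) : Prop :=
  M.MutInd U ∧ N.MutInd V ∧ ¬(U = ∅ ∧ V = ∅) ∧ M.tgtS U = N.srcS V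

/-- Minimal synchronisation. -/
def MinSynch (M : CENet l m) (N : CENet m n) (U : Set M.T) (V : Set N.T) : Prop :=
  Synch M N U V ∧
    ∀ U' V', Synch M N U' V' → U' ⊆ U → V' ⊆ V → U' = U ∧ V' = V

end CENet
open Classical in
/-- Characteristic word `χ(S) ∈ {0,1}^k` of a subset `S ⊆ Fin k`. -/
noncomputable def chiSet {k : ℕ} (S : Set (Fin k)) : List ℕ :=
  (List.finRange k).map fun i => if i ∈ S then 1 else 0

namespace CENet

/-- Labelled semantics of C/E nets with boundaries, with labels presented as
binary words (via the characteristic function `chiSet`). -/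
def LtsL {m n : ℕ} (N : CENet m n) (X : Set N.P) (a b : List ℕ)
    (Y : Set N.P) : Prop :=
  ∃ U : Set N.T, N.Fire X U Y ∧ a = chiSet (N.srcS U) ∧ b = chiSet (N.tgtS U)

end CENet

namespace PTerm

/-! ### Step characterisations for the generators -/

lemma step_seq {P R : PTerm} {a b : List ℕ} {Q : PTerm} :
    Step (.seq P R) a b Q ↔
      ∃ Q₁ Q₂ γ, Q = .seq Q₁ Q₂ ∧ Step P a γ Q₁ ∧ Step R γ b Q₂ := by
  constructor
  · intro h
    cases h with
    | refl hb _ => exact hb.elim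
    | cut h1 h2 => exact ⟨_, _, _, rfl, h1, h2⟩
  · rintro ⟨Q₁, Q₂, γ, rfl, h1, h2⟩
    exact .cut h1 h2

lemma step_tens {P R : PTerm} {a b : List ℕ} {Q : PTerm} :
    Step (.tens P R) a b Q ↔
      ∃ Q₁ Q₂ a₁ a₂ b₁ b₂, Q = .tens Q₁ Q₂ ∧ a = a₁ ++ a₂ ∧ b = b₁ ++ b₂ ∧
        Step P a₁ b₁ Q₁ ∧ Step R a₂ b₂ Q₂ := by
  constructor
  · intro h
    cases h with
    | refl hb _ => exact hb.elim
    | ten h1 h2 => exact ⟨_, _, _, _, _, _, rfl, rfl, rfl, h1, h2⟩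
  · rintro ⟨Q₁, Q₂, a₁, a₂, b₁, b₂, rfl, rfl, rfl, h1, h2⟩
    exact .ten h1 h2

lemma step_iden {a b : List ℕ} {Q : PTerm} :
    Step .iden a b Q ↔ Q = .iden ∧ ∃ x, x ≤ 1 ∧ a = [x] ∧ b = [x] := by
  constructor
  · intro h
    cases h with
    | iden => exact ⟨rfl, 1, le_refl _, rfl, rfl⟩
    | refl hb hs => cases hs; exact ⟨rfl, 0, by omega, rfl, rfl⟩
  · rintro ⟨rfl, x, hx, rfl, rfl⟩
    interval_cases x
    · exact Step.refl (C := .iden) trivial .iden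
    · exact .iden

lemma step_tw {a b : List ℕ} {Q : PTerm} :
    Step .tw a b Q ↔ Q = .tw ∧ ∃ x y, x ≤ 1 ∧ y ≤ 1 ∧ a = [x, y] ∧ b = [y, x] := by
  constructor
  · intro h
    cases h with
    | tw hx hy => exact ⟨rfl, _, _, hx, hy, rfl, rfl⟩
    | refl hb hs => cases hs; exact ⟨rfl, 0, 0, by omega, by omega, rfl, rfl⟩
  · rintro ⟨rfl, x, y, hx, hy, rfl, rfl⟩
    exact .tw hx hy

lemma step_empty {a b : List ℕ} {Q : PTerm} :
    Step .empty a b Q ↔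
      (Q = .empty ∧ a = [0] ∧ b = [0]) ∨ (Q = .full ∧ a = [1] ∧ b = [0]) := by
  constructor
  · intro h
    cases h with
    | tkI => exact Or.inr ⟨rfl, rfl, rfl⟩
    | refl hb hs => cases hs; exact Or.inl ⟨rfl, rfl, rfl⟩
  · rintro (⟨rfl, rfl, rfl⟩ | ⟨rfl, rfl, rfl⟩)
    · exact Step.refl (C := .empty) trivial .empty
    · exact .tkI

lemma step_full {a b : List ℕ} {Q : PTerm} :
    Step .full a b Q ↔
      (Q = .full ∧ a = [0] ∧ b = [0]) ∨ (Q = .empty ∧ a = [0] ∧ b = [1]) := by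
  constructor
  · intro h
    cases h with
    | tkO => exact Or.inr ⟨rfl, rfl, rfl⟩
    | refl hb hs => cases hs; exact Or.inl ⟨rfl, rfl, rfl⟩
  · rintro (⟨rfl, rfl, rfl⟩ | ⟨rfl, rfl, rfl⟩)
    · exact Step.refl (C := .full) trivial .full
    · exact .tkO

lemma step_top {a b : List ℕ} {Q : PTerm} :
    Step .top a b Q ↔ Q = .top ∧ a = [] ∧ ∃ z, z ≤ 1 ∧ b = [z] := by
  constructor
  · intro h
    cases h with
    | top => exact ⟨rfl, rfl, 1, le_refl _, rfl⟩
    | refl hb hs => cases hs; exact ⟨rfl, rfl, 0, by omega, rfl⟩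
  · rintro ⟨rfl, rfl, z, hz, rfl⟩
    interval_cases z
    · exact Step.refl (C := .top) trivial .top
    · exact .top

lemma step_bot {a b : List ℕ} {Q : PTerm} :
    Step .bot a b Q ↔ Q = .bot ∧ b = [] ∧ ∃ z, z ≤ 1 ∧ a = [z] := by
  constructor
  · intro h
    cases h with
    | bot => exact ⟨rfl, rfl, 1, le_refl _, rfl⟩
    | refl hb hs => cases hs; exact ⟨rfl, rfl, 0, by omega, rfl⟩
  · rintro ⟨rfl, rfl, z, hz, rfl⟩
    interval_cases z
    · exact Step.refl (C := .bot) trivial .bot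
    · exact .bot

lemma step_up {a b : List ℕ} {Q : PTerm} :
    Step .up a b Q ↔ Q = .up ∧ a = [] ∧ b = [0] := by
  constructor
  · intro h
    cases h with
    | refl hb hs => cases hs; exact ⟨rfl, rfl, rfl⟩
  · rintro ⟨rfl, rfl, rfl⟩
    exact Step.refl (C := .up) trivial .up

lemma step_down {a b : List ℕ} {Q : PTerm} :
    Step .down a b Q ↔ Q = .down ∧ a = [0] ∧ b = [] := by
  constructor
  · intro h
    cases h with
    | refl hb hs => cases hs; exact ⟨rfl, rfl, rfl⟩
  · rintro ⟨rfl, rfl, rfl⟩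
    exact Step.refl (C := .down) trivial .down

lemma step_diag {a b : List ℕ} {Q : PTerm} :
    Step .diag a b Q ↔ Q = .diag ∧ ∃ x, x ≤ 1 ∧ a = [x] ∧ b = [x, x] := by
  constructor
  · intro h
    cases h with
    | diag => exact ⟨rfl, 1, le_refl _, rfl, rfl⟩
    | refl hb hs => cases hs; exact ⟨rfl, 0, by omega, rfl, rfl⟩
  · rintro ⟨rfl, x, hx, rfl, rfl⟩
    interval_cases x
    · exact Step.refl (C := .diag) trivial .diag
    · exact .diag

lemma step_codiag {a b : List ℕ} {Q : PTerm} :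
    Step .codiag a b Q ↔ Q = .codiag ∧ ∃ x, x ≤ 1 ∧ a = [x, x] ∧ b = [x] := by
  constructor
  · intro h
    cases h with
    | codiag => exact ⟨rfl, 1, le_refl _, rfl, rfl⟩
    | refl hb hs => cases hs; exact ⟨rfl, 0, by omega, rfl, rfl⟩
  · rintro ⟨rfl, x, hx, rfl, rfl⟩
    interval_cases x
    · exact Step.refl (C := .codiag) trivial .codiag
    · exact .codiag

lemma step_lam {a b : List ℕ} {Q : PTerm} :
    Step .lam a b Q ↔ Q = .lam ∧ ∃ x y, x + y ≤ 1 ∧ a = [x + y] ∧ b = [x, y] := by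
  constructor
  · intro h
    cases h with
    | lam ha =>
      rename_i c
      interval_cases c
      · exact ⟨rfl, 1, 0, by omega, rfl, rfl⟩
      · exact ⟨rfl, 0, 1, by omega, rfl, rfl⟩
    | refl hb hs => cases hs; exact ⟨rfl, 0, 0, by omega, rfl, rfl⟩
  · rintro ⟨rfl, x, y, hxy, rfl, rfl⟩
    rcases Nat.le_one_iff_eq_zero_or_eq_one.mp hxy with h | h
    · have hx : x = 0 := by omega
      have hy : y = 0 := by omega
      subst hx; subst hy
      exact Step.refl (C := .lam) trivial .lam
    · rcases Nat.add_eq_one_iff.mp h with ⟨hx, hy⟩ | ⟨hx, hy⟩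
      · subst hx; subst hy
        simpa using Step.lam (a := 1) (le_refl _)
      · subst hx; subst hy
        simpa using Step.lam (a := 0) (by omega)

lemma step_vee {a b : List ℕ} {Q : PTerm} :
    Step .vee a b Q ↔ Q = .vee ∧ ∃ x y, x + y ≤ 1 ∧ a = [x, y] ∧ b = [x + y] := by
  constructor
  · intro h
    cases h with
    | vee ha =>
      rename_i c
      interval_cases c
      · exact ⟨rfl, 1, 0, by omega, rfl, rfl⟩
      · exact ⟨rfl, 0, 1, by omega, rfl, rfl⟩
    | refl hb hs => cases hs; exact ⟨rfl, 0, 0, by omega, rfl, rfl⟩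
  · rintro ⟨rfl, x, y, hxy, rfl, rfl⟩
    rcases Nat.le_one_iff_eq_zero_or_eq_one.mp hxy with h | h
    · have hx : x = 0 := by omega
      have hy : y = 0 := by omega
      subst hx; subst hy
      exact Step.refl (C := .vee) trivial .vee
    · rcases Nat.add_eq_one_iff.mp h with ⟨hx, hy⟩ | ⟨hx, hy⟩
      · subst hx; subst hy
        simpa using Step.vee (a := 1) (le_refl _)
      · subst hx; subst hy
        simpa using Step.vee (a := 0) (by omega)

end PTerm

namespace PTerm

/-! ### Derived terms -/

def unit : PTerm := .seq .top .bot

def idPow : ℕ → PTerm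
  | 0 => unit
  | k + 1 => .tens .iden (idPow k)

def upPow : ℕ → PTerm
  | 0 => unit
  | k + 1 => .tens .up (upPow k)

def downPow : ℕ → PTerm
  | 0 => unit
  | k + 1 => .tens .down (downPow k)

lemma hs_unit : HasSort unit 0 0 := .seq .top .bot

lemma hs_idPow (k : ℕ) : HasSort (idPow k) k k := by
  induction k with
  | zero => exact hs_unit
  | succ k ih =>
    have := HasSort.tens .iden ih
    simpa [idPow, Nat.add_comm 1 k] using this

lemma hs_upPow (k : ℕ) : HasSort (upPow k) 0 k := by
  induction k with
  | zero => exact hs_unit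
  | succ k ih =>
    have := HasSort.tens .up ih
    simpa [upPow, Nat.add_comm 1 k] using this

lemma hs_downPow (k : ℕ) : HasSort (downPow k) k 0 := by
  induction k with
  | zero => exact hs_unit
  | succ k ih =>
    have := HasSort.tens .down ih
    simpa [downPow, Nat.add_comm 1 k] using this

def Bin (l : List ℕ) : Prop := ∀ x ∈ l, x ≤ 1

lemma step_unit {a b : List ℕ} {Q : PTerm} :
    Step unit a b Q ↔ Q = unit ∧ a = [] ∧ b = [] := by
  unfold unit
  rw [step_seq]
  constructor
  · rintro ⟨Q₁, Q₂, γ, rfl, h1, h2⟩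
    rw [step_top] at h1
    rw [step_bot] at h2
    obtain ⟨rfl, rfl, _⟩ := h1
    obtain ⟨rfl, rfl, _⟩ := h2
    exact ⟨rfl, rfl, rfl⟩
  · rintro ⟨rfl, rfl, rfl⟩
    exact ⟨_, _, [0], rfl, step_top.mpr ⟨rfl, rfl, 0, by omega, rfl⟩,
      step_bot.mpr ⟨rfl, rfl, 0, by omega, rfl⟩⟩

lemma step_idPow {k : ℕ} {a b : List ℕ} {Q : PTerm} :
    Step (idPow k) a b Q ↔ Q = idPow k ∧ b = a ∧ a.length = k ∧ Bin a := by
  induction k generalizing a b Q with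
  | zero =>
    rw [show idPow 0 = unit from rfl, step_unit]
    constructor
    · rintro ⟨rfl, rfl, rfl⟩
      exact ⟨rfl, rfl, rfl, by intro x hx; simp at hx⟩
    · rintro ⟨rfl, rfl, hl, -⟩
      have ha := List.length_eq_zero_iff.mp hl
      subst ha
      exact ⟨rfl, rfl, rfl⟩
  | succ k ih =>
    rw [idPow, step_tens]
    constructor
    · rintro ⟨Q₁, Q₂, a₁, a₂, b₁, b₂, rfl, rfl, rfl, h1, h2⟩
      rw [step_iden] at h1
      rw [ih] at h2
      obtain ⟨rfl, x, hx, rfl, rfl⟩ := h1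
      obtain ⟨rfl, rfl, hl, hb⟩ := h2
      refine ⟨rfl, rfl, by simp [hl], ?_⟩
      intro y hy
      rcases List.mem_cons.mp hy with rfl | hy
      · exact hx
      · exact hb y hy
    · rintro ⟨rfl, hba, hl, hb⟩
      rcases a with _ | ⟨x, t⟩
      · simp at hl
      · subst hba
        refine ⟨_, _, [x], t, [x], t, rfl, rfl, rfl,
            step_iden.mpr ⟨rfl, x, hb x (by simp), rfl, rfl⟩,
            ih.mpr ⟨rfl, rfl, by simpa using hl, fun y hy => hb y (by simp [hy])⟩⟩

lemma step_upPow {k : ℕ} {a b : List ℕ} {Q : PTerm} :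
    Step (upPow k) a b Q ↔ Q = upPow k ∧ a = [] ∧ b = List.replicate k 0 := by
  induction k generalizing a b Q with
  | zero => simpa [upPow] using step_unit
  | succ k ih =>
    rw [upPow, step_tens]
    constructor
    · rintro ⟨Q₁, Q₂, a₁, a₂, b₁, b₂, rfl, rfl, rfl, h1, h2⟩
      rw [step_up] at h1
      rw [ih] at h2
      obtain ⟨rfl, rfl, rfl⟩ := h1
      obtain ⟨rfl, rfl, rfl⟩ := h2
      simp [List.replicate_succ]
    · rintro ⟨rfl, rfl, rfl⟩
      exact ⟨_, _, [], [], [0], List.replicate k 0, rfl, rfl, by simp [List.replicate_succ],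
        step_up.mpr ⟨rfl, rfl, rfl⟩, ih.mpr ⟨rfl, rfl, rfl⟩⟩

lemma step_downPow {k : ℕ} {a b : List ℕ} {Q : PTerm} :
    Step (downPow k) a b Q ↔ Q = downPow k ∧ a = List.replicate k 0 ∧ b = [] := by
  induction k generalizing a b Q with
  | zero => simpa [downPow] using step_unit
  | succ k ih =>
    rw [downPow, step_tens]
    constructor
    · rintro ⟨Q₁, Q₂, a₁, a₂, b₁, b₂, rfl, rfl, rfl, h1, h2⟩
      rw [step_down] at h1
      rw [ih] at h2
      obtain ⟨rfl, rfl, rfl⟩ := h1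
      obtain ⟨rfl, rfl, rfl⟩ := h2
      simp [List.replicate_succ]
    · rintro ⟨rfl, rfl, rfl⟩
      exact ⟨_, _, [0], List.replicate k 0, [], [], rfl, by simp [List.replicate_succ], rfl,
        step_down.mpr ⟨rfl, rfl, rfl⟩, ih.mpr ⟨rfl, rfl, rfl⟩⟩

end PTerm

namespace PTerm

/-! ### Wire gadgets -/

inductive Gd : Type
  | sw | add | con
  deriving DecidableEq

def gdTerm : Gd → PTerm
  | .sw => .tw
  | .add => .seq (.tens .diag .iden) (.seq (.tens .iden .vee) .tw)
  | .con => .seq (.tens .diag .lam)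
      (.seq (.tens .iden (.tens .codiag .iden))
        (.seq (.tens .iden (.tens .bot .iden)) .tw))

def relG (s : ℕ) : Gd → ℕ → ℕ → Prop
  | .sw, w, w' => w' = w ∧ w ≤ 1
  | .add, w, w' => w' = w + s ∧ w + s ≤ 1
  | .con, w, w' => w = w' + s ∧ w' + s ≤ 1

lemma relG_bound {s : ℕ} {g : Gd} {w w' : ℕ} (h : relG s g w w') :
    w ≤ 1 ∧ w' ≤ 1 := by
  cases g <;> simp [relG] at h <;> omega

lemma relG_zero {g : Gd} {w w' : ℕ} (h : relG 0 g w w') : w' = w ∧ w ≤ 1 := by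
  cases g <;> simp [relG] at h <;> omega

lemma relG_zero' {g : Gd} {w : ℕ} (h : w ≤ 1) : relG 0 g w w := by
  cases g <;> simp [relG] <;> omega

lemma hs_gd (g : Gd) : HasSort (gdTerm g) 2 2 := by
  cases g
  · exact .tw
  · exact .seq (n := 3) (.tens .diag .iden) (.seq (n := 2) (.tens .iden .vee) .tw)
  · exact .seq (n := 4) (.tens .diag .lam)
      (.seq (n := 3) (.tens .iden (.tens .codiag .iden))
        (.seq (n := 2) (.tens .iden (.tens .bot .iden)) .tw))

lemma step_gd {g : Gd} {a b : List ℕ} {Q : PTerm} :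
    Step (gdTerm g) a b Q ↔ Q = gdTerm g ∧
      ∃ s w w', s ≤ 1 ∧ a = [s, w] ∧ b = [w', s] ∧ relG s g w w' := by
  cases g
  case sw =>
    rw [show gdTerm .sw = .tw from rfl, step_tw]
    constructor
    · rintro ⟨rfl, x, y, hx, hy, rfl, rfl⟩
      exact ⟨rfl, x, y, y, hx, rfl, rfl, rfl, hy⟩
    · rintro ⟨rfl, s, w, w', hs, rfl, rfl, h1, h2⟩
      exact ⟨rfl, s, w, hs, h2, rfl, by rw [h1]⟩
  case add =>
    rw [show gdTerm .add = .seq (.tens .diag .iden) (.seq (.tens .iden .vee) .tw)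
      from rfl]
    rw [step_seq]
    constructor
    · rintro ⟨Q₁, Q₂, γ, rfl, h1, h2⟩
      rw [step_tens] at h1
      obtain ⟨R₁, R₂, a₁, a₂, c₁, c₂, rfl, rfl, rfl, hd, hi⟩ := h1
      rw [step_diag] at hd
      rw [step_iden] at hi
      obtain ⟨rfl, s, hs, rfl, rfl⟩ := hd
      obtain ⟨rfl, w, hw, rfl, rfl⟩ := hi
      rw [step_seq] at h2
      obtain ⟨S₁, S₂, δ, rfl, h3, h4⟩ := h2
      rw [step_tens] at h3
      obtain ⟨T₁, T₂, e₁, e₂, f₁, f₂, rfl, heq, rfl, hi2, hv⟩ := h3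
      rw [step_iden] at hi2
      rw [step_vee] at hv
      obtain ⟨rfl, u, hu, rfl, rfl⟩ := hi2
      obtain ⟨rfl, p, q, hpq, rfl, rfl⟩ := hv
      rw [step_tw] at h4
      obtain ⟨rfl, x, y, hx, hy, hxy, rfl⟩ := h4
      have hu' : u = s ∧ p = s ∧ q = w := by simp at heq; omega
      have hxy' : x = s ∧ y = s + w := by simp at hxy; omega
      refine ⟨rfl, s, w, y, hs, by simp, ?_, ?_⟩
      · rw [hxy'.1]
      · simp only [relG]
        omega
    · rintro ⟨rfl, s, w, w', hs, rfl, rfl, hrel⟩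
      obtain ⟨rfl, hb⟩ := hrel
      rw [Nat.add_comm w s]
      refine ⟨_, _, [s, s, w], rfl, ?_, ?_⟩
      · rw [step_tens]
        exact ⟨_, _, [s], [w], [s, s], [w], rfl, rfl, rfl,
          step_diag.mpr ⟨rfl, s, hs, rfl, rfl⟩,
          step_iden.mpr ⟨rfl, w, by omega, rfl, rfl⟩⟩
      · rw [step_seq]
        refine ⟨_, _, [s, s + w], rfl, ?_, ?_⟩
        · rw [step_tens]
          exact ⟨_, _, [s], [s, w], [s], [s + w], rfl, rfl, rfl,
            step_iden.mpr ⟨rfl, s, hs, rfl, rfl⟩,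
            step_vee.mpr ⟨rfl, s, w, by omega, rfl, rfl⟩⟩
        · rw [step_tw]
          exact ⟨rfl, s, s + w, hs, by omega, rfl, rfl⟩
  case con =>
    rw [show gdTerm .con = .seq (.tens .diag .lam)
      (.seq (.tens .iden (.tens .codiag .iden))
        (.seq (.tens .iden (.tens .bot .iden)) .tw)) from rfl]
    rw [step_seq]
    constructor
    · rintro ⟨Q₁, Q₂, γ, rfl, h1, h2⟩
      rw [step_tens] at h1
      obtain ⟨R₁, R₂, a₁, a₂, c₁, c₂, rfl, rfl, rfl, hd, hl⟩ := h1
      rw [step_diag] at hd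
      rw [step_lam] at hl
      obtain ⟨rfl, s, hs, rfl, rfl⟩ := hd
      obtain ⟨rfl, w₁, w₂, hw, rfl, rfl⟩ := hl
      rw [step_seq] at h2
      obtain ⟨S₁, S₂, δ, rfl, h3, h4⟩ := h2
      rw [step_tens] at h3
      obtain ⟨T₁, T₂, e₁, e₂, f₁, f₂, rfl, heq, rfl, hi2, h5⟩ := h3
      rw [step_iden] at hi2
      obtain ⟨rfl, u, hu, rfl, rfl⟩ := hi2
      rw [step_tens] at h5
      obtain ⟨V₁, V₂, g₁, g₂, i₁, i₂, rfl, heq2, rfl, hc, hi3⟩ := h5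
      rw [step_codiag] at hc
      rw [step_iden] at hi3
      obtain ⟨rfl, z, hz, rfl, rfl⟩ := hc
      obtain ⟨rfl, v, hv, rfl, rfl⟩ := hi3
      rw [step_seq] at h4
      obtain ⟨W₁, W₂, ε, rfl, h6, h7⟩ := h4
      rw [step_tens] at h6
      obtain ⟨X₁, X₂, j₁, j₂, k₁, k₂, rfl, heq3, rfl, hi4, h8⟩ := h6
      rw [step_iden] at hi4
      obtain ⟨rfl, u', hu', rfl, rfl⟩ := hi4
      rw [step_tens] at h8
      obtain ⟨Y₁, Y₂, n₁, n₂, o₁, o₂, rfl, heq4, rfl, hb, hi5⟩ := h8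
      rw [step_bot] at hb
      rw [step_iden] at hi5
      obtain ⟨rfl, rfl, zb, hzb, rfl⟩ := hb
      obtain ⟨rfl, v', hv', rfl, rfl⟩ := hi5
      rw [step_tw] at h7
      obtain ⟨rfl, x, y, hx, hy, hxy, rfl⟩ := h7
      subst heq2
      subst heq4
      have e1 : u = s ∧ z = s ∧ w₁ = z ∧ w₂ = v := by simp at heq; omega
      have e3 : u' = u ∧ zb = z ∧ v' = v := by simp at heq3; omega
      have e4 : x = u' ∧ y = v' := by simp at hxy; omega
      have hy2 : y = w₂ := by omega
      have hx2 : x = s := by omega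
      refine ⟨rfl, s, w₁ + w₂, w₂, hs, by simp, ?_, ?_⟩
      · rw [hy2, hx2]
      · have : w₁ = s := by omega
        simp [relG]
        omega
    · rintro ⟨rfl, s, w, w', hs, rfl, rfl, hrel⟩
      obtain ⟨rfl, hb⟩ := hrel
      rw [Nat.add_comm w' s]
      refine ⟨_, _, [s, s, s, w'], rfl, ?_, ?_⟩
      · rw [step_tens]
        exact ⟨_, _, [s], [s + w'], [s, s], [s, w'], rfl, rfl, rfl,
          step_diag.mpr ⟨rfl, s, hs, rfl, rfl⟩,
          step_lam.mpr ⟨rfl, s, w', by omega, rfl, rfl⟩⟩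
      · rw [step_seq]
        refine ⟨_, _, [s, s, w'], rfl, ?_, ?_⟩
        · rw [step_tens]
          refine ⟨_, _, [s], [s, s, w'], [s], [s, w'], rfl, rfl, rfl,
            step_iden.mpr ⟨rfl, s, hs, rfl, rfl⟩, ?_⟩
          rw [step_tens]
          exact ⟨_, _, [s, s], [w'], [s], [w'], rfl, rfl, rfl,
            step_codiag.mpr ⟨rfl, s, hs, rfl, rfl⟩,
            step_iden.mpr ⟨rfl, w', by omega, rfl, rfl⟩⟩
        · rw [step_seq]
          refine ⟨_, _, [s, w'], rfl, ?_, ?_⟩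
          · rw [step_tens]
            refine ⟨_, _, [s], [s, w'], [s], [w'], rfl, rfl, rfl,
              step_iden.mpr ⟨rfl, s, hs, rfl, rfl⟩, ?_⟩
            rw [step_tens]
            exact ⟨_, _, [s], [w'], [], [w'], rfl, rfl, rfl,
              step_bot.mpr ⟨rfl, rfl, s, hs, rfl⟩,
              step_iden.mpr ⟨rfl, w', by omega, rfl, rfl⟩⟩
          · rw [step_tw]
            exact ⟨rfl, s, w', hs, by omega, rfl, rfl⟩

end PTerm

namespace PTerm

/-! ### Threading a control wire across a bus -/

def TSpec (s : ℕ) : List Gd → List ℕ → List ℕ → Prop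
  | [], ws, ws' => ws = [] ∧ ws' = []
  | g :: gs, ws, ws' => ∃ w w' wt wt', ws = w :: wt ∧ ws' = w' :: wt' ∧
      relG s g w w' ∧ TSpec s gs wt wt'

lemma TSpec_length {s : ℕ} {gs : List Gd} {ws ws' : List ℕ}
    (h : TSpec s gs ws ws') : ws.length = gs.length ∧ ws'.length = gs.length := by
  induction gs generalizing ws ws' with
  | nil => obtain ⟨rfl, rfl⟩ := h; exact ⟨rfl, rfl⟩
  | cons g gs ih =>
    obtain ⟨w, w', wt, wt', rfl, rfl, _, ht⟩ := h
    obtain ⟨h1, h2⟩ := ih ht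
    exact ⟨by simp [h1], by simp [h2]⟩

lemma TSpec_bin {s : ℕ} {gs : List Gd} {ws ws' : List ℕ}
    (h : TSpec s gs ws ws') : Bin ws ∧ Bin ws' := by
  induction gs generalizing ws ws' with
  | nil => obtain ⟨rfl, rfl⟩ := h; exact ⟨by intro x hx; simp at hx, by intro x hx; simp at hx⟩
  | cons g gs ih =>
    obtain ⟨w, w', wt, wt', rfl, rfl, hr, ht⟩ := h
    obtain ⟨h1, h2⟩ := ih ht
    obtain ⟨hw, hw'⟩ := relG_bound hr
    constructor
    · intro x hx; rcases List.mem_cons.mp hx with rfl | hx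
      · exact hw
      · exact h1 x hx
    · intro x hx; rcases List.mem_cons.mp hx with rfl | hx
      · exact hw'
      · exact h2 x hx

lemma TSpec_zero {gs : List Gd} {ws ws' : List ℕ}
    (h : TSpec 0 gs ws ws') : ws' = ws := by
  induction gs generalizing ws ws' with
  | nil => obtain ⟨rfl, rfl⟩ := h; rfl
  | cons g gs ih =>
    obtain ⟨w, w', wt, wt', rfl, rfl, hr, ht⟩ := h
    obtain ⟨hw, _⟩ := relG_zero hr
    rw [hw, ih ht]

lemma TSpec_zero' {gs : List Gd} {ws : List ℕ}
    (hl : ws.length = gs.length) (hb : Bin ws) : TSpec 0 gs ws ws := by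
  induction gs generalizing ws with
  | nil => exact ⟨List.length_eq_zero_iff.mp hl, List.length_eq_zero_iff.mp hl⟩
  | cons g gs ih =>
    rcases ws with _ | ⟨w, wt⟩
    · simp at hl
    · exact ⟨w, w, wt, wt, rfl, rfl, relG_zero' (hb w (by simp)),
        ih (by simpa using hl) (fun x hx => hb x (by simp [hx]))⟩

lemma TSpec_append {s : ℕ} {l₁ l₂ : List Gd} {ws ws' : List ℕ} :
    TSpec s (l₁ ++ l₂) ws ws' ↔
      ∃ u₁ u₂ v₁ v₂, ws = u₁ ++ u₂ ∧ ws' = v₁ ++ v₂ ∧ u₁.length = l₁.length ∧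
        v₁.length = l₁.length ∧ TSpec s l₁ u₁ v₁ ∧ TSpec s l₂ u₂ v₂ := by
  induction l₁ generalizing ws ws' with
  | nil =>
    constructor
    · intro h
      exact ⟨[], ws, [], ws', rfl, rfl, rfl, rfl, ⟨rfl, rfl⟩, h⟩
    · rintro ⟨u₁, u₂, v₁, v₂, rfl, rfl, hl1, hl2, h1, h2⟩
      obtain ⟨rfl, rfl⟩ := h1
      exact h2
  | cons g gs ih =>
    constructor
    · rintro ⟨w, w', wt, wt', rfl, rfl, hr, ht⟩
      obtain ⟨u₁, u₂, v₁, v₂, rfl, rfl, hl1, hl2, h1, h2⟩ := ih.mp ht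
      exact ⟨w :: u₁, u₂, w' :: v₁, v₂, rfl, rfl, by simp [hl1], by simp [hl2],
        ⟨w, w', u₁, v₁, rfl, rfl, hr, h1⟩, h2⟩
    · rintro ⟨u₁, u₂, v₁, v₂, rfl, rfl, hl1, hl2, h1, h2⟩
      obtain ⟨w, w', wt, wt', rfl, rfl, hr, ht⟩ := h1
      exact ⟨w, w', wt ++ u₂, wt' ++ v₂, rfl, rfl, hr,
        ih.mpr ⟨wt, u₂, wt', v₂, rfl, rfl, by simpa using hl1, by simpa using hl2, ht, h2⟩⟩

def thread : List Gd → PTerm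
  | [] => .iden
  | g :: gs => .seq (.tens (gdTerm g) (idPow gs.length)) (.tens .iden (thread gs))

lemma hs_thread (gs : List Gd) : HasSort (thread gs) (gs.length + 1) (gs.length + 1) := by
  induction gs with
  | nil => exact .iden
  | cons g gs ih =>
    have h1 : HasSort (.tens (gdTerm g) (idPow gs.length))
        (2 + gs.length) (2 + gs.length) := .tens (hs_gd g) (hs_idPow _)
    have h2 : HasSort (.tens .iden (thread gs)) (1 + (gs.length + 1)) (1 + (gs.length + 1)) :=
      .tens .iden ih
    have e : 1 + (gs.length + 1) = 2 + gs.length := by omega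
    rw [e] at h2
    have h5 := HasSort.seq h1 h2
    show HasSort (.seq (.tens (gdTerm g) (idPow gs.length)) (.tens .iden (thread gs)))
      (gs.length + 1 + 1) (gs.length + 1 + 1)
    have e2 : gs.length + 1 + 1 = 2 + gs.length := by omega
    rw [e2]
    exact h5

lemma step_thread {gs : List Gd} {a b : List ℕ} {Q : PTerm} :
    Step (thread gs) a b Q ↔ Q = thread gs ∧
      ∃ s ws ws', s ≤ 1 ∧ a = s :: ws ∧ b = ws' ++ [s] ∧ TSpec s gs ws ws' := by
  induction gs generalizing a b Q with
  | nil =>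
    rw [show thread [] = .iden from rfl, step_iden]
    constructor
    · rintro ⟨rfl, x, hx, rfl, rfl⟩
      exact ⟨rfl, x, [], [], hx, rfl, rfl, rfl, rfl⟩
    · rintro ⟨rfl, s, ws, ws', hs, rfl, rfl, h⟩
      obtain ⟨rfl, rfl⟩ := h
      exact ⟨rfl, s, hs, rfl, rfl⟩
  | cons g gs ih =>
    rw [show thread (g :: gs) =
      .seq (.tens (gdTerm g) (idPow gs.length)) (.tens .iden (thread gs)) from rfl]
    rw [step_seq]
    constructor
    · rintro ⟨Q₁, Q₂, γ, rfl, h1, h2⟩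
      rw [step_tens] at h1
      obtain ⟨R₁, R₂, a₁, a₂, c₁, c₂, rfl, rfl, rfl, hg, hip⟩ := h1
      rw [step_gd] at hg
      rw [step_idPow] at hip
      obtain ⟨rfl, s, w, w', hs, rfl, rfl, hrel⟩ := hg
      obtain ⟨rfl, rfl, hlen, hbin⟩ := hip
      rw [step_tens] at h2
      obtain ⟨S₁, S₂, e₁, e₂, f₁, f₂, rfl, heq, rfl, hi, hth⟩ := h2
      rw [step_iden] at hi
      obtain ⟨rfl, u, hu, rfl, rfl⟩ := hi
      rw [ih] at hth
      obtain ⟨rfl, s₂, ws₂, ws₂', hs₂, rfl, rfl, hts⟩ := hth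
      -- heq : [w', s] ++ c₂ = [u] ++ (s₂ :: ws₂)
      have e1 : u = w' ∧ s₂ = s ∧ ws₂ = c₂ := by
        rw [List.cons_append, List.cons_append, List.nil_append] at heq
        have h1 := List.head_eq_of_cons_eq heq
        have h2 := List.tail_eq_of_cons_eq heq
        have h3 := List.head_eq_of_cons_eq h2
        have h4 := List.tail_eq_of_cons_eq h2
        exact ⟨h1.symm, h3.symm, h4.symm⟩
      obtain ⟨he1, he2, he3⟩ := e1
      rw [he2, he3] at hts
      rw [← he1] at hrel
      exact ⟨rfl, s, w :: c₂, u :: ws₂', hs, by simp, by simp [he2], 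
        ⟨w, u, c₂, ws₂', rfl, rfl, hrel, hts⟩⟩
    · rintro ⟨rfl, s, ws, ws', hs, rfl, rfl, h⟩
      obtain ⟨w, w', wt, wt', rfl, rfl, hrel, hts⟩ := h
      obtain ⟨hlt, hlt'⟩ := TSpec_length hts
      obtain ⟨hbt, hbt'⟩ := TSpec_bin hts
      refine ⟨_, _, [w', s] ++ wt, rfl, ?_, ?_⟩
      · rw [step_tens]
        exact ⟨_, _, [s, w], wt, [w', s], wt, rfl, rfl, rfl,
          step_gd.mpr ⟨rfl, s, w, w', hs, rfl, rfl, hrel⟩,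
          step_idPow.mpr ⟨rfl, rfl, hlt, hbt⟩⟩
      · rw [step_tens]
        refine ⟨_, _, [w'], s :: wt, [w'], wt' ++ [s], rfl, rfl, by simp, ?_, ?_⟩
        · exact step_iden.mpr ⟨rfl, w', (relG_bound hrel).2, rfl, rfl⟩
        · exact ih.mpr ⟨rfl, s, wt, wt', hs, rfl, rfl, hts⟩

/-! ### A stage: one candidate event -/

def stage (gs : List Gd) : PTerm :=
  .seq (.tens .lam (idPow gs.length))
    (.seq (.tens .iden (thread gs)) (.tens (idPow (gs.length + 1)) .bot))

lemma hs_stage (gs : List Gd) : HasSort (stage gs) (gs.length + 1) (gs.length + 1) := by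
  have h1 : HasSort (.tens .lam (idPow gs.length)) (1 + gs.length) (2 + gs.length) :=
    .tens .lam (hs_idPow _)
  have h2 : HasSort (.tens .iden (thread gs)) (1 + (gs.length + 1)) (1 + (gs.length + 1)) :=
    .tens .iden (hs_thread gs)
  have h3 : HasSort (.tens (idPow (gs.length + 1)) .bot) (gs.length + 1 + 1)
      (gs.length + 1 + 0) := .tens (hs_idPow _) .bot
  have e1 : 1 + (gs.length + 1) = 2 + gs.length := by omega
  have e2 : gs.length + 1 + 1 = 2 + gs.length := by omega
  have e3 : gs.length + 1 + 0 = gs.length + 1 := by omega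
  rw [e1] at h2
  rw [e2, e3] at h3
  have h4 : HasSort (.seq (.tens .iden (thread gs)) (.tens (idPow (gs.length + 1)) .bot))
      (2 + gs.length) (gs.length + 1) := .seq h2 h3
  have h5 := HasSort.seq h1 h4
  have e4 : 1 + gs.length = gs.length + 1 := by omega
  rw [e4] at h5
  exact h5

lemma step_stage {gs : List Gd} {a b : List ℕ} {Q : PTerm} :
    Step (stage gs) a b Q ↔ Q = stage gs ∧
      ∃ s M' ws ws', a = (M' + s) :: ws ∧ b = M' :: ws' ∧ M' + s ≤ 1 ∧
        TSpec s gs ws ws' := by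
  rw [show stage gs = .seq (.tens .lam (idPow gs.length))
    (.seq (.tens .iden (thread gs)) (.tens (idPow (gs.length + 1)) .bot)) from rfl]
  rw [step_seq]
  constructor
  · rintro ⟨Q₁, Q₂, γ, rfl, h1, h2⟩
    rw [step_tens] at h1
    obtain ⟨R₁, R₂, a₁, a₂, c₁, c₂, rfl, rfl, rfl, hlm, hip⟩ := h1
    rw [step_lam] at hlm
    rw [step_idPow] at hip
    obtain ⟨rfl, M', s, hMs, rfl, rfl⟩ := hlm
    obtain ⟨rfl, rfl, hlen, hbin⟩ := hip
    rw [step_seq] at h2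
    obtain ⟨S₁, S₂, δ, rfl, h3, h4⟩ := h2
    rw [step_tens] at h3
    obtain ⟨T₁, T₂, e₁, e₂, f₁, f₂, rfl, heq, rfl, hi, hth⟩ := h3
    rw [step_iden] at hi
    obtain ⟨rfl, u, hu, rfl, rfl⟩ := hi
    rw [step_thread] at hth
    obtain ⟨rfl, s₂, ws₂, ws₂', hs₂, rfl, rfl, hts⟩ := hth
    -- heq : [M', s] ++ c₂ = [u] ++ (s₂ :: ws₂)
    have e1 : u = M' ∧ s₂ = s ∧ ws₂ = c₂ := by
      rw [List.cons_append, List.cons_append, List.nil_append] at heq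
      have h1 := List.head_eq_of_cons_eq heq
      have h2 := List.tail_eq_of_cons_eq heq
      have h3 := List.head_eq_of_cons_eq h2
      have h4 := List.tail_eq_of_cons_eq h2
      exact ⟨h1.symm, h3.symm, h4.symm⟩
    obtain ⟨he1, he2, he3⟩ := e1
    rw [he2, he3] at hts
    rw [step_tens] at h4
    obtain ⟨V₁, V₂, g₁, g₂, i₁, i₂, rfl, heq2, rfl, hip2, hbot⟩ := h4
    rw [step_idPow] at hip2
    rw [step_bot] at hbot
    obtain ⟨rfl, rfl, hlen2, hbin2⟩ := hip2
    obtain ⟨rfl, rfl, z, hz, rfl⟩ := hbot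
    have h6 : (u :: ws₂') ++ [s] = i₁ ++ [z] := by
      have h7 : u :: (ws₂' ++ [s]) = i₁ ++ [z] := by simpa [he2] using heq2
      simpa using h7
    have hlen3 : (u :: ws₂').length = i₁.length := by
      have := congrArg List.length h6
      simpa using this
    have hq1 : i₁ = u :: ws₂' := (List.append_inj h6 hlen3).1.symm
    refine ⟨rfl, s, u, c₂, ws₂', by simp [he1], by simp [hq1], ?_, hts⟩
    rw [he1]
    exact hMs
  · rintro ⟨rfl, s, M', ws, ws', rfl, rfl, hMs, hts⟩
    obtain ⟨hl, hl'⟩ := TSpec_length hts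
    obtain ⟨hb, hb'⟩ := TSpec_bin hts
    refine ⟨_, _, M' :: s :: ws, rfl, ?_, ?_⟩
    · rw [step_tens]
      exact ⟨_, _, [M' + s], ws, [M', s], ws, rfl, rfl, rfl,
        step_lam.mpr ⟨rfl, M', s, hMs, rfl, rfl⟩,
        step_idPow.mpr ⟨rfl, rfl, hl, hb⟩⟩
    · rw [step_seq]
      refine ⟨_, _, M' :: (ws' ++ [s]), rfl, ?_, ?_⟩
      · rw [step_tens]
        exact ⟨_, _, [M'], s :: ws, [M'], ws' ++ [s], rfl, rfl, rfl,
          step_iden.mpr ⟨rfl, M', by omega, rfl, rfl⟩,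
          step_thread.mpr ⟨rfl, s, ws, ws', by omega, rfl, rfl, hts⟩⟩
      · rw [step_tens]
        refine ⟨_, _, M' :: ws', [s], M' :: ws', [], rfl, by simp, by simp, ?_, ?_⟩
        · refine step_idPow.mpr ⟨rfl, rfl, by simp [hl'], ?_⟩
          intro x hx
          rcases List.mem_cons.mp hx with rfl | hx
          · omega
          · exact hb' x hx
        · exact step_bot.mpr ⟨rfl, rfl, s, by omega, rfl⟩

end PTerm

namespace PTerm

/-! ### Pipelines of stages -/

def pipe (B : ℕ) : List (List Gd) → PTerm
  | [] => idPow B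
  | gs :: L => .seq (stage gs) (pipe B L)

def PSpec (B : ℕ) : List (List Gd) → List ℕ → List ℕ → Prop
  | [], a, b => b = a ∧ a.length = B ∧ Bin a
  | gs :: L, a, b => ∃ s M' ws ws', a = (M' + s) :: ws ∧ M' + s ≤ 1 ∧
      TSpec s gs ws ws' ∧ PSpec B L (M' :: ws') b

lemma hs_pipe (B : ℕ) (L : List (List Gd)) (hL : ∀ gs ∈ L, gs.length + 1 = B) :
    HasSort (pipe B L) B B := by
  induction L with
  | nil => exact hs_idPow B
  | cons gs L ih =>
    have h1 := hs_stage gs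
    rw [hL gs (by simp)] at h1
    exact .seq h1 (ih fun gs' h => hL gs' (by simp [h]))

lemma step_pipe {B : ℕ} {L : List (List Gd)} {a b : List ℕ} {Q : PTerm} :
    Step (pipe B L) a b Q ↔ Q = pipe B L ∧ PSpec B L a b := by
  induction L generalizing a b Q with
  | nil =>
    rw [show pipe B [] = idPow B from rfl, step_idPow]
    constructor
    · rintro ⟨rfl, rfl, hl, hb⟩
      exact ⟨rfl, rfl, hl, hb⟩
    · rintro ⟨rfl, rfl, hl, hb⟩
      exact ⟨rfl, rfl, hl, hb⟩
  | cons gs L ih =>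
    rw [show pipe B (gs :: L) = .seq (stage gs) (pipe B L) from rfl, step_seq]
    constructor
    · rintro ⟨Q₁, Q₂, γ, rfl, h1, h2⟩
      rw [step_stage] at h1
      rw [ih] at h2
      obtain ⟨rfl, s, M', ws, ws', rfl, rfl, hMs, hts⟩ := h1
      obtain ⟨rfl, hp⟩ := h2
      exact ⟨rfl, s, M', ws, ws', rfl, hMs, hts, hp⟩
    · rintro ⟨rfl, s, M', ws, ws', rfl, hMs, hts, hp⟩
      exact ⟨_, _, M' :: ws', rfl,
        step_stage.mpr ⟨rfl, s, M', ws, ws', rfl, rfl, hMs, hts⟩,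
        ih.mpr ⟨rfl, hp⟩⟩

lemma PSpec_cases {B : ℕ} {L : List (List Gd)} {a b : List ℕ}
    (h : PSpec B L a b) :
    (b = a ∧ a.length = B ∧ Bin a) ∨
      (∃ gs ∈ L, ∃ ws ws', a = 1 :: ws ∧ b = 0 :: ws' ∧ TSpec 1 gs ws ws') := by
  induction L generalizing a b with
  | nil => exact Or.inl h
  | cons gs L ih =>
    obtain ⟨s, M', ws, ws', rfl, hMs, hts, hp⟩ := h
    rcases Nat.lt_or_ge s 1 with hs | hs
    · -- s = 0
      have hs0 : s = 0 := by omega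
      subst hs0
      have hws := TSpec_zero hts
      rw [hws] at hp
      rcases ih hp with ⟨rfl, hl, hb⟩ | ⟨gs', hmem, ws₂, ws₂', heq, rfl, hts2⟩
      · exact Or.inl ⟨rfl, hl, hb⟩
      · have hM : M' = 1 ∧ ws = ws₂ := by
          have h1 := List.head_eq_of_cons_eq heq
          have h2 := List.tail_eq_of_cons_eq heq
          exact ⟨h1, h2⟩
        obtain ⟨rfl, rfl⟩ := hM
        exact Or.inr ⟨gs', by simp [hmem], ws, ws₂', rfl, rfl, hts2⟩
    · -- s = 1
      have hs1 : s = 1 := by omega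
      have hM0 : M' = 0 := by omega
      subst hs1
      subst hM0
      rcases ih hp with ⟨rfl, hl, hb⟩ | ⟨gs', hmem, ws₂, ws₂', heq, rfl, hts2⟩
      · exact Or.inr ⟨gs, by simp, ws, ws', rfl, rfl, hts⟩
      · exact absurd (List.head_eq_of_cons_eq heq) (by omega)

lemma PSpec_idle {B : ℕ} {L : List (List Gd)} {a : List ℕ}
    (hL : ∀ gs ∈ L, gs.length + 1 = B) (hl : a.length = B) (hb : Bin a) :
    PSpec B L a a := by
  induction L with
  | nil => exact ⟨rfl, hl, hb⟩
  | cons gs L ih =>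
    rcases a with _ | ⟨M, ws⟩
    · have := hL gs (by simp)
      simp at hl
      omega
    · refine ⟨0, M, ws, ws, by simp, by simpa using hb M (by simp), ?_, ?_⟩
      · refine TSpec_zero' ?_ (fun x hx => hb x (by simp [hx]))
        have := hL gs (by simp)
        simp at hl
        omega
      · exact ih (fun gs' h => hL gs' (by simp [h]))

lemma PSpec_fire {B : ℕ} {L : List (List Gd)} {gs : List Gd} {ws ws' : List ℕ}
    (hL : ∀ gs' ∈ L, gs'.length + 1 = B) (hmem : gs ∈ L)
    (hts : TSpec 1 gs ws ws') :
    PSpec B L (1 :: ws) (0 :: ws') := by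
  induction L with
  | nil => simp at hmem
  | cons gs₀ L ih =>
    rcases List.mem_cons.mp hmem with rfl | hmem'
    · refine ⟨1, 0, ws, ws', by simp, by omega, hts, ?_⟩
      refine PSpec_idle (fun gs' h => hL gs' (by simp [h])) ?_ ?_
      · have h1 := (TSpec_length hts).2
        have h2 := hL gs (by simp)
        simp
        omega
      · intro x hx
        rcases List.mem_cons.mp hx with rfl | hx
        · omega
        · exact (TSpec_bin hts).2 x hx
    · refine ⟨0, 1, ws, ws, by simp, by omega, ?_, ?_⟩
      · refine TSpec_zero' ?_ (TSpec_bin hts).1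
        have h1 := (TSpec_length hts).1
        have h2 := hL gs₀ (by simp)
        have h3 := hL gs (by simp [hmem'])
        omega
      · exact ih (fun gs' h => hL gs' (by simp [h])) hmem'

/-! ### Place gadgets -/

def pg (fl : Bool) : PTerm :=
  .seq (.tens (if fl then .full else .empty) .iden) (.seq .codiag .bot)

lemma hs_pg (fl : Bool) : HasSort (pg fl) 2 0 := by
  have h1 : HasSort (.tens (if fl then PTerm.full else PTerm.empty) .iden) 2 2 := by
    cases fl
    · exact .tens .empty .iden
    · exact .tens .full .iden
  exact .seq h1 (.seq .codiag .bot)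

def pgRel (fl : Bool) (pr co : ℕ) (fl' : Bool) : Prop :=
  (pr = 0 ∧ co = 0 ∧ fl' = fl) ∨
  (pr = 0 ∧ co = 1 ∧ fl = true ∧ fl' = false) ∨
  (pr = 1 ∧ co = 0 ∧ fl = false ∧ fl' = true)

lemma step_pg {fl : Bool} {a b : List ℕ} {Q : PTerm} :
    Step (pg fl) a b Q ↔ b = [] ∧
      ∃ pr co fl', a = [pr, co] ∧ Q = pg fl' ∧ pgRel fl pr co fl' := by
  rw [show pg fl = .seq (.tens (if fl then .full else .empty) .iden) (.seq .codiag .bot)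
    from rfl, step_seq]
  constructor
  · rintro ⟨Q₁, Q₂, γ, rfl, h1, h2⟩
    rw [step_tens] at h1
    obtain ⟨R₁, R₂, a₁, a₂, c₁, c₂, rfl, rfl, rfl, hbuf, hi⟩ := h1
    rw [step_iden] at hi
    obtain ⟨rfl, co, hco, rfl, rfl⟩ := hi
    rw [step_seq] at h2
    obtain ⟨S₁, S₂, δ, rfl, h3, h4⟩ := h2
    rw [step_codiag] at h3
    rw [step_bot] at h4
    obtain ⟨rfl, x, hx, hxe, rfl⟩ := h3
    obtain ⟨rfl, rfl, z, hz, hze⟩ := h4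
    cases fl
    · simp only [Bool.false_eq_true, if_false] at hbuf
      rw [step_empty] at hbuf
      rcases hbuf with ⟨rfl, rfl, rfl⟩ | ⟨rfl, rfl, rfl⟩
      · -- buffer stays empty, output 0
        have e1 : x = 0 ∧ x = co := by simpa using hxe.symm
        refine ⟨rfl, 0, co, false, rfl, by simp [pg], ?_⟩
        exact Or.inl ⟨rfl, by omega, rfl⟩
      · -- empty takes a token
        have e1 : x = 0 ∧ x = co := by simpa using hxe.symm
        refine ⟨rfl, 1, co, true, rfl, by simp [pg], ?_⟩
        exact Or.inr (Or.inr ⟨rfl, by omega, rfl, rfl⟩)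
    · simp only [if_true] at hbuf
      rw [step_full] at hbuf
      rcases hbuf with ⟨rfl, rfl, rfl⟩ | ⟨rfl, rfl, rfl⟩
      · have e1 : x = 0 ∧ x = co := by simpa using hxe.symm
        refine ⟨rfl, 0, co, true, rfl, by simp [pg], ?_⟩
        exact Or.inl ⟨rfl, by omega, rfl⟩
      · have e1 : x = 1 ∧ x = co := by simpa using hxe.symm
        refine ⟨rfl, 0, co, false, rfl, by simp [pg], ?_⟩
        exact Or.inr (Or.inl ⟨rfl, by omega, rfl, rfl⟩)
  · rintro ⟨rfl, pr, co, fl', rfl, rfl, hrel⟩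
    rcases hrel with ⟨rfl, rfl, rfl⟩ | ⟨rfl, rfl, rfl, rfl⟩ | ⟨rfl, rfl, rfl, rfl⟩
    · refine ⟨_, _, [0, 0], rfl, ?_, ?_⟩
      · rw [step_tens]
        cases fl'
        · exact ⟨_, _, [0], [0], [0], [0], rfl, rfl, rfl,
            step_empty.mpr (Or.inl ⟨rfl, rfl, rfl⟩),
            step_iden.mpr ⟨rfl, 0, by omega, rfl, rfl⟩⟩
        · exact ⟨_, _, [0], [0], [0], [0], rfl, rfl, rfl,
            step_full.mpr (Or.inl ⟨rfl, rfl, rfl⟩),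
            step_iden.mpr ⟨rfl, 0, by omega, rfl, rfl⟩⟩
      · exact step_seq.mpr ⟨_, _, [0], rfl, step_codiag.mpr ⟨rfl, 0, by omega, rfl, rfl⟩,
          step_bot.mpr ⟨rfl, rfl, 0, by omega, rfl⟩⟩
    · refine ⟨_, _, [1, 1], rfl, ?_, ?_⟩
      · rw [step_tens]
        exact ⟨_, _, [0], [1], [1], [1], rfl, rfl, rfl,
          step_full.mpr (Or.inr ⟨rfl, rfl, rfl⟩),
          step_iden.mpr ⟨rfl, 1, by omega, rfl, rfl⟩⟩
      · exact step_seq.mpr ⟨_, _, [1], rfl, step_codiag.mpr ⟨rfl, 1, by omega, rfl, rfl⟩,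
          step_bot.mpr ⟨rfl, rfl, 1, by omega, rfl⟩⟩
    · refine ⟨_, _, [0, 0], rfl, ?_, ?_⟩
      · rw [step_tens]
        exact ⟨_, _, [1], [0], [0], [0], rfl, rfl, rfl,
          step_empty.mpr (Or.inr ⟨rfl, rfl, rfl⟩),
          step_iden.mpr ⟨rfl, 0, by omega, rfl, rfl⟩⟩
      · exact step_seq.mpr ⟨_, _, [0], rfl, step_codiag.mpr ⟨rfl, 0, by omega, rfl, rfl⟩,
          step_bot.mpr ⟨rfl, rfl, 0, by omega, rfl⟩⟩

/-! ### A row of places -/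

def row : List Bool → PTerm
  | [] => unit
  | fl :: l => .tens (pg fl) (row l)

lemma hs_row (bl : List Bool) : HasSort (row bl) (2 * bl.length) 0 := by
  induction bl with
  | nil => exact hs_unit
  | cons fl l ih =>
    have h := HasSort.tens (hs_pg fl) ih
    show HasSort (.tens (pg fl) (row l)) (2 * (l.length + 1)) 0
    have e : 2 * (l.length + 1) = 2 + 2 * l.length := by omega
    rw [e]
    exact h

def RSpec : List Bool → List ℕ → List Bool → Prop
  | [], ws, bl' => ws = [] ∧ bl' = []
  | fl :: l, ws, bl' => ∃ pr co wt fl' lt', ws = pr :: co :: wt ∧ bl' = fl' :: lt' ∧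
      pgRel fl pr co fl' ∧ RSpec l wt lt'

lemma step_row {bl : List Bool} {a b : List ℕ} {Q : PTerm} :
    Step (row bl) a b Q ↔ b = [] ∧ ∃ bl', Q = row bl' ∧ RSpec bl a bl' := by
  induction bl generalizing a b Q with
  | nil =>
    rw [show row [] = unit from rfl, step_unit]
    constructor
    · rintro ⟨rfl, rfl, rfl⟩
      exact ⟨rfl, [], rfl, rfl, rfl⟩
    · rintro ⟨rfl, bl', rfl, h⟩
      obtain ⟨rfl, rfl⟩ := h
      exact ⟨rfl, rfl, rfl⟩
  | cons fl l ih =>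
    rw [show row (fl :: l) = .tens (pg fl) (row l) from rfl, step_tens]
    constructor
    · rintro ⟨Q₁, Q₂, a₁, a₂, b₁, b₂, rfl, rfl, rfl, h1, h2⟩
      rw [step_pg] at h1
      rw [ih] at h2
      obtain ⟨rfl, pr, co, fl', rfl, rfl, hrel⟩ := h1
      obtain ⟨rfl, lt', rfl, hr⟩ := h2
      exact ⟨rfl, fl' :: lt', rfl, pr, co, a₂, fl', lt', rfl, rfl, hrel, hr⟩
    · rintro ⟨rfl, bl', rfl, h⟩
      obtain ⟨pr, co, wt, fl', lt', rfl, rfl, hrel, hr⟩ := h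
      exact ⟨_, _, [pr, co], wt, [], [], rfl, rfl, rfl,
        step_pg.mpr ⟨rfl, pr, co, fl', rfl, rfl, hrel⟩,
        ih.mpr ⟨rfl, lt', rfl, hr⟩⟩

end PTerm

namespace PTerm

/-! ### Interface terms -/

def initT (m r : ℕ) : PTerm := .tens .top (.tens (idPow m) (upPow r))

lemma hs_initT (m r : ℕ) : HasSort (initT m r) m (1 + (m + r)) := by
  have h : HasSort (initT m r) (0 + (m + 0)) (1 + (m + r)) :=
    .tens .top (.tens (hs_idPow m) (hs_upPow r))
  simpa using h

lemma step_initT {m r : ℕ} {a b : List ℕ} {Q : PTerm} :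
    Step (initT m r) a b Q ↔ Q = initT m r ∧
      ∃ z, z ≤ 1 ∧ b = z :: (a ++ List.replicate r 0) ∧ a.length = m ∧ Bin a := by
  rw [show initT m r = .tens .top (.tens (idPow m) (upPow r)) from rfl, step_tens]
  constructor
  · rintro ⟨Q₁, Q₂, a₁, a₂, b₁, b₂, rfl, rfl, rfl, h1, h2⟩
    rw [step_top] at h1
    obtain ⟨rfl, rfl, z, hz, rfl⟩ := h1
    rw [step_tens] at h2
    obtain ⟨R₁, R₂, c₁, c₂, d₁, d₂, rfl, rfl, rfl, h3, h4⟩ := h2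
    rw [step_idPow] at h3
    rw [step_upPow] at h4
    obtain ⟨rfl, rfl, hl, hb⟩ := h3
    obtain ⟨rfl, rfl, rfl⟩ := h4
    exact ⟨rfl, z, hz, by simp, by simpa using hl, by simpa [Bin] using hb⟩
  · rintro ⟨rfl, z, hz, rfl, hl, hb⟩
    exact ⟨_, _, [], a, [z], a ++ List.replicate r 0, rfl, by simp, by simp,
      step_top.mpr ⟨rfl, rfl, z, hz, rfl⟩,
      step_tens.mpr ⟨_, _, a, [], a, List.replicate r 0, rfl, by simp, rfl,
        step_idPow.mpr ⟨rfl, rfl, hl, hb⟩,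
        step_upPow.mpr ⟨rfl, rfl, rfl⟩⟩⟩

def finT (m n : ℕ) (bl : List Bool) : PTerm :=
  .tens .bot (.tens (downPow m) (.tens (idPow n) (row bl)))

lemma hs_finT (m n : ℕ) (bl : List Bool) :
    HasSort (finT m n bl) (1 + (m + (n + 2 * bl.length))) n := by
  have h : HasSort (finT m n bl) (1 + (m + (n + 2 * bl.length))) (0 + (0 + (n + 0))) :=
    .tens .bot (.tens (hs_downPow m) (.tens (hs_idPow n) (hs_row bl)))
  simpa using h

lemma step_finT {m n : ℕ} {bl : List Bool} {a b : List ℕ} {Q : PTerm} :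
    Step (finT m n bl) a b Q ↔
      ∃ z rw bl', z ≤ 1 ∧ a = z :: (List.replicate m 0 ++ (b ++ rw)) ∧
        b.length = n ∧ Bin b ∧ RSpec bl rw bl' ∧ Q = finT m n bl' := by
  rw [show finT m n bl = .tens .bot (.tens (downPow m) (.tens (idPow n) (row bl)))
    from rfl, step_tens]
  constructor
  · rintro ⟨Q₁, Q₂, a₁, a₂, b₁, b₂, rfl, rfl, rfl, h1, h2⟩
    rw [step_bot] at h1
    obtain ⟨rfl, rfl, z, hz, rfl⟩ := h1
    rw [step_tens] at h2
    obtain ⟨R₁, R₂, c₁, c₂, d₁, d₂, rfl, rfl, rfl, h3, h4⟩ := h2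
    rw [step_downPow] at h3
    obtain ⟨rfl, rfl, rfl⟩ := h3
    rw [step_tens] at h4
    obtain ⟨S₁, S₂, e₁, e₂, f₁, f₂, rfl, rfl, rfl, h5, h6⟩ := h4
    rw [step_idPow] at h5
    obtain ⟨rfl, rfl, hl, hb⟩ := h5
    rw [step_row] at h6
    obtain ⟨rfl, bl', rfl, hr⟩ := h6
    exact ⟨z, e₂, bl', hz, by simp, by simpa using hl, by simpa [Bin] using hb, hr, by simp [finT]⟩
  · rintro ⟨z, rw, bl', hz, rfl, hl, hb, hr, rfl⟩
    refine ⟨_, _, [z], List.replicate m 0 ++ (b ++ rw), [], b, rfl, rfl, by simp, ?_, ?_⟩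
    · exact step_bot.mpr ⟨rfl, rfl, z, hz, rfl⟩
    · refine step_tens.mpr ⟨_, _, List.replicate m 0, b ++ rw, [], b, rfl, rfl, by simp, ?_, ?_⟩
      · exact step_downPow.mpr ⟨rfl, rfl, rfl⟩
      · refine step_tens.mpr ⟨_, _, b, rw, b, [], rfl, rfl, by simp, ?_, ?_⟩
        · exact step_idPow.mpr ⟨rfl, rfl, hl, hb⟩
        · exact step_row.mpr ⟨rfl, bl', rfl, hr⟩

/-! ### Semantic content of uniform gadget rows -/

section seg
variable {ι : Type*}

lemma TSpec_addsw_out (P : ι → Prop) [DecidablePred P] (l : List ι) {s : ℕ} {ws' : List ℕ}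
    (h : TSpec s (l.map fun i => if P i then Gd.add else Gd.sw)
      (List.replicate l.length 0) ws') :
    ws' = l.map fun i => if P i then s else 0 := by
  induction l generalizing ws' with
  | nil => obtain ⟨_, rfl⟩ := h; rfl
  | cons i l ih =>
    obtain ⟨w, w', wt, wt', hw, rfl, hr, ht⟩ := h
    rw [List.length_cons, List.replicate_succ] at hw
    have hw0 : w = 0 ∧ wt = List.replicate l.length 0 := by
      exact ⟨List.head_eq_of_cons_eq hw.symm, List.tail_eq_of_cons_eq hw.symm⟩
    obtain ⟨rfl, rfl⟩ := hw0
    by_cases hP : P i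
    · simp only [hP, if_true] at hr
      obtain ⟨hw', _⟩ := hr
      simp [hP, hw', ih ht]
    · simp only [hP, if_false] at hr
      obtain ⟨hw', _⟩ := hr
      simp [hP, hw', ih ht]

lemma TSpec_addsw_in (P : ι → Prop) [DecidablePred P] (l : List ι) {s : ℕ} (hs : s ≤ 1) :
    TSpec s (l.map fun i => if P i then Gd.add else Gd.sw)
      (List.replicate l.length 0) (l.map fun i => if P i then s else 0) := by
  induction l with
  | nil => exact ⟨rfl, rfl⟩
  | cons i l ih =>
    rw [List.length_cons, List.replicate_succ, List.map_cons, List.map_cons]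
    refine ⟨0, if P i then s else 0, _, _, rfl, rfl, ?_, ih⟩
    by_cases hP : P i <;> simp [hP, relG] <;> omega

lemma TSpec_consw_out (P : ι → Prop) [DecidablePred P] (l : List ι) {s : ℕ} {ws : List ℕ}
    (h : TSpec s (l.map fun i => if P i then Gd.con else Gd.sw)
      ws (List.replicate l.length 0)) :
    ws = l.map fun i => if P i then s else 0 := by
  induction l generalizing ws with
  | nil => obtain ⟨rfl, _⟩ := h; rfl
  | cons i l ih =>
    obtain ⟨w, w', wt, wt', rfl, hw, hr, ht⟩ := h
    rw [List.length_cons, List.replicate_succ] at hw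
    have hw0 : w' = 0 ∧ wt' = List.replicate l.length 0 := by
      exact ⟨List.head_eq_of_cons_eq hw.symm, List.tail_eq_of_cons_eq hw.symm⟩
    obtain ⟨rfl, rfl⟩ := hw0
    by_cases hP : P i
    · simp only [hP, if_true] at hr
      obtain ⟨hw', _⟩ := hr
      simp [hP, hw', ih ht]
    · simp only [hP, if_false] at hr
      obtain ⟨hw', _⟩ := hr
      simp [hP, ← hw', ih ht]

lemma TSpec_consw_in (P : ι → Prop) [DecidablePred P] (l : List ι) {s : ℕ} (hs : s ≤ 1) :
    TSpec s (l.map fun i => if P i then Gd.con else Gd.sw)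
      (l.map fun i => if P i then s else 0) (List.replicate l.length 0) := by
  induction l with
  | nil => exact ⟨rfl, rfl⟩
  | cons i l ih =>
    rw [List.length_cons, List.replicate_succ, List.map_cons, List.map_cons]
    refine ⟨if P i then s else 0, 0, _, _, rfl, rfl, ?_, ih⟩
    by_cases hP : P i <;> simp [hP, relG] <;> omega

lemma TSpec_pair_out (P1 P2 : ι → Prop) [DecidablePred P1] [DecidablePred P2]
    (l : List ι) {s : ℕ} {ws' : List ℕ}
    (h : TSpec s (l.flatMap fun p =>
        [if P1 p then Gd.add else Gd.sw, if P2 p then Gd.add else Gd.sw])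
      (List.replicate (2 * l.length) 0) ws') :
    ws' = l.flatMap fun p => [if P1 p then s else 0, if P2 p then s else 0] := by
  induction l generalizing ws' with
  | nil => obtain ⟨_, rfl⟩ := h; rfl
  | cons i l ih =>
    rw [List.flatMap_cons] at h
    have e : 2 * (i :: l).length = 2 * l.length + 1 + 1 := by simp; omega
    rw [e, List.replicate_succ, List.replicate_succ] at h
    obtain ⟨w, w', wt, wt', hw, rfl, hr, ht⟩ := h
    have hw0 : w = 0 ∧ wt = 0 :: List.replicate (2 * l.length) 0 := by
      exact ⟨List.head_eq_of_cons_eq hw.symm, List.tail_eq_of_cons_eq hw.symm⟩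
    obtain ⟨rfl, rfl⟩ := hw0
    obtain ⟨v, v', vt, vt', hv, rfl, hr2, ht2⟩ := ht
    have hv0 : v = 0 ∧ vt = List.replicate (2 * l.length) 0 := by
      exact ⟨List.head_eq_of_cons_eq hv.symm, List.tail_eq_of_cons_eq hv.symm⟩
    obtain ⟨rfl, rfl⟩ := hv0
    rw [List.flatMap_cons]
    have h1 : w' = if P1 i then s else 0 := by
      by_cases hP : P1 i
      · simp only [hP, if_true] at hr ⊢; simp only [relG] at hr; omega
      · simp only [hP, if_false] at hr ⊢; simp only [relG] at hr; omega
    have h2 : v' = if P2 i then s else 0 := by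
      by_cases hP : P2 i
      · simp only [hP, if_true] at hr2 ⊢; simp only [relG] at hr2; omega
      · simp only [hP, if_false] at hr2 ⊢; simp only [relG] at hr2; omega
    simp [h1, h2, ih ht2]

lemma TSpec_pair_in (P1 P2 : ι → Prop) [DecidablePred P1] [DecidablePred P2]
    (l : List ι) {s : ℕ} (hs : s ≤ 1) :
    TSpec s (l.flatMap fun p =>
        [if P1 p then Gd.add else Gd.sw, if P2 p then Gd.add else Gd.sw])
      (List.replicate (2 * l.length) 0)
      (l.flatMap fun p => [if P1 p then s else 0, if P2 p then s else 0]) := by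
  induction l with
  | nil => exact ⟨rfl, rfl⟩
  | cons i l ih =>
    have e : 2 * (i :: l).length = 2 * l.length + 1 + 1 := by simp; omega
    rw [e, List.replicate_succ, List.replicate_succ, List.flatMap_cons, List.flatMap_cons]
    refine ⟨0, if P1 i then s else 0, _, _, rfl, rfl, ?_,
      0, if P2 i then s else 0, _, _, rfl, rfl, ?_, ih⟩
    · by_cases hP : P1 i <;> simp [hP, relG] <;> omega
    · by_cases hP : P2 i <;> simp [hP, relG] <;> omega

end seg

lemma pgRel_zero {fl fl' : Bool} (h : pgRel fl 0 0 fl') : fl' = fl := by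
  rcases h with ⟨_, _, h⟩ | ⟨_, h, _⟩ | ⟨h, _, _⟩ <;> first | exact h | omega

lemma RSpec_zero {bl : List Bool} {bl' : List Bool}
    (h : RSpec bl (List.replicate (2 * bl.length) 0) bl') : bl' = bl := by
  induction bl generalizing bl' with
  | nil => exact h.2
  | cons fl l ih =>
    have e : 2 * (fl :: l).length = 2 * l.length + 1 + 1 := by simp; omega
    rw [e, List.replicate_succ, List.replicate_succ] at h
    obtain ⟨pr, co, wt, fl', lt', hw, rfl, hrel, hr⟩ := h
    have h1 : pr = 0 ∧ co = 0 ∧ wt = List.replicate (2 * l.length) 0 := by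
      have a1 := List.head_eq_of_cons_eq hw.symm
      have a2 := List.tail_eq_of_cons_eq hw.symm
      have a3 := List.head_eq_of_cons_eq a2
      have a4 := List.tail_eq_of_cons_eq a2
      exact ⟨a1, a3, a4⟩
    obtain ⟨rfl, rfl, rfl⟩ := h1
    rw [pgRel_zero hrel, ih hr]

lemma RSpec_zero' (bl : List Bool) : RSpec bl (List.replicate (2 * bl.length) 0) bl := by
  induction bl with
  | nil => exact ⟨rfl, rfl⟩
  | cons fl l ih =>
    have e : 2 * (fl :: l).length = 2 * l.length + 1 + 1 := by simp; omega
    rw [e, List.replicate_succ, List.replicate_succ]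
    exact ⟨0, 0, _, fl, l, rfl, rfl, Or.inl ⟨rfl, rfl, rfl⟩, ih⟩

end PTerm

attribute [local instance] Classical.propDecidable

namespace PTerm

lemma length_flatMap_pair {α : Type*} (l : List α) (f g : α → ℕ) :
    (l.flatMap fun p => [f p, g p]).length = 2 * l.length := by
  induction l with
  | nil => rfl
  | cons p l ih => simp [List.flatMap_cons] at ih ⊢; omega

lemma length_flatMap_pairGd {α : Type*} (l : List α) (f g : α → Gd) :
    (l.flatMap fun p => [f p, g p]).length = 2 * l.length := by
  induction l with
  | nil => rfl
  | cons p l ih => simp [List.flatMap_cons] at ih ⊢; omega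

lemma RSpec_build {α : Type*} (l : List α) (f g : α → ℕ) (bf bf' : α → Bool)
    (h : ∀ p ∈ l, pgRel (bf p) (f p) (g p) (bf' p)) :
    RSpec (l.map bf) (l.flatMap fun p => [f p, g p]) (l.map bf') := by
  induction l with
  | nil => exact ⟨rfl, rfl⟩
  | cons p l ih =>
    rw [List.map_cons, List.map_cons, List.flatMap_cons]
    exact ⟨f p, g p, _, bf' p, _, rfl, rfl, h p (by simp),
      ih fun q hq => h q (by simp [hq])⟩

lemma RSpec_extract {α : Type*} (l : List α) (hnd : l.Nodup) (bf : α → Bool)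
    (f g : α → ℕ) {bl' : List Bool}
    (h : RSpec (l.map bf) (l.flatMap fun p => [f p, g p]) bl') :
    ∃ bf' : α → Bool, bl' = l.map bf' ∧
      (∀ p ∈ l, pgRel (bf p) (f p) (g p) (bf' p)) ∧ ∀ p ∉ l, bf' p = bf p := by
  induction l generalizing bl' with
  | nil =>
    exact ⟨bf, h.2, by simp, fun _ _ => rfl⟩
  | cons p l ih =>
    rw [List.map_cons, List.flatMap_cons] at h
    obtain ⟨pr, co, wt, fl', lt', hw, rfl, hrel, hr⟩ := h
    have hw1 : pr = f p ∧ co = g p ∧ wt = l.flatMap fun q => [f q, g q] := by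
      have a1 := List.head_eq_of_cons_eq hw
      have a2 := List.tail_eq_of_cons_eq hw
      have a3 := List.head_eq_of_cons_eq a2
      have a4 := List.tail_eq_of_cons_eq a2
      exact ⟨a1.symm, a3.symm, a4.symm⟩
    obtain ⟨rfl, rfl, rfl⟩ := hw1
    have hnd' : l.Nodup := (List.nodup_cons.mp hnd).2
    have hpl : p ∉ l := (List.nodup_cons.mp hnd).1
    obtain ⟨bf0, rfl, hpt, hout⟩ := ih hnd' hr
    refine ⟨fun q => if q = p then fl' else bf0 q, ?_, ?_, ?_⟩
    · rw [List.map_cons]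
      congr 1
      · simp
      · apply List.map_congr_left
        intro q hq
        have : q ≠ p := fun he => hpl (he ▸ hq)
        simp [this]
    · intro q hq
      rcases List.mem_cons.mp hq with rfl | hq
      · simpa using hrel
      · have : q ≠ p := fun he => hpl (he ▸ hq)
        simpa [this] using hpt q hq
    · intro q hq
      have h1 : q ≠ p := fun he => hq (he ▸ (List.mem_cons_self : p ∈ p :: l))
      have h2 : q ∉ l := fun hc => hq (List.mem_cons_of_mem _ hc)
      simp [h1, hout q h2]

lemma decide_setOf {α : Type*} (bf : α → Bool) (p : α) :
    decide (p ∈ {q | bf q = true}) = bf p := by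
  simp [Set.mem_setOf_eq]

lemma chiSet_def {k : ℕ} (S : Set (Fin k)) :
    chiSet S = (List.finRange k).map fun i => if i ∈ S then 1 else 0 := by
  rfl

lemma chiSet_empty {k : ℕ} : chiSet (∅ : Set (Fin k)) = List.replicate k 0 := by
  simp [chiSet, List.eq_replicate_iff]

end PTerm

namespace CENet

open PTerm

variable {m n : ℕ} (N : CENet m n)

lemma preS_empty : N.preS ∅ = ∅ := by simp [preS]
lemma postS_empty : N.postS ∅ = ∅ := by simp [postS]
lemma srcS_empty : N.srcS ∅ = ∅ := by simp [srcS]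
lemma tgtS_empty : N.tgtS ∅ = ∅ := by simp [tgtS]

lemma mutInd_empty : N.MutInd ∅ := by intro t ht; simp at ht

/-- The list of places. -/
noncomputable def plistN [Fintype N.P] : List N.P := Finset.univ.toList

lemma plistN_nodup [Fintype N.P] : (plistN N).Nodup := Finset.nodup_toList _

lemma mem_plistN [Fintype N.P] (p : N.P) : p ∈ plistN N := by
  simp [plistN]

lemma plistN_length [Fintype N.P] : (plistN N).length = Fintype.card N.P :=
  Finset.length_toList _

/-- The gadget row for a candidate event `F`. -/
noncomputable def gads [Fintype N.P] (F : Finset N.T) : List Gd :=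
  ((List.finRange m).map fun i => if i ∈ N.srcS ↑F then Gd.con else Gd.sw) ++
  (((List.finRange n).map fun j => if j ∈ N.tgtS ↑F then Gd.add else Gd.sw) ++
    ((plistN N).flatMap fun p =>
      [if p ∈ N.postS ↑F then Gd.add else Gd.sw,
       if p ∈ N.preS ↑F then Gd.add else Gd.sw]))

lemma gads_length [Fintype N.P] (F : Finset N.T) :
    (gads N F).length = m + (n + 2 * Fintype.card N.P) := by
  rw [gads, List.length_append, List.length_append, List.length_map, List.length_map,
    length_flatMap_pairGd, plistN_length, List.length_finRange, List.length_finRange]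

/-- All candidate events. -/
noncomputable def stagesN [Fintype N.P] [Fintype N.T] : List (List Gd) :=
  ((Finset.univ : Finset (Finset N.T)).toList.filter
    fun (F : Finset N.T) => decide (N.MutInd (↑F : Set N.T))).map (gads N)

lemma mem_stagesN [Fintype N.P] [Fintype N.T] {gs : List Gd} :
    gs ∈ stagesN N ↔ ∃ F : Finset N.T, N.MutInd ↑F ∧ gs = gads N F := by
  simp only [stagesN, List.mem_map, List.mem_filter, Finset.mem_toList, Finset.mem_univ,
    true_and, decide_eq_true_eq]
  constructor
  · rintro ⟨F, hF, rfl⟩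
    exact ⟨F, hF, rfl⟩
  · rintro ⟨F, hF, rfl⟩
    exact ⟨F, hF, rfl⟩

lemma stagesN_lengths [Fintype N.P] [Fintype N.T] :
    ∀ gs ∈ stagesN N, gs.length + 1 = 1 + (m + (n + 2 * Fintype.card N.P)) := by
  intro gs hgs
  obtain ⟨F, _, rfl⟩ := (mem_stagesN N).mp hgs
  rw [gads_length]
  omega

/-- The syntactic translation of the net with marking `X`. -/
noncomputable def TXterm [Fintype N.P] [Fintype N.T] (X : Set N.P) : PTerm :=
  .seq (initT m (n + 2 * Fintype.card N.P))
    (.seq (pipe (1 + (m + (n + 2 * Fintype.card N.P))) (stagesN N))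
      (finT m n ((plistN N).map fun p => decide (p ∈ X))))

lemma hs_TXterm [Fintype N.P] [Fintype N.T] (X : Set N.P) :
    HasSort (TXterm N X) m n := by
  have h1 := hs_initT m (n + 2 * Fintype.card N.P)
  have h2 := hs_pipe (1 + (m + (n + 2 * Fintype.card N.P))) (stagesN N) (stagesN_lengths N)
  have h3 := hs_finT m n ((plistN N).map fun p => decide (p ∈ X))
  rw [List.length_map, plistN_length] at h3
  exact .seq h1 (.seq h2 h3)

end CENet

namespace PTerm

lemma chiSet_length {k : ℕ} (S : Set (Fin k)) : (chiSet S).length = k := by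
  simp [chiSet]

lemma chiSet_bin {k : ℕ} (S : Set (Fin k)) : Bin (chiSet S) := by
  intro x hx
  rw [chiSet_def] at hx
  simp only [List.mem_map] at hx
  obtain ⟨i, _, hi⟩ := hx
  by_cases h : i ∈ S
  · rw [if_pos h] at hi; omega
  · rw [if_neg h] at hi; omega

/-- Analysis of a family of place-gadget transitions. -/
lemma pg_analysis {α : Type*} (X Po Pr : Set α) (bf' : α → Bool)
    [∀ p, Decidable (p ∈ Po)] [∀ p, Decidable (p ∈ Pr)]
    (h : ∀ p, pgRel (decide (p ∈ X)) (if p ∈ Po then 1 else 0)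
      (if p ∈ Pr then 1 else 0) (bf' p)) :
    Pr ⊆ X ∧ Po ∩ X = ∅ ∧ {p | bf' p = true} = (X \ Pr) ∪ Po := by
  have key : ∀ p, (p ∈ Po → p ∉ Pr → (p ∉ X ∧ bf' p = true)) ∧
      (p ∉ Po → p ∈ Pr → (p ∈ X ∧ bf' p = false)) ∧
      (¬(p ∈ Po ∧ p ∈ Pr)) ∧
      (p ∉ Po → p ∉ Pr → bf' p = decide (p ∈ X)) := by
    intro p
    have hp := h p
    refine ⟨?_, ?_, ?_, ?_⟩
    · intro hpo hpr
      rw [if_pos hpo, if_neg hpr] at hp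
      rcases hp with ⟨h1, _, _⟩ | ⟨h1, _, _, _⟩ | ⟨_, _, h3, h4⟩
      · omega
      · omega
      · exact ⟨by simpa using h3, h4⟩
    · intro hpo hpr
      rw [if_neg hpo, if_pos hpr] at hp
      rcases hp with ⟨_, h2, _⟩ | ⟨_, _, h3, h4⟩ | ⟨_, h2, _, _⟩
      · omega
      · exact ⟨by simpa using h3, h4⟩
      · omega
    · rintro ⟨hpo, hpr⟩
      rw [if_pos hpo, if_pos hpr] at hp
      rcases hp with ⟨h1, _, _⟩ | ⟨h1, _, _, _⟩ | ⟨_, h2, _, _⟩ <;> omega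
    · intro hpo hpr
      rw [if_neg hpo, if_neg hpr] at hp
      rcases hp with ⟨_, _, h3⟩ | ⟨_, h2, _, _⟩ | ⟨h1, _, _, _⟩
      · exact h3
      · omega
      · omega
  refine ⟨?_, ?_, ?_⟩
  · intro p hpr
    by_cases hpo : p ∈ Po
    · exact absurd ⟨hpo, hpr⟩ (key p).2.2.1
    · exact ((key p).2.1 hpo hpr).1
  · rw [Set.eq_empty_iff_forall_notMem]
    rintro p ⟨hpo, hX⟩
    by_cases hpr : p ∈ Pr
    · exact (key p).2.2.1 ⟨hpo, hpr⟩
    · exact ((key p).1 hpo hpr).1 hX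
  · ext p
    simp only [Set.mem_setOf_eq, Set.mem_union, Set.mem_diff]
    by_cases hpo : p ∈ Po
    · by_cases hpr : p ∈ Pr
      · exact absurd ⟨hpo, hpr⟩ (key p).2.2.1
      · simp [((key p).1 hpo hpr).2, hpo]
    · by_cases hpr : p ∈ Pr
      · simp [((key p).2.1 hpo hpr).2, hpr, hpo]
      · rw [(key p).2.2.2 hpo hpr]
        simp [hpo, hpr]

/-- Construction of place-gadget transitions from a firing. -/
lemma pg_synth {α : Type*} (X Po Pr Y : Set α)
    [∀ p, Decidable (p ∈ Po)] [∀ p, Decidable (p ∈ Pr)]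
    (hpre : Pr ⊆ X) (hpost : Po ∩ X = ∅) (hY : Y = (X \ Pr) ∪ Po) :
    ∀ p, pgRel (decide (p ∈ X)) (if p ∈ Po then 1 else 0)
      (if p ∈ Pr then 1 else 0) (decide (p ∈ Y)) := by
  intro p
  have hPoX : p ∈ Po → p ∉ X := by
    intro hpo hX
    exact Set.eq_empty_iff_forall_notMem.mp hpost p ⟨hpo, hX⟩
  by_cases hpo : p ∈ Po
  · have hpr : p ∉ Pr := fun hpr => hPoX hpo (hpre hpr)
    rw [if_pos hpo, if_neg hpr]
    refine Or.inr (Or.inr ⟨rfl, rfl, ?_, ?_⟩)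
    · simpa using hPoX hpo
    · simp [hY, hpo]
  · by_cases hpr : p ∈ Pr
    · rw [if_neg hpo, if_pos hpr]
      refine Or.inr (Or.inl ⟨rfl, rfl, ?_, ?_⟩)
      · simpa using hpre hpr
      · simp [hY, hpo, hpr]
    · rw [if_neg hpo, if_neg hpr]
      refine Or.inl ⟨rfl, rfl, ?_⟩
      have : p ∈ Y ↔ p ∈ X := by simp [hY, hpo, hpr]
      simp [this]

end PTerm

namespace CENet

open PTerm

variable {m n : ℕ} (N : CENet m n)

lemma TXterm_step_of_lts [Fintype N.P] [Fintype N.T] {X Y : Set N.P} {a b : List ℕ}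
    (h : N.LtsL X a b Y) : Step (TXterm N X) a b (TXterm N Y) := by
  obtain ⟨U, hFire, ha, hb⟩ := h
  obtain ⟨hMI, hpre, hpost, hY⟩ := hFire
  set F : Finset N.T := U.toFinset with hF
  have hUF : (↑F : Set N.T) = U := Set.coe_toFinset U
  set q : ℕ := Fintype.card N.P with hq
  -- the place wires
  set rw : List ℕ := (plistN N).flatMap fun p =>
    [if p ∈ N.postS (↑F : Set N.T) then 1 else 0,
     if p ∈ N.preS (↑F : Set N.T) then 1 else 0] with hrw
  have halen : a.length = m := by rw [ha]; exact chiSet_length _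
  have hblen : b.length = n := by rw [hb]; exact chiSet_length _
  have habin : Bin a := by rw [ha]; exact chiSet_bin _
  have hbbin : Bin b := by rw [hb]; exact chiSet_bin _
  -- the three wire segments
  have hk1 : TSpec 1 ((List.finRange m).map fun i =>
      if i ∈ N.srcS (↑F : Set N.T) then Gd.con else Gd.sw) a (List.replicate m 0) := by
    have h0 := TSpec_consw_in (fun i => i ∈ N.srcS (↑F : Set N.T)) (List.finRange m)
      (s := 1) le_rfl
    rw [List.length_finRange] at h0
    rw [ha, ← hUF, chiSet_def]
    exact h0
  have hk2 : TSpec 1 ((List.finRange n).map fun j =>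
      if j ∈ N.tgtS (↑F : Set N.T) then Gd.add else Gd.sw) (List.replicate n 0) b := by
    have h0 := TSpec_addsw_in (fun j => j ∈ N.tgtS (↑F : Set N.T)) (List.finRange n)
      (s := 1) le_rfl
    rw [List.length_finRange] at h0
    rw [hb, ← hUF, chiSet_def]
    exact h0
  have hk3 : TSpec 1 ((plistN N).flatMap fun p =>
      [if p ∈ N.postS (↑F : Set N.T) then Gd.add else Gd.sw,
       if p ∈ N.preS (↑F : Set N.T) then Gd.add else Gd.sw])
      (List.replicate (2 * q) 0) rw := by
    have h0 := TSpec_pair_in (fun p => p ∈ N.postS (↑F : Set N.T))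
      (fun p => p ∈ N.preS (↑F : Set N.T)) (plistN N) (s := 1) le_rfl
    rw [plistN_length] at h0
    exact h0
  have hts : TSpec 1 (gads N F) (a ++ (List.replicate n 0 ++ List.replicate (2 * q) 0))
      (List.replicate m 0 ++ (b ++ rw)) := by
    rw [gads]
    refine TSpec_append.mpr ⟨a, _, List.replicate m 0, b ++ rw, rfl, rfl, ?_, ?_, hk1, ?_⟩
    · simp [halen]
    · simp
    · exact TSpec_append.mpr ⟨List.replicate n 0, _, b, rw, rfl, rfl, by simp,
        by simp [hblen], hk2, hk3⟩
  -- fire the pipeline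
  have hmem : gads N F ∈ stagesN N := (mem_stagesN N).mpr ⟨F, by rw [hUF]; exact hMI, rfl⟩
  have hp : PSpec (1 + (m + (n + 2 * q))) (stagesN N)
      (1 :: (a ++ (List.replicate n 0 ++ List.replicate (2 * q) 0)))
      (0 :: (List.replicate m 0 ++ (b ++ rw))) :=
    PSpec_fire (stagesN_lengths N) hmem hts
  -- places
  have hrs : RSpec ((plistN N).map fun p => decide (p ∈ X)) rw
      ((plistN N).map fun p => decide (p ∈ Y)) := by
    rw [hrw]
    refine RSpec_build (plistN N) _ _ _ _ ?_
    intro p _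
    refine pg_synth X (N.postS ↑F) (N.preS ↑F) Y ?_ ?_ ?_ p
    · rw [hUF]; exact hpre
    · rw [hUF]; exact hpost
    · rw [hUF]; exact hY
  -- assemble
  refine step_seq.mpr ⟨_, _, 1 :: (a ++ List.replicate (n + 2 * q) 0), rfl, ?_, ?_⟩
  · exact step_initT.mpr ⟨rfl, 1, le_rfl, rfl, halen, habin⟩
  · refine step_seq.mpr ⟨_, _, 0 :: (List.replicate m 0 ++ (b ++ rw)), rfl, ?_, ?_⟩
    · refine step_pipe.mpr ⟨rfl, ?_⟩
      rw [List.replicate_add]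
      exact hp
    · exact step_finT.mpr ⟨0, rw, _, by omega, rfl, hblen, hbbin, hrs, rfl⟩

end CENet

namespace CENet

open PTerm

variable {m n : ℕ} (N : CENet m n)

lemma lts_of_TXterm_step [Fintype N.P] [Fintype N.T] {X : Set N.P} {a b : List ℕ}
    {Q : PTerm} (h : Step (TXterm N X) a b Q) :
    ∃ Y : Set N.P, Q = TXterm N Y ∧ N.LtsL X a b Y := by
  set q : ℕ := Fintype.card N.P with hq
  rw [show TXterm N X = .seq (initT m (n + 2 * q))
    (.seq (pipe (1 + (m + (n + 2 * q))) (stagesN N))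
      (finT m n ((plistN N).map fun p => decide (p ∈ X)))) from rfl] at h
  rw [step_seq] at h
  obtain ⟨Q₁, Q₂₃, γ₁, rfl, h1, h23⟩ := h
  rw [step_seq] at h23
  obtain ⟨Q₂, Q₃, γ₂, rfl, h2, h3⟩ := h23
  rw [step_initT] at h1
  obtain ⟨rfl, z, hz, rfl, halen, habin⟩ := h1
  rw [step_pipe] at h2
  obtain ⟨rfl, hps⟩ := h2
  rw [step_finT] at h3
  obtain ⟨z₂, rw, bl', hz₂, hγ₂, hblen, hbbin, hrs, rfl⟩ := h3
  rcases PSpec_cases hps with ⟨hid, _, _⟩ | ⟨gs, hgs, ws, ws', hin, hout, hts⟩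
  · -- idle step: nothing fires
    rw [hγ₂] at hid
    have e0 : z₂ = z ∧ List.replicate m 0 ++ (b ++ rw) = a ++ List.replicate (n + 2 * q) 0 := by
      exact ⟨List.head_eq_of_cons_eq hid, List.tail_eq_of_cons_eq hid⟩
    have e1 := List.append_inj e0.2 (by simp [halen])
    obtain ⟨ha0, hbrw⟩ := e1
    have hsplit : b = List.replicate n 0 ∧ rw = List.replicate (2 * q) 0 := by
      have e : List.replicate (n + 2 * q) (0:ℕ) =
          List.replicate n 0 ++ List.replicate (2 * q) 0 := List.replicate_add n (2 * q) 0
      rw [e] at hbrw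
      have h5 := List.append_inj hbrw (by simp [hblen])
      exact ⟨h5.1, h5.2⟩
    obtain ⟨hbr, hrwr⟩ := hsplit
    have hbl : bl' = (plistN N).map fun p => decide (p ∈ X) := by
      apply RSpec_zero
      have e3 : (2 * ((plistN N).map fun p => decide (p ∈ X)).length) = 2 * q := by
        simp [plistN_length, hq]
      rw [e3, ← hrwr]
      exact hrs
    refine ⟨X, by rw [hbl]; rfl, ∅, ⟨mutInd_empty N, ?_, ?_, ?_⟩, ?_, ?_⟩
    · rw [preS_empty]; exact Set.empty_subset X
    · rw [postS_empty]; exact Set.empty_inter X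
    · rw [preS_empty, postS_empty]; simp
    · rw [srcS_empty, chiSet_empty, ← ha0.symm]
    · rw [tgtS_empty, chiSet_empty, ← hbr]
  · -- a stage fires
    obtain ⟨F, hMI, rfl⟩ := (mem_stagesN N).mp hgs
    rw [hγ₂] at hout
    have ein : ws = a ++ List.replicate (n + 2 * q) 0 :=
      (List.tail_eq_of_cons_eq hin).symm
    have eout : ws' = List.replicate m 0 ++ (b ++ rw) :=
      (List.tail_eq_of_cons_eq hout).symm
    rw [ein, eout, gads] at hts
    obtain ⟨u₁, u₂, v₁, v₂, hu, hv, hul, hvl, hts1, hts23⟩ := TSpec_append.mp hts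
    rw [List.length_map, List.length_finRange] at hul hvl
    have hu1 : u₁ = a ∧ u₂ = List.replicate (n + 2 * q) 0 := by
      have := List.append_inj hu.symm (by omega)
      exact ⟨this.1, this.2⟩
    have hv1 : v₁ = List.replicate m 0 ∧ v₂ = b ++ rw := by
      have := List.append_inj hv.symm (by simp; omega)
      exact ⟨this.1, this.2⟩
    obtain ⟨eu1, eu2⟩ := hu1
    obtain ⟨ev1, ev2⟩ := hv1
    rw [eu1, ev1] at hts1
    rw [eu2, ev2] at hts23
    obtain ⟨p₁, p₂, q₁, q₂, hp, hqq, hpl, hql, hts2, hts3⟩ := TSpec_append.mp hts23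
    rw [List.length_map, List.length_finRange] at hpl hql
    have hp1 : p₁ = List.replicate n 0 ∧ p₂ = List.replicate (2 * q) 0 := by
      have e : List.replicate (n + 2 * q) (0:ℕ) =
          List.replicate n 0 ++ List.replicate (2 * q) 0 := List.replicate_add n (2 * q) 0
      rw [e] at hp
      have := List.append_inj hp.symm (by simp; omega)
      exact ⟨this.1, this.2⟩
    have hq1 : q₁ = b ∧ q₂ = rw := by
      have := List.append_inj hqq.symm (by omega)
      exact ⟨this.1, this.2⟩
    obtain ⟨ep1, ep2⟩ := hp1
    obtain ⟨eq1, eq2⟩ := hq1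
    rw [ep1, eq1] at hts2
    rw [ep2, eq2] at hts3
    -- decode the three segments
    have hsrc : a = chiSet (N.srcS (↑F : Set N.T)) := by
      rw [chiSet_def]
      apply TSpec_consw_out (fun i => i ∈ N.srcS (↑F : Set N.T)) (List.finRange m)
      rw [List.length_finRange]
      exact hts1
    have htgt : b = chiSet (N.tgtS (↑F : Set N.T)) := by
      rw [chiSet_def]
      apply TSpec_addsw_out (fun j => j ∈ N.tgtS (↑F : Set N.T)) (List.finRange n)
      rw [List.length_finRange]
      exact hts2
    have hrw : rw = (plistN N).flatMap fun p =>
        [if p ∈ N.postS (↑F : Set N.T) then 1 else 0,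
         if p ∈ N.preS (↑F : Set N.T) then 1 else 0] := by
      apply TSpec_pair_out (fun p => p ∈ N.postS (↑F : Set N.T))
        (fun p => p ∈ N.preS (↑F : Set N.T)) (plistN N)
      rw [plistN_length]
      exact hts3
    -- decode the places
    rw [hrw] at hrs
    obtain ⟨bf', rfl, hpt, _⟩ := RSpec_extract (plistN N) (plistN_nodup N) _ _ _ hrs
    have hptall : ∀ p, pgRel (decide (p ∈ X))
        (if p ∈ N.postS (↑F : Set N.T) then 1 else 0)
        (if p ∈ N.preS (↑F : Set N.T) then 1 else 0) (bf' p) :=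
      fun p => hpt p (mem_plistN N p)
    obtain ⟨hpre, hpost, hYeq⟩ := pg_analysis X (N.postS ↑F) (N.preS ↑F) bf' hptall
    refine ⟨{p | bf' p = true}, ?_, (↑F : Set N.T), ⟨hMI, hpre, hpost, hYeq⟩, hsrc, htgt⟩
    have hmap : ((plistN N).map fun p => decide (p ∈ ({p | bf' p = true} : Set N.P)))
        = (plistN N).map bf' :=
      List.map_congr_left fun p _ => decide_setOf bf' p
    show _ = TXterm N {p | bf' p = true}
    rw [hq]
    unfold TXterm
    congr 1
    congr 1
    congr 1
    apply List.map_congr_left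
    intro p _
    by_cases hb : bf' p = true
    · rw [hb]
      exact (@decide_eq_true _ (Classical.propDecidable _) (show p ∈ {p | bf' p = true} from hb)).symm
    · have hf : bf' p = false := by simpa using hb
      rw [hf]
      exact (@decide_eq_false _ (Classical.propDecidable _) (show p ∉ {p | bf' p = true} from hb)).symm

end CENet


/-- Theorem `strongcenetstosyntax`: every finite C/E net
with boundaries `N : m → n` has a family of Petri calculus terms `(T_X)_{X⊆P}`
of sort `(m,n)` whose strong semantics preserves and reflects the labelled
semantics of the net. -/
theorem stmt19 (m n : ℕ) (N : CENet m n) (hV : N.Valid) :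
    ∃ T : Set N.P → PTerm,
      (∀ X : Set N.P, PTerm.HasSort (T X) m n) ∧
      (∀ (X Y : Set N.P) (a b : List ℕ),
         CENet.LtsL N X a b Y → PTerm.Step (T X) a b (T Y)) ∧
      (∀ (X : Set N.P) (a b : List ℕ) (Q : PTerm),
         PTerm.Step (T X) a b Q →
         ∃ Y : Set N.P, Q = T Y ∧ CENet.LtsL N X a b Y) := by
  obtain ⟨hP, hT, -⟩ := hV
  letI : Fintype N.P := Fintype.ofFinite N.P
  letI : Fintype N.T := Fintype.ofFinite N.T
  refine ⟨fun X => CENet.TXterm N X, ?_, ?_, ?_⟩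
  · intro X
    exact CENet.hs_TXterm N X
  · intro X Y a b hl
    exact CENet.TXterm_step_of_lts N hl
  · intro X a b Q hs
    exact CENet.lts_of_TXterm_step N hs
end
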